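/- arXiv:2007.12922 — 9 statements merged into one kernel-verified Lean document; each statement's English description precedes it below -/
import Mathlib

section
/- Suppose g₁ and g₀ are 𝒢-measurable random variables such that 1_{S=0}·E[Y(0) | ℋ] = 1_{S=0}·(A·g₁ + (1−A)·g₀) almost surely, and set λ = g₁ − g₀ (the confounding function). Then 1_{S=0}·(E[Y(0) | ℋ] − E[Y(0) | 𝒢]) = 1_{S=0}·(A − e)·λ almost surely. (Equation (A.1)/(keyadj) of the paper: the discrepancy between treated and untreated conditional means of Y(0) in the observational study equals the confounding function times the centered treatment.) -/
open MeasureTheory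

/-- equation (keyadj)/(A.1): on the observational sample `S = 0`,
the discrepancy between the `ℋ`- and `𝒢`-conditional means of the potential outcome `Y(0)`
equals the confounding function `λ = g₁ − g₀` times the centered treatment `A − e`. -/
theorem confounding_function_keyadj
    {Ω : Type*} {mΩ : MeasurableSpace Ω} {P : Measure Ω} [IsProbabilityMeasure P]
    {mG mH : MeasurableSpace Ω} (hGH : mG ≤ mH) (hHF : mH ≤ mΩ)
    (A S Y0 Y1 : Ω → ℝ)
    (hA : StronglyMeasurable[mH] A) (hA01 : ∀ ω, A ω = 0 ∨ A ω = 1)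
    (hS : StronglyMeasurable[mG] S) (hS01 : ∀ ω, S ω = 0 ∨ S ω = 1)
    (hY0 : MemLp Y0 2 P) (hY1 : MemLp Y1 2 P)
    (e : Ω → ℝ) (he : e = P[A|mG]) (he01 : ∀ᵐ ω ∂P, 0 < e ω ∧ e ω < 1)
    (g1 g0 : Ω → ℝ) (hg1 : StronglyMeasurable[mG] g1) (hg0 : StronglyMeasurable[mG] g0)
    (hg : (fun ω => (1 - S ω) * (P[Y0|mH]) ω) =ᵐ[P]
      (fun ω => (1 - S ω) * (A ω * g1 ω + (1 - A ω) * g0 ω))) :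
    (fun ω => (1 - S ω) * ((P[Y0|mH]) ω - (P[Y0|mG]) ω)) =ᵐ[P]
      (fun ω => (1 - S ω) * (A ω - e ω) * (g1 ω - g0 ω)) := by
  subst he
  set H := P[Y0|mH] with hH
  have hY0i : Integrable Y0 P := hY0.integrable (by norm_num)
  have hHi : Integrable H P := integrable_condExp
  have hAi : Integrable A P := by
    have := (integrable_const (μ := P) (1 : ℝ)).bdd_mul
      ((hA.mono hHF).aestronglyMeasurable) (Filter.Eventually.of_forall (p := fun ω => ‖A ω‖ ≤ 1) fun ω => by rcases hA01 ω with h | h <;> simp [h])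
    simpa using this
  have h1Ai : Integrable (fun ω => 1 - A ω) P := (integrable_const (μ := P) (1 : ℝ)).sub hAi
  have hSmG : StronglyMeasurable[mG] (fun ω => 1 - S ω) := stronglyMeasurable_const.sub hS
  have hSae : AEStronglyMeasurable[mΩ] (fun ω => 1 - S ω) P :=
    ((hSmG.mono hGH).mono hHF).aestronglyMeasurable
  have hAae : AEStronglyMeasurable[mΩ] A P := (hA.mono hHF).aestronglyMeasurable
  have hSb : ∀ ω, ‖1 - S ω‖ ≤ 1 := fun ω => by rcases hS01 ω with h | h <;> simp [h]
  have hAb : ∀ ω, ‖A ω‖ ≤ 1 := fun ω => by rcases hA01 ω with h | h <;> simp [h]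
  set f := fun ω => (1 - S ω) * (A ω * g1 ω + (1 - A ω) * g0 ω) with hfdef
  have hSHint : Integrable (fun ω => (1 - S ω) * H ω) P := hHi.bdd_mul hSae (Filter.Eventually.of_forall hSb)
  have hfint : Integrable f P := hSHint.congr hg
  -- f1 = (1-S) g1 A,  f0 = (1-S) g0 (1-A)
  set f1 := fun ω => (1 - S ω) * g1 ω * A ω with hf1def
  set f0 := fun ω => (1 - S ω) * g0 ω * (1 - A ω) with hf0def
  have hAf : ∀ ω, A ω * f ω = f1 ω := by
    intro ω; rcases hA01 ω with h | h <;> simp [hfdef, hf1def, h] <;> ring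
  have h1Af : ∀ ω, (1 - A ω) * f ω = f0 ω := by
    intro ω; rcases hA01 ω with h | h <;> simp [hfdef, hf0def, h] <;> ring
  have hf1int : Integrable f1 P :=
    (hfint.bdd_mul hAae (Filter.Eventually.of_forall hAb)).congr (Filter.Eventually.of_forall hAf)
  have hf0int : Integrable f0 P := by
    refine (hfint.bdd_mul ?_ (Filter.Eventually.of_forall (p := fun ω => ‖1 - A ω‖ ≤ 2) fun ω => ?_)).congr (Filter.Eventually.of_forall h1Af)
    · exact aestronglyMeasurable_const.sub hAae
    · calc ‖1 - A ω‖ ≤ ‖(1 : ℝ)‖ + ‖A ω‖ := norm_sub_le _ _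
        _ ≤ 2 := by have := hAb ω; simp at this ⊢; linarith
  -- pull-out for f1
  have hcond1 : P[f1|mG] =ᵐ[P] fun ω => (1 - S ω) * g1 ω * (P[A|mG]) ω := by
    have := condExp_mul_of_stronglyMeasurable_left (m := mG) (μ := P) (g := A)
      (hSmG.mul hg1) (by exact hf1int) hAi
    exact this
  -- conditional expectation of 1 - A
  have hcond1A : P[(fun ω => 1 - A ω)|mG] =ᵐ[P] fun ω => 1 - (P[A|mG]) ω := by
    have h := condExp_sub (m := mG) (μ := P) (integrable_const (1 : ℝ)) hAi
    have hc : P[(fun _ : Ω => (1 : ℝ))|mG] = fun _ => (1 : ℝ) := condExp_const (μ := P) (hGH.trans hHF) (1 : ℝ)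
    filter_upwards [h] with ω hω
    rw [hc] at hω; exact hω
  have hcond0 : P[f0|mG] =ᵐ[P] fun ω => (1 - S ω) * g0 ω * (1 - (P[A|mG]) ω) := by
    have h := condExp_mul_of_stronglyMeasurable_left (m := mG) (μ := P) (g := fun ω => 1 - A ω)
      (hSmG.mul hg0) (by exact hf0int) h1Ai
    filter_upwards [h, hcond1A] with ω h1 h2
    simp only [Pi.mul_apply] at h1
    rw [h2] at h1
    exact h1
  have hfsum : f = f1 + f0 := by
    funext ω; simp only [hfdef, hf1def, hf0def, Pi.add_apply]; ring
  have hcondf : P[f|mG] =ᵐ[P]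
      fun ω => (1 - S ω) * g1 ω * (P[A|mG]) ω + (1 - S ω) * g0 ω * (1 - (P[A|mG]) ω) := by
    have h := condExp_add (m := mG) (μ := P) hf1int hf0int
    rw [← hfsum] at h
    filter_upwards [h, hcond1, hcond0] with ω h1 h2 h3
    simp only [Pi.add_apply] at h1
    rw [h1, h2, h3]
  -- other expression for P[f|mG]
  have hcondf2 : P[f|mG] =ᵐ[P] fun ω => (1 - S ω) * (P[Y0|mG]) ω := by
    have h1 : P[f|mG] =ᵐ[P] P[(fun ω => (1 - S ω) * H ω)|mG] := condExp_congr_ae hg.symm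
    have h2 : P[(fun ω => (1 - S ω) * H ω)|mG] =ᵐ[P] fun ω => (1 - S ω) * (P[H|mG]) ω := by
      have := condExp_mul_of_stronglyMeasurable_left (m := mG) (μ := P) (g := H)
        hSmG (by exact hSHint) hHi
      exact this
    have h3 : P[H|mG] =ᵐ[P] P[Y0|mG] := condExp_condExp_of_le hGH hHF
    refine (h1.trans h2).trans ?_
    filter_upwards [h3] with ω hω
    rw [hω]
  have key : (fun ω => (1 - S ω) * (P[Y0|mG]) ω) =ᵐ[P]
      fun ω => (1 - S ω) * g1 ω * (P[A|mG]) ω + (1 - S ω) * g0 ω * (1 - (P[A|mG]) ω) :=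
    hcondf2.symm.trans hcondf
  filter_upwards [hg, key] with ω h1 h2
  have expand : (1 - S ω) * ((P[Y0|mH]) ω - (P[Y0|mG]) ω)
      = (1 - S ω) * (P[Y0|mH]) ω - (1 - S ω) * (P[Y0|mG]) ω := by ring
  rw [expand, h2]
  rw [show (1 - S ω) * (P[Y0|mH]) ω = (1 - S ω) * H ω from rfl, h1]
  ring
end

section
/- Suppose m₁, m₀, d₁, d₀, g₁, g₀ are 𝒢-measurable random variables with E[Y | ℋ] = A·m₁ + (1−A)·m₀, 1_{S=0}·E[Y(1) − Y(0) | ℋ] = 1_{S=0}·(A·d₁ + (1−A)·d₀), and 1_{S=0}·E[Y(0) | ℋ] = 1_{S=0}·(A·g₁ + (1−A)·g₀) almost surely. Let τ be a 𝒢-measurable random variable and assume transportability on the treated observational sample: 1_{S=0}·d₁ = 1_{S=0}·τ almost surely. Set λ = g₁ − g₀. Then 1_{S=0}·(m₁ − m₀) = 1_{S=0}·(τ + λ) almost surely. (Nonparametric identification of the confounding function by coupling the trial-identified treatment effect with the observational contrast, equation (id2).) -/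
open MeasureTheory

/-- If `A =ᵐ 0` on a `mG`-measurable set `B` and the conditional expectation of `A`
given `mG` is a.e. positive, then `B` is null. -/
lemma null_of_ae_zero_on_of_condexp_pos
    {Ω : Type*} {mG mΩ : MeasurableSpace Ω} (hGF : mG ≤ mΩ)
    {P : Measure Ω} [IsProbabilityMeasure P]
    {A e : Ω → ℝ} (hAint : Integrable A P)
    (he : e =ᵐ[P] P[A|mG]) (hepos : ∀ᵐ ω ∂P, 0 < e ω)
    {B : Set Ω} (hB : MeasurableSet[mG] B)
    (hA0 : A =ᵐ[P.restrict B] 0) : P B = 0 := by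
  have hint : ∫ ω in B, (P[A|mG]) ω ∂P = ∫ ω in B, A ω ∂P :=
    setIntegral_condExp hGF hAint hB
  have h0 : ∫ ω in B, e ω ∂P = 0 := by
    rw [integral_congr_ae (ae_restrict_of_ae he), hint, integral_congr_ae hA0]; simp
  have heint : IntegrableOn e B P :=
    ((integrable_condExp).congr he.symm).integrableOn
  have hnn : 0 ≤ᵐ[P.restrict B] e :=
    ae_restrict_of_ae (hepos.mono fun ω h => h.le)
  have hz : e =ᵐ[P.restrict B] 0 :=
    (setIntegral_eq_zero_iff_of_nonneg_ae hnn heint).mp h0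
  have hposB : ∀ᵐ ω ∂P.restrict B, 0 < e ω := ae_restrict_of_ae hepos
  have hfalse : ∀ᵐ ω ∂P.restrict B, False := by
    filter_upwards [hz, hposB] with ω h1 h2
    rw [h1] at h2; exact lt_irrefl 0 h2
  have huniv : P.restrict B Set.univ = 0 := by simpa using ae_iff.mp hfalse
  rwa [Measure.restrict_apply_univ] at huniv

/-- equation (id2): coupling the trial-identified treatment effect `τ`
with the observational contrast identifies the confounding function: on `S = 0`,
`m₁ − m₀ = τ + λ` almost surely, where `λ = g₁ − g₀`. -/
theorem identification_of_confounding_function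
    {Ω : Type*} {mΩ : MeasurableSpace Ω} {P : Measure Ω} [IsProbabilityMeasure P]
    {mG mH : MeasurableSpace Ω} (hGH : mG ≤ mH) (hHF : mH ≤ mΩ)
    (A S Y0 Y1 : Ω → ℝ)
    (hA : StronglyMeasurable[mH] A) (hA01 : ∀ ω, A ω = 0 ∨ A ω = 1)
    (hS : StronglyMeasurable[mG] S) (hS01 : ∀ ω, S ω = 0 ∨ S ω = 1)
    (hY0 : MemLp Y0 2 P) (hY1 : MemLp Y1 2 P)
    (e : Ω → ℝ) (he : e = P[A|mG]) (he01 : ∀ᵐ ω ∂P, 0 < e ω ∧ e ω < 1)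
    -- observed outcome and its conditional mean decomposition
    (Y : Ω → ℝ) (hY : Y = fun ω => A ω * Y1 ω + (1 - A ω) * Y0 ω)
    (m1 m0 d1 d0 g1 g0 : Ω → ℝ)
    (hm1 : StronglyMeasurable[mG] m1) (hm0 : StronglyMeasurable[mG] m0)
    (hd1 : StronglyMeasurable[mG] d1) (hd0 : StronglyMeasurable[mG] d0)
    (hg1 : StronglyMeasurable[mG] g1) (hg0 : StronglyMeasurable[mG] g0)
    (hm : P[Y|mH] =ᵐ[P] (fun ω => A ω * m1 ω + (1 - A ω) * m0 ω))
    (hd : (fun ω => (1 - S ω) * (P[fun ω => Y1 ω - Y0 ω|mH]) ω) =ᵐ[P]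
      (fun ω => (1 - S ω) * (A ω * d1 ω + (1 - A ω) * d0 ω)))
    (hg : (fun ω => (1 - S ω) * (P[Y0|mH]) ω) =ᵐ[P]
      (fun ω => (1 - S ω) * (A ω * g1 ω + (1 - A ω) * g0 ω)))
    -- transportability on the treated observational sample
    (τ : Ω → ℝ) (hτ : StronglyMeasurable[mG] τ)
    (htrans : (fun ω => (1 - S ω) * d1 ω) =ᵐ[P] (fun ω => (1 - S ω) * τ ω))
    -- confounding function
    (lam : Ω → ℝ) (hlam : lam = fun ω => g1 ω - g0 ω) :
    (fun ω => (1 - S ω) * (m1 ω - m0 ω)) =ᵐ[P]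
      (fun ω => (1 - S ω) * (τ ω + lam ω)) := by
  have hGF : mG ≤ mΩ := hGH.trans hHF
  have hAsm : StronglyMeasurable[mΩ] A := hA.mono hHF
  have hAbd : ∀ ω, |A ω| ≤ 1 := by
    intro ω; rcases hA01 ω with h | h <;> rw [h] <;> norm_num
  have hAint : Integrable A P := by
    refine (integrable_const (1 : ℝ)).mono' hAsm.aestronglyMeasurable ?_
    exact Filter.Eventually.of_forall fun ω => (hAbd ω).trans (by norm_num)
  have hY0int : Integrable Y0 P := hY0.integrable one_le_two
  have hY1int : Integrable Y1 P := hY1.integrable one_le_two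
  have hDint : Integrable (fun ω => Y1 ω - Y0 ω) P := hY1int.sub hY0int
  have hADint : Integrable (A * fun ω => Y1 ω - Y0 ω) P :=
    hDint.bdd_mul (c := 1) hAsm.aestronglyMeasurable (Filter.Eventually.of_forall fun ω => by simpa using hAbd ω)
  -- decompose E[Y | H]
  have hYeq : Y = Y0 + A * fun ω => Y1 ω - Y0 ω := by
    funext ω; simp [hY]; ring
  have hdecomp : P[Y|mH] =ᵐ[P] fun ω => (P[Y0|mH]) ω + A ω * (P[fun ω => Y1 ω - Y0 ω|mH]) ω := by
    rw [hYeq]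
    refine (condExp_add hY0int hADint _).trans ?_
    have := condExp_mul_of_stronglyMeasurable_left hA hADint hDint
    filter_upwards [this] with ω h
    simp only [Pi.add_apply]
    rw [h]; rfl
  -- key pointwise identity on S = 0
  have hptw : ∀ᵐ ω ∂P, S ω = 0 →
      A ω * (m1 ω - (g1 ω + d1 ω)) + (1 - A ω) * (m0 ω - g0 ω) = 0 := by
    filter_upwards [hm, hd, hg, hdecomp] with ω e1 e2 e3 e4 hs
    simp only [hs, sub_zero, one_mul] at e2 e3
    rcases hA01 ω with h | h <;> rw [h] at e1 e2 e3 e4 ⊢ <;> nlinarith [e1, e2, e3, e4]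
  -- the two null sets
  set u : Ω → ℝ := fun ω => m1 ω - (g1 ω + d1 ω) with hu
  set v : Ω → ℝ := fun ω => m0 ω - g0 ω with hv
  have humeas : Measurable[mG] u := (hm1.measurable.sub (hg1.measurable.add hd1.measurable))
  have hvmeas : Measurable[mG] v := hm0.measurable.sub hg0.measurable
  have hSmeas : Measurable[mG] S := hS.measurable
  set B1 : Set Ω := {ω | S ω = 0} ∩ {ω | u ω ≠ 0} with hB1
  set B0 : Set Ω := {ω | S ω = 0} ∩ {ω | v ω ≠ 0} with hB0
  have hB1m : MeasurableSet[mG] B1 :=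
    (hSmeas (measurableSet_singleton 0)).inter ((humeas (measurableSet_singleton 0)).compl)
  have hB0m : MeasurableSet[mG] B0 :=
    (hSmeas (measurableSet_singleton 0)).inter ((hvmeas (measurableSet_singleton 0)).compl)
  have hepos : ∀ᵐ ω ∂P, 0 < e ω := he01.mono fun ω h => h.1
  -- on B1, A = 0 a.e.
  have hAB1 : A =ᵐ[P.restrict B1] 0 := by
    filter_upwards [ae_restrict_mem (hGF _ hB1m), ae_restrict_of_ae hptw] with ω hmem h
    obtain ⟨hs, hune⟩ := hmem
    rcases hA01 ω with hA' | hA'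
    · simpa using hA'
    · exfalso; apply hune
      have := h hs; rw [hA'] at this; simpa using this
  have hPB1 : P B1 = 0 :=
    null_of_ae_zero_on_of_condexp_pos hGF hAint (by rw [he]) hepos hB1m hAB1
  -- on B0, 1 - A = 0 a.e.
  have hA'int : Integrable (fun ω => 1 - A ω) P := (integrable_const (1 : ℝ)).sub hAint
  have he' : (fun ω => 1 - e ω) =ᵐ[P] P[fun ω => 1 - A ω|mG] := by
    have h1 : P[fun ω => (1 : ℝ) - A ω|mG] =ᵐ[P] P[(fun _ => (1:ℝ))|mG] - P[A|mG] :=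
      condExp_sub (integrable_const 1) hAint _
    have h2 : P[(fun _ => (1:ℝ))|mG] = fun _ => (1 : ℝ) := condExp_const hGF 1
    filter_upwards [h1] with ω h
    rw [h]; simp [h2, he]
  have he'pos : ∀ᵐ ω ∂P, 0 < 1 - e ω := he01.mono fun ω h => by linarith [h.2]
  have hAB0 : (fun ω => 1 - A ω) =ᵐ[P.restrict B0] 0 := by
    filter_upwards [ae_restrict_mem (hGF _ hB0m), ae_restrict_of_ae hptw] with ω hmem h
    obtain ⟨hs, hvne⟩ := hmem
    rcases hA01 ω with hA' | hA'
    · exfalso; apply hvne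
      have := h hs; rw [hA'] at this; simpa using this
    · simp [hA']
  have hPB0 : P B0 = 0 :=
    null_of_ae_zero_on_of_condexp_pos hGF hA'int he' he'pos hB0m hAB0
  -- conclude
  have hae1 : ∀ᵐ ω ∂P, ω ∉ B1 := (ae_iff.mpr (by simpa using hPB1))
  have hae0 : ∀ᵐ ω ∂P, ω ∉ B0 := (ae_iff.mpr (by simpa using hPB0))
  filter_upwards [hae1, hae0, htrans] with ω h1 h0 ht
  rcases hS01 ω with hs | hs
  · have hu0 : u ω = 0 := by
      by_contra hne; exact h1 ⟨hs, hne⟩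
    have hv0 : v ω = 0 := by
      by_contra hne; exact h0 ⟨hs, hne⟩
    simp only [hs, sub_zero, one_mul] at ht ⊢
    simp only [hu, hv] at hu0 hv0
    rw [hlam]
    dsimp only
    linarith
  · simp [hs]
end

section
/- (Proposition 1, conditional moment restriction.) Assume: (i) trial ignorability, 1_{S=1}·E[Y(a) | ℋ] = 1_{S=1}·E[Y(a) | 𝒢] almost surely for a = 0, 1; (ii) transportability, i.e., τ is 𝒢-measurable with 1_{S=1}·E[Y(1) − Y(0) | 𝒢] = 1_{S=1}·τ and, writing 1_{S=0}·E[Y(1) − Y(0) | ℋ] = 1_{S=0}·(A·d₁ + (1−A)·d₀) with d₁, d₀ 𝒢-measurable, 1_{S=0}·d₁ = 1_{S=0}·τ almost surely; (iii) the confounding function λ = g₁ − g₀, where g₁, g₀ are 𝒢-measurable with 1_{S=0}·E[Y(0) | ℋ] = 1_{S=0}·(A·g₁ + (1−A)·g₀) almost surely. Define H = Y − τ·A − (1−S)·λ·(A − e). Then E[H | ℋ] = E[H | 𝒢] = E[Y(0) | 𝒢] almost surely. -/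
open MeasureTheory

/-- Proposition 1, conditional moment restriction: under trial
ignorability, transportability, and the definition of the confounding function
`λ = g₁ − g₀`, the adjusted outcome `H = Y − τ·A − (1−S)·λ·(A − e)` satisfies
`E[H | ℋ] = E[H | 𝒢] = E[Y(0) | 𝒢]` almost surely. -/
theorem conditional_moment_restriction
    {Ω : Type*} {mΩ : MeasurableSpace Ω} {P : Measure Ω} [IsProbabilityMeasure P]
    {mG mH : MeasurableSpace Ω} (hGH : mG ≤ mH) (hHF : mH ≤ mΩ)
    (A S Y0 Y1 : Ω → ℝ)
    (hA : StronglyMeasurable[mH] A) (hA01 : ∀ ω, A ω = 0 ∨ A ω = 1)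
    (hS : StronglyMeasurable[mG] S) (hS01 : ∀ ω, S ω = 0 ∨ S ω = 1)
    (hY0 : MemLp Y0 2 P) (hY1 : MemLp Y1 2 P)
    (e : Ω → ℝ) (he : e = P[A|mG]) (he01 : ∀ᵐ ω ∂P, 0 < e ω ∧ e ω < 1)
    -- (i) trial ignorability for a = 0, 1
    (hig0 : (fun ω => S ω * (P[Y0|mH]) ω) =ᵐ[P] (fun ω => S ω * (P[Y0|mG]) ω))
    (hig1 : (fun ω => S ω * (P[Y1|mH]) ω) =ᵐ[P] (fun ω => S ω * (P[Y1|mG]) ω))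
    -- (ii) transportability
    (τ : Ω → ℝ) (hτ : StronglyMeasurable[mG] τ)
    (htransS1 : (fun ω => S ω * (P[fun ω => Y1 ω - Y0 ω|mG]) ω) =ᵐ[P]
      (fun ω => S ω * τ ω))
    (d1 d0 : Ω → ℝ) (hd1 : StronglyMeasurable[mG] d1) (hd0 : StronglyMeasurable[mG] d0)
    (hd : (fun ω => (1 - S ω) * (P[fun ω => Y1 ω - Y0 ω|mH]) ω) =ᵐ[P]
      (fun ω => (1 - S ω) * (A ω * d1 ω + (1 - A ω) * d0 ω)))
    (htransS0 : (fun ω => (1 - S ω) * d1 ω) =ᵐ[P] (fun ω => (1 - S ω) * τ ω))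
    -- (iii) confounding function
    (g1 g0 : Ω → ℝ) (hg1 : StronglyMeasurable[mG] g1) (hg0 : StronglyMeasurable[mG] g0)
    (hg : (fun ω => (1 - S ω) * (P[Y0|mH]) ω) =ᵐ[P]
      (fun ω => (1 - S ω) * (A ω * g1 ω + (1 - A ω) * g0 ω)))
    (lam : Ω → ℝ) (hlam : lam = fun ω => g1 ω - g0 ω)
    -- observed outcome and the adjusted outcome H
    (Y : Ω → ℝ) (hY : Y = fun ω => A ω * Y1 ω + (1 - A ω) * Y0 ω)
    (H : Ω → ℝ)
    (hH : H = fun ω => Y ω - τ ω * A ω - (1 - S ω) * lam ω * (A ω - e ω))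
    -- regularity: integrability of the adjustment terms
    (hτA : Integrable (fun ω => τ ω * A ω) P)
    (hlamint : Integrable (fun ω => (1 - S ω) * lam ω * (A ω - e ω)) P) :
    P[H|mH] =ᵐ[P] P[Y0|mG] ∧ P[H|mG] =ᵐ[P] P[Y0|mG] := by
  -- basic boundedness and measurability facts
  have hAbd : ∀ ω, ‖A ω‖ ≤ 1 := fun ω => by rcases hA01 ω with h | h <;> simp [h]
  have hSbd : ∀ ω, ‖(1 : ℝ) - S ω‖ ≤ 1 := fun ω => by rcases hS01 ω with h | h <;> simp [h]
  have he_sm : StronglyMeasurable[mG] e := he ▸ stronglyMeasurable_condExp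
  have hlam_sm : StronglyMeasurable[mG] lam := by rw [hlam]; exact hg1.sub hg0
  have hAae : AEStronglyMeasurable[mΩ] A P := (hA.mono hHF).aestronglyMeasurable
  have hSae : AEStronglyMeasurable[mΩ] (fun ω => 1 - S ω) P :=
    ((stronglyMeasurable_const.sub hS).mono (hGH.trans hHF)).aestronglyMeasurable
  -- integrability facts
  have intY0 : Integrable Y0 P := hY0.integrable one_le_two
  have intY1 : Integrable Y1 P := hY1.integrable one_le_two
  have intD : Integrable (fun ω => Y1 ω - Y0 ω) P := intY1.sub intY0
  have intAD : Integrable (fun ω => A ω * (Y1 ω - Y0 ω)) P := intD.bdd_mul hAae (ae_of_all _ hAbd)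
  have intA : Integrable A P := by
    refine Integrable.mono' (integrable_const (1 : ℝ)) hAae ?_
    filter_upwards with ω using hAbd ω
  have inte : Integrable e P := he ▸ integrable_condExp
  have intY : Integrable Y P := by
    have hYeq : Y = fun ω => Y0 ω + A ω * (Y1 ω - Y0 ω) := by funext ω; rw [hY]; ring
    rw [hYeq]; exact intY0.add intAD
  have hτA_sm : StronglyMeasurable[mH] (fun ω => τ ω * A ω) := (hτ.mono hGH).mul hA
  have hcorr_sm : StronglyMeasurable[mH] (fun ω => (1 - S ω) * lam ω * (A ω - e ω)) :=
    (((stronglyMeasurable_const.sub hS).mul hlam_sm).mono hGH).mul (hA.sub (he_sm.mono hGH))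
  -- Step A : explicit formula for E[H | mH]
  have hmulD : P[fun ω => A ω * (Y1 ω - Y0 ω)|mH]
      =ᵐ[P] fun ω => A ω * (P[fun ω => Y1 ω - Y0 ω|mH]) ω :=
    condExp_mul_of_stronglyMeasurable_left hA intAD intD
  have hEH : P[H|mH] =ᵐ[P] fun ω =>
      (P[Y0|mH]) ω + A ω * (P[fun ω => Y1 ω - Y0 ω|mH]) ω
        - τ ω * A ω - (1 - S ω) * lam ω * (A ω - e ω) := by
    have h3 : P[fun ω => τ ω * A ω|mH] = fun ω => τ ω * A ω :=
      condExp_of_stronglyMeasurable hHF hτA_sm hτA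
    have h4 : P[fun ω => (1 - S ω) * lam ω * (A ω - e ω)|mH]
        = fun ω => (1 - S ω) * lam ω * (A ω - e ω) :=
      condExp_of_stronglyMeasurable hHF hcorr_sm hlamint
    have h1 : P[H|mH] =ᵐ[P]
        P[fun ω => Y ω - τ ω * A ω|mH] - P[fun ω => (1 - S ω) * lam ω * (A ω - e ω)|mH] := by
      rw [hH]; exact condExp_sub (intY.sub hτA) hlamint mH
    have h2 : P[fun ω => Y ω - τ ω * A ω|mH] =ᵐ[P] P[Y|mH] - P[fun ω => τ ω * A ω|mH] :=
      condExp_sub intY hτA mH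
    have h5 : P[Y|mH] =ᵐ[P] P[Y0|mH] + P[fun ω => A ω * (Y1 ω - Y0 ω)|mH] := by
      have hYeq : Y = fun ω => Y0 ω + A ω * (Y1 ω - Y0 ω) := by funext ω; rw [hY]; ring
      rw [hYeq]; exact condExp_add intY0 intAD mH
    rw [h4] at h1; rw [h3] at h2
    filter_upwards [h1, h2, h5, hmulD] with ω e1 e2 e5 em
    simp only [Pi.sub_apply, Pi.add_apply] at e1 e2 e5
    rw [e1, e2, e5, em]
  -- Step C : formula for E[Y0 | mG] on the S = 0 part
  have intSY0H : Integrable (fun ω => (1 - S ω) * (P[Y0|mH]) ω) P :=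
    integrable_condExp.bdd_mul hSae (ae_of_all _ hSbd)
  have intAe : Integrable (fun ω => A ω - e ω) P := intA.sub inte
  have hrest_int : Integrable (fun ω => (1 - S ω) * (g0 ω + lam ω * e ω)) P := by
    have hsplit : (fun ω => (1 - S ω) * (g0 ω + lam ω * e ω))
        = fun ω => (1 - S ω) * (A ω * g1 ω + (1 - A ω) * g0 ω)
          - (1 - S ω) * lam ω * (A ω - e ω) := by
      funext ω; rw [hlam]; ring
    rw [hsplit]; exact (intSY0H.congr hg).sub hlamint
  have hrest_sm : StronglyMeasurable[mG] (fun ω => (1 - S ω) * (g0 ω + lam ω * e ω)) :=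
    (stronglyMeasurable_const.sub hS).mul (hg0.add (hlam_sm.mul he_sm))
  have hAeG : P[fun ω => A ω - e ω|mG] =ᵐ[P] (fun _ => (0 : ℝ)) := by
    have hsub : P[fun ω => A ω - e ω|mG] =ᵐ[P] P[A|mG] - P[e|mG] := condExp_sub intA inte mG
    have hee : P[e|mG] = e := condExp_of_stronglyMeasurable (hGH.trans hHF) he_sm inte
    filter_upwards [hsub] with ω hω
    rw [hω]; simp [hee, ← he]
  have hcorrG : P[fun ω => (1 - S ω) * lam ω * (A ω - e ω)|mG] =ᵐ[P] (fun _ => (0 : ℝ)) := by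
    have h1 : P[fun ω => (1 - S ω) * lam ω * (A ω - e ω)|mG]
        =ᵐ[P] fun ω => (1 - S ω) * lam ω * (P[fun ω => A ω - e ω|mG]) ω :=
      condExp_mul_of_stronglyMeasurable_left ((stronglyMeasurable_const.sub hS).mul hlam_sm)
        hlamint intAe
    filter_upwards [h1, hAeG] with ω h1 h2
    rw [h1, h2, mul_zero]
  have hY0G_S0 : (fun ω => (1 - S ω) * (P[Y0|mG]) ω)
      =ᵐ[P] fun ω => (1 - S ω) * (g0 ω + lam ω * e ω) := by
    have hTower : P[(P[Y0|mH])|mG] =ᵐ[P] P[Y0|mG] := condExp_condExp_of_le hGH hHF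
    have hpull : P[fun ω => (1 - S ω) * (P[Y0|mH]) ω|mG]
        =ᵐ[P] fun ω => (1 - S ω) * (P[(P[Y0|mH])|mG]) ω :=
      condExp_mul_of_stronglyMeasurable_left (stronglyMeasurable_const.sub hS) intSY0H
        integrable_condExp
    have hsplit : (fun ω => (1 - S ω) * (A ω * g1 ω + (1 - A ω) * g0 ω))
        = fun ω => (1 - S ω) * lam ω * (A ω - e ω) + (1 - S ω) * (g0 ω + lam ω * e ω) := by
      funext ω; rw [hlam]; ring
    have hcongr : P[fun ω => (1 - S ω) * (P[Y0|mH]) ω|mG]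
        =ᵐ[P] P[fun ω => (1 - S ω) * lam ω * (A ω - e ω)
          + (1 - S ω) * (g0 ω + lam ω * e ω)|mG] := by
      refine condExp_congr_ae (hg.trans ?_)
      rw [hsplit]
    have hadd : P[fun ω => (1 - S ω) * lam ω * (A ω - e ω)
          + (1 - S ω) * (g0 ω + lam ω * e ω)|mG]
        =ᵐ[P] P[fun ω => (1 - S ω) * lam ω * (A ω - e ω)|mG]
          + P[fun ω => (1 - S ω) * (g0 ω + lam ω * e ω)|mG] :=
      condExp_add hlamint hrest_int mG
    have hrestc : P[fun ω => (1 - S ω) * (g0 ω + lam ω * e ω)|mG]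
        = fun ω => (1 - S ω) * (g0 ω + lam ω * e ω) :=
      condExp_of_stronglyMeasurable (hGH.trans hHF) hrest_sm hrest_int
    rw [hrestc] at hadd
    filter_upwards [hTower, hpull, hcongr, hadd, hcorrG] with ω h1 h2 h3 h4 h5
    simp only [Pi.add_apply] at h4
    rw [← h1, ← h2, h3, h4, h5, zero_add]
  -- main identity: E[H|mH] = E[Y0|mG]
  have hDsubH : P[fun ω => Y1 ω - Y0 ω|mH] =ᵐ[P] P[Y1|mH] - P[Y0|mH] :=
    condExp_sub intY1 intY0 mH
  have hDsubG : P[fun ω => Y1 ω - Y0 ω|mG] =ᵐ[P] P[Y1|mG] - P[Y0|mG] :=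
    condExp_sub intY1 intY0 mG
  have hmain : P[H|mH] =ᵐ[P] P[Y0|mG] := by
    filter_upwards [hEH, hig0, hig1, htransS1, hd, htransS0, hg, hY0G_S0, hDsubH, hDsubG]
      with ω h1 h2 h3 h4 h5 h6 h7 h8 h9 h10
    simp only [Pi.sub_apply] at h9 h10
    rw [h1]
    rcases hS01 ω with hs | hs
    · -- S ω = 0
      simp only [hs, sub_zero, one_mul] at h5 h6 h7 h8
      rw [h5, h6, h7, h8, hs, hlam]
      rcases hA01 ω with ha | ha <;> rw [ha] <;> ring
    · -- S ω = 1
      simp only [hs, one_mul] at h2 h3 h4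
      rw [h9, h2, h3] at h5 ⊢
      rw [← h10, h4, hs]
      ring
  refine ⟨hmain, ?_⟩
  have ht : P[(P[H|mH])|mG] =ᵐ[P] P[H|mG] := condExp_condExp_of_le hGH hHF
  have hc : P[(P[H|mH])|mG] =ᵐ[P] P[(P[Y0|mG])|mG] := condExp_congr_ae hmain
  have hid : P[(P[Y0|mG])|mG] = P[Y0|mG] :=
    condExp_of_stronglyMeasurable (hGH.trans hHF) stronglyMeasurable_condExp
      integrable_condExp
  exact ht.symm.trans (hc.trans (by rw [hid]))
end

section
/- (Core of Theorem 3, efficiency gain by data integration.) Let (Ω, ℱ, P) be a probability space, w₀, w₁ : Ω → [0,∞) measurable weights, and u : Ω → ℝ^{p₁}, v : Ω → ℝ^{p₂} measurable with ∫ (w₀ + w₁)·(‖u‖² + ‖v‖²) dP < ∞. Define the matrices Γ_rct = ∫ w₁·u·uᵀ dP, Γ_rwd = ∫ w₀·u·uᵀ dP, Γ₁₂ = ∫ w₀·u·vᵀ dP, Γ₂ = ∫ w₀·v·vᵀ dP, and assume Γ_rct and Γ₂ are positive definite. Then: (a) Γ_rwd − Γ₁₂·Γ₂⁻¹·Γ₁₂ᵀ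 is positive semidefinite; (b) Γ_rwd − Γ₁₂·Γ₂⁻¹·Γ₁₂ᵀ = 0 if and only if there exists a matrix M ∈ ℝ^{p₁×p₂} with u = M·v almost everywhere with respect to the measure w₀·dP; (c) consequently, in the Loewner order, (Γ_rct + Γ_rwd − Γ₁₂·Γ₂⁻¹·Γ₁₂ᵀ)⁻¹ ≼ Γ_rct⁻¹, with equality exactly under the condition in (b). -/
open MeasureTheory Matrix

lemma coord_abs_le_norm {n : ℕ} (x : EuclideanSpace ℝ (Fin n)) (i : Fin n) : |x i| ≤ ‖x‖ := by
  rw [EuclideanSpace.norm_eq, ← Real.sqrt_sq_eq_abs]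
  apply Real.sqrt_le_sqrt
  have : |x i| ^ 2 ≤ ∑ j, ‖x j‖ ^ 2 := by
    have := Finset.single_le_sum (f := fun j => ‖x j‖ ^ 2)
      (fun j _ => by positivity) (Finset.mem_univ i)
    simpa [Real.norm_eq_abs] using this
  simpa [sq_abs] using this

lemma bilin_pt {Ω : Type*} {n m : ℕ} (w : Ω → ℝ) (f : Ω → Fin n → ℝ) (g : Ω → Fin m → ℝ)
    (x : Fin n → ℝ) (c : Fin m → ℝ) (ω : Ω) :
    w ω * ((∑ i, x i * f ω i) * (∑ j, c j * g ω j))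
      = ∑ i, ∑ j, x i * c j * (w ω * (f ω i * g ω j)) := by
  rw [Finset.sum_mul_sum, Finset.mul_sum]
  refine Finset.sum_congr rfl fun i _ => ?_
  rw [Finset.mul_sum]
  exact Finset.sum_congr rfl fun j _ => by ring

lemma bilin_integrable {Ω : Type*} [MeasurableSpace Ω] {P : Measure Ω} {n m : ℕ}
    (w : Ω → ℝ) (f : Ω → Fin n → ℝ) (g : Ω → Fin m → ℝ)
    (hI : ∀ i j, Integrable (fun ω => w ω * (f ω i * g ω j)) P)
    (x : Fin n → ℝ) (c : Fin m → ℝ) :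
    Integrable (fun ω => w ω * ((∑ i, x i * f ω i) * (∑ j, c j * g ω j))) P := by
  have : (fun ω => w ω * ((∑ i, x i * f ω i) * (∑ j, c j * g ω j)))
      = fun ω => ∑ i, ∑ j, x i * c j * (w ω * (f ω i * g ω j)) := by
    funext ω; exact bilin_pt w f g x c ω
  rw [this]
  exact integrable_finset_sum _ fun i _ =>
    integrable_finset_sum _ fun j _ => (hI i j).const_mul _

lemma bilin_expand {Ω : Type*} [MeasurableSpace Ω] {P : Measure Ω} {n m : ℕ}
    (w : Ω → ℝ) (f : Ω → Fin n → ℝ) (g : Ω → Fin m → ℝ)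
    (hI : ∀ i j, Integrable (fun ω => w ω * (f ω i * g ω j)) P)
    (x : Fin n → ℝ) (c : Fin m → ℝ) :
    ∫ ω, w ω * ((∑ i, x i * f ω i) * (∑ j, c j * g ω j)) ∂P
      = ∑ i, ∑ j, x i * c j * ∫ ω, w ω * (f ω i * g ω j) ∂P := by
  simp_rw [bilin_pt w f g x c]
  rw [integral_finset_sum _ fun i _ => integrable_finset_sum _ fun j _ => (hI i j).const_mul _]
  refine Finset.sum_congr rfl fun i _ => ?_
  rw [integral_finset_sum _ fun j _ => (hI i j).const_mul _]
  exact Finset.sum_congr rfl fun j _ => MeasureTheory.integral_const_mul _ _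

lemma quad_expand {Ω : Type*} [MeasurableSpace Ω] {P : Measure Ω} {n m : ℕ}
    (w : Ω → ℝ) (f : Ω → Fin n → ℝ) (g : Ω → Fin m → ℝ)
    (hff : ∀ i j, Integrable (fun ω => w ω * (f ω i * f ω j)) P)
    (hfg : ∀ i j, Integrable (fun ω => w ω * (f ω i * g ω j)) P)
    (hgg : ∀ i j, Integrable (fun ω => w ω * (g ω i * g ω j)) P)
    (x : Fin n → ℝ) (c : Fin m → ℝ) :
    ∫ ω, w ω * (∑ i, x i * f ω i - ∑ j, c j * g ω j) ^ 2 ∂P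
      = (∑ i, ∑ j, x i * x j * ∫ ω, w ω * (f ω i * f ω j) ∂P)
        - 2 * (∑ i, ∑ j, x i * c j * ∫ ω, w ω * (f ω i * g ω j) ∂P)
        + ∑ i, ∑ j, c i * c j * ∫ ω, w ω * (g ω i * g ω j) ∂P := by
  have hgf : ∀ i j, Integrable (fun ω => w ω * (g ω i * f ω j)) P := by
    intro i j
    have := hfg j i
    simpa [mul_comm] using this
  have Iaa := bilin_integrable w f f hff x x
  have Iab := bilin_integrable w f g hfg x c
  have Iba := bilin_integrable w g f hgf c x
  have Ibb := bilin_integrable w g g hgg c c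
  have hpt : (fun ω => w ω * (∑ i, x i * f ω i - ∑ j, c j * g ω j) ^ 2)
      = fun ω => (w ω * ((∑ i, x i * f ω i) * (∑ j, x j * f ω j))
          - w ω * ((∑ i, x i * f ω i) * (∑ j, c j * g ω j)))
        - (w ω * ((∑ j, c j * g ω j) * (∑ i, x i * f ω i))
          - w ω * ((∑ i, c i * g ω i) * (∑ j, c j * g ω j))) := by
    funext ω; ring
  have E1 : ∫ ω, ((w ω * ((∑ i, x i * f ω i) * (∑ j, x j * f ω j))
          - w ω * ((∑ i, x i * f ω i) * (∑ j, c j * g ω j)))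
        - (w ω * ((∑ j, c j * g ω j) * (∑ i, x i * f ω i))
          - w ω * ((∑ i, c i * g ω i) * (∑ j, c j * g ω j)))) ∂P
      = (∫ ω, (w ω * ((∑ i, x i * f ω i) * (∑ j, x j * f ω j))
          - w ω * ((∑ i, x i * f ω i) * (∑ j, c j * g ω j))) ∂P)
        - ∫ ω, (w ω * ((∑ j, c j * g ω j) * (∑ i, x i * f ω i))
          - w ω * ((∑ i, c i * g ω i) * (∑ j, c j * g ω j))) ∂P :=
    integral_sub (Iaa.sub Iab) (Iba.sub Ibb)
  have E2 : ∫ ω, (w ω * ((∑ i, x i * f ω i) * (∑ j, x j * f ω j))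
          - w ω * ((∑ i, x i * f ω i) * (∑ j, c j * g ω j))) ∂P
      = (∫ ω, w ω * ((∑ i, x i * f ω i) * (∑ j, x j * f ω j)) ∂P)
        - ∫ ω, w ω * ((∑ i, x i * f ω i) * (∑ j, c j * g ω j)) ∂P :=
    integral_sub Iaa Iab
  have E3 : ∫ ω, (w ω * ((∑ j, c j * g ω j) * (∑ i, x i * f ω i))
          - w ω * ((∑ i, c i * g ω i) * (∑ j, c j * g ω j))) ∂P
      = (∫ ω, w ω * ((∑ i, c i * g ω i) * (∑ j, x j * f ω j)) ∂P)
        - ∫ ω, w ω * ((∑ i, c i * g ω i) * (∑ j, c j * g ω j)) ∂P :=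
    integral_sub Iba Ibb
  rw [hpt, E1, E2, E3, bilin_expand w f f hff x x, bilin_expand w f g hfg x c,
    bilin_expand w g f hgf c x, bilin_expand w g g hgg c c]
  have : (∑ i, ∑ j, c i * x j * ∫ ω, w ω * (g ω i * f ω j) ∂P)
      = ∑ i, ∑ j, x i * c j * ∫ ω, w ω * (f ω i * g ω j) ∂P := by
    rw [Finset.sum_comm]
    refine Finset.sum_congr rfl fun i _ => Finset.sum_congr rfl fun j _ => ?_
    have : (fun ω => w ω * (g ω j * f ω i)) = fun ω => w ω * (f ω i * g ω j) := by
      funext ω; ring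
    rw [this]; ring
  rw [this]; ring

lemma quad_integrable {Ω : Type*} [MeasurableSpace Ω] {P : Measure Ω} {n m : ℕ}
    (w : Ω → ℝ) (f : Ω → Fin n → ℝ) (g : Ω → Fin m → ℝ)
    (hff : ∀ i j, Integrable (fun ω => w ω * (f ω i * f ω j)) P)
    (hfg : ∀ i j, Integrable (fun ω => w ω * (f ω i * g ω j)) P)
    (hgg : ∀ i j, Integrable (fun ω => w ω * (g ω i * g ω j)) P)
    (x : Fin n → ℝ) (c : Fin m → ℝ) :
    Integrable (fun ω => w ω * (∑ i, x i * f ω i - ∑ j, c j * g ω j) ^ 2) P := by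
  have hgf : ∀ i j, Integrable (fun ω => w ω * (g ω i * f ω j)) P := by
    intro i j; simpa [mul_comm] using hfg j i
  have hpt : (fun ω => w ω * (∑ i, x i * f ω i - ∑ j, c j * g ω j) ^ 2)
      = fun ω => (w ω * ((∑ i, x i * f ω i) * (∑ j, x j * f ω j))
          - w ω * ((∑ i, x i * f ω i) * (∑ j, c j * g ω j)))
        - (w ω * ((∑ i, c i * g ω i) * (∑ j, x j * f ω j))
          - w ω * ((∑ i, c i * g ω i) * (∑ j, c j * g ω j))) := by
    funext ω; ring
  rw [hpt]
  exact ((bilin_integrable w f f hff x x).sub (bilin_integrable w f g hfg x c)).sub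
    ((bilin_integrable w g f hgf c x).sub (bilin_integrable w g g hgg c c))

lemma dot_bilin {n m : ℕ} (A : Matrix (Fin n) (Fin m) ℝ) (x : Fin n → ℝ) (c : Fin m → ℝ) :
    ∑ i, ∑ j, x i * c j * A i j = x ⬝ᵥ A.mulVec c := by
  simp only [dotProduct, Matrix.mulVec, Finset.mul_sum]
  exact Finset.sum_congr rfl fun i _ => Finset.sum_congr rfl fun j _ => by ring

lemma dot_shift {n m : ℕ} (N : Matrix (Fin m) (Fin n) ℝ) (x : Fin n → ℝ) (z : Fin m → ℝ) :
    (N.mulVec x) ⬝ᵥ z = x ⬝ᵥ (N.transpose.mulVec z) := by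
  simp only [dotProduct, Matrix.mulVec, Matrix.transpose_apply, Finset.sum_mul,
    Finset.mul_sum]
  rw [Finset.sum_comm]
  exact Finset.sum_congr rfl fun i _ => Finset.sum_congr rfl fun j _ => by ring

lemma integrable_w_prod {Ω : Type*} [MeasurableSpace Ω] {P : Measure Ω}
    (w₀ w₁ : Ω → ℝ) (hw₀ : Measurable w₀) (hw₀0 : ∀ ω, 0 ≤ w₀ ω) (hw₁0 : ∀ ω, 0 ≤ w₁ ω)
    (N : Ω → ℝ)
    (hint : Integrable (fun ω => (w₀ ω + w₁ ω) * N ω) P)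
    (a b : Ω → ℝ) (ha : Measurable a) (hb : Measurable b)
    (hab : ∀ ω, |a ω| * |b ω| ≤ N ω) :
    Integrable (fun ω => w₀ ω * (a ω * b ω)) P := by
  refine hint.mono' ((hw₀.mul (ha.mul hb)).aestronglyMeasurable)
    (Filter.Eventually.of_forall fun ω => ?_)
  have h0 : (0:ℝ) ≤ N ω := le_trans (by positivity) (hab ω)
  calc ‖w₀ ω * (a ω * b ω)‖ = w₀ ω * (|a ω| * |b ω|) := by
        rw [norm_mul, Real.norm_eq_abs, Real.norm_eq_abs, abs_of_nonneg (hw₀0 ω), abs_mul]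
    _ ≤ (w₀ ω + w₁ ω) * N ω := by
        apply mul_le_mul (by linarith [hw₁0 ω]) (hab ω) (by positivity) (by linarith [hw₀0 ω, hw₁0 ω])

/-- core of Theorem 3, efficiency gain by data integration:
(a) `Γ_rwd − Γ₁₂ Γ₂⁻¹ Γ₁₂ᵀ` is positive semidefinite; (b) it vanishes iff `u = M·v`
a.e. w.r.t. the weighted measure `w₀·dP` for some matrix `M`; (c) in the Loewner order,
`(Γ_rct + Γ_rwd − Γ₁₂ Γ₂⁻¹ Γ₁₂ᵀ)⁻¹ ≼ Γ_rct⁻¹`, with equality exactly under (b). -/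
theorem efficiency_gain_matrix_inequality
    {Ω : Type*} [MeasurableSpace Ω] (P : Measure Ω) [IsProbabilityMeasure P]
    {p₁ p₂ : ℕ}
    (w₀ w₁ : Ω → ℝ) (hw₀ : Measurable w₀) (hw₁ : Measurable w₁)
    (hw₀0 : ∀ ω, 0 ≤ w₀ ω) (hw₁0 : ∀ ω, 0 ≤ w₁ ω)
    (u : Ω → EuclideanSpace ℝ (Fin p₁)) (v : Ω → EuclideanSpace ℝ (Fin p₂))
    (hu : Measurable u) (hv : Measurable v)
    (hint : Integrable (fun ω => (w₀ ω + w₁ ω) * (‖u ω‖ ^ 2 + ‖v ω‖ ^ 2)) P)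
    (Γrct Γrwd : Matrix (Fin p₁) (Fin p₁) ℝ) (Γ₁₂ : Matrix (Fin p₁) (Fin p₂) ℝ)
    (Γ₂ : Matrix (Fin p₂) (Fin p₂) ℝ)
    (hΓrct : Γrct = Matrix.of fun i j => ∫ ω, w₁ ω * (u ω i * u ω j) ∂P)
    (hΓrwd : Γrwd = Matrix.of fun i j => ∫ ω, w₀ ω * (u ω i * u ω j) ∂P)
    (hΓ₁₂ : Γ₁₂ = Matrix.of fun i j => ∫ ω, w₀ ω * (u ω i * v ω j) ∂P)
    (hΓ₂ : Γ₂ = Matrix.of fun i j => ∫ ω, w₀ ω * (v ω i * v ω j) ∂P)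
    (hrctPD : Γrct.PosDef) (hΓ₂PD : Γ₂.PosDef) :
    (Γrwd - Γ₁₂ * Γ₂⁻¹ * Γ₁₂.transpose).PosSemidef ∧
    (Γrwd - Γ₁₂ * Γ₂⁻¹ * Γ₁₂.transpose = 0 ↔
      ∃ M : Matrix (Fin p₁) (Fin p₂) ℝ,
        ∀ᵐ ω ∂(P.withDensity fun ω => ENNReal.ofReal (w₀ ω)),
          ∀ i, u ω i = M.mulVec (fun j => v ω j) i) ∧
    ((Γrct⁻¹ - (Γrct + Γrwd - Γ₁₂ * Γ₂⁻¹ * Γ₁₂.transpose)⁻¹).PosSemidef ∧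
      ((Γrct + Γrwd - Γ₁₂ * Γ₂⁻¹ * Γ₁₂.transpose)⁻¹ = Γrct⁻¹ ↔
        ∃ M : Matrix (Fin p₁) (Fin p₂) ℝ,
          ∀ᵐ ω ∂(P.withDensity fun ω => ENNReal.ofReal (w₀ ω)),
            ∀ i, u ω i = M.mulVec (fun j => v ω j) i)) := by
  classical
  have hui : ∀ i, Measurable fun ω => u ω i := fun i => ((EuclideanSpace.proj i : EuclideanSpace ℝ (Fin p₁) →L[ℝ] ℝ).continuous.measurable.comp hu :)
  have hvi : ∀ j, Measurable fun ω => v ω j := fun j => ((EuclideanSpace.proj j : EuclideanSpace ℝ (Fin p₂) →L[ℝ] ℝ).continuous.measurable.comp hv :)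
  -- integrability of entry integrands
  have Iuu : ∀ i j, Integrable (fun ω => w₀ ω * (u ω i * u ω j)) P := fun i j => by
    refine integrable_w_prod w₀ w₁ hw₀ hw₀0 hw₁0 _ hint _ _ (hui i) (hui j) fun ω => ?_
    have h1 := coord_abs_le_norm (u ω) i
    have h2 := coord_abs_le_norm (u ω) j
    nlinarith [abs_nonneg (u ω i), abs_nonneg (u ω j), norm_nonneg (u ω), sq_nonneg ‖v ω‖]
  have Iuv : ∀ i j, Integrable (fun ω => w₀ ω * (u ω i * v ω j)) P := fun i j => by
    refine integrable_w_prod w₀ w₁ hw₀ hw₀0 hw₁0 _ hint _ _ (hui i) (hvi j) fun ω => ?_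
    have h1 := coord_abs_le_norm (u ω) i
    have h2 := coord_abs_le_norm (v ω) j
    nlinarith [abs_nonneg (u ω i), abs_nonneg (v ω j), norm_nonneg (u ω), norm_nonneg (v ω),
      sq_nonneg (‖u ω‖ - ‖v ω‖)]
  have Ivv : ∀ i j, Integrable (fun ω => w₀ ω * (v ω i * v ω j)) P := fun i j => by
    refine integrable_w_prod w₀ w₁ hw₀ hw₀0 hw₁0 _ hint _ _ (hvi i) (hvi j) fun ω => ?_
    have h1 := coord_abs_le_norm (v ω) i
    have h2 := coord_abs_le_norm (v ω) j
    nlinarith [abs_nonneg (v ω i), abs_nonneg (v ω j), norm_nonneg (v ω), sq_nonneg ‖u ω‖]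
  -- basic matrix facts
  have hΓ₂symm : Γ₂ᵀ = Γ₂ := by
    rw [hΓ₂]; ext i j
    simp only [Matrix.transpose_apply, Matrix.of_apply]
    congr 1; funext ω; ring
  have hΓrwdsymm : Γrwdᵀ = Γrwd := by
    rw [hΓrwd]; ext i j
    simp only [Matrix.transpose_apply, Matrix.of_apply]
    congr 1; funext ω; ring
  have hdet₂ : IsUnit Γ₂.det := hΓ₂PD.det_pos.ne'.isUnit
  have h₂inv : Γ₂ * Γ₂⁻¹ = 1 := Matrix.mul_nonsing_inv _ hdet₂
  have h₂inv' : Γ₂⁻¹ * Γ₂ = 1 := Matrix.nonsing_inv_mul _ hdet₂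
  have hinvsymm : (Γ₂⁻¹)ᵀ = Γ₂⁻¹ := by rw [Matrix.transpose_nonsing_inv, hΓ₂symm]
  have hXsymm : (Γ₁₂ * Γ₂⁻¹ * Γ₁₂ᵀ)ᵀ = Γ₁₂ * Γ₂⁻¹ * Γ₁₂ᵀ := by
    rw [Matrix.transpose_mul, Matrix.transpose_mul, Matrix.transpose_transpose, hinvsymm,
      Matrix.mul_assoc]
  have hSsymmT : (Γrwd - Γ₁₂ * Γ₂⁻¹ * Γ₁₂ᵀ)ᵀ = Γrwd - Γ₁₂ * Γ₂⁻¹ * Γ₁₂ᵀ := by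
    rw [Matrix.transpose_sub, hΓrwdsymm, hXsymm]
  have hSherm : (Γrwd - Γ₁₂ * Γ₂⁻¹ * Γ₁₂ᵀ).IsHermitian := by
    show _ᴴ = _
    rw [Matrix.conjTranspose_eq_transpose_of_trivial, hSsymmT]
  -- quadratic form identity
  have qform : ∀ x : Fin p₁ → ℝ,
      ∫ ω, w₀ ω * (∑ i, x i * u ω i - ∑ j, (Γ₂⁻¹ * Γ₁₂ᵀ).mulVec x j * v ω j) ^ 2 ∂P
        = x ⬝ᵥ (Γrwd - Γ₁₂ * Γ₂⁻¹ * Γ₁₂ᵀ).mulVec x := by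
    intro x
    rw [quad_expand w₀ (fun ω i => u ω i) (fun ω j => v ω j) Iuu Iuv Ivv x
      ((Γ₂⁻¹ * Γ₁₂ᵀ).mulVec x)]
    have h1 : (∑ i, ∑ j, x i * x j * ∫ ω, w₀ ω * (u ω i * u ω j) ∂P)
        = x ⬝ᵥ Γrwd.mulVec x := by
      have := dot_bilin Γrwd x x
      rw [← this, hΓrwd]
      simp only [Matrix.of_apply]
    have h2 : (∑ i, ∑ j, x i * (Γ₂⁻¹ * Γ₁₂ᵀ).mulVec x j * ∫ ω, w₀ ω * (u ω i * v ω j) ∂P)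
        = x ⬝ᵥ (Γ₁₂ * Γ₂⁻¹ * Γ₁₂ᵀ).mulVec x := by
      have e := dot_bilin Γ₁₂ x ((Γ₂⁻¹ * Γ₁₂ᵀ).mulVec x)
      rw [Matrix.mulVec_mulVec, ← Matrix.mul_assoc] at e
      rw [← e, hΓ₁₂]
      simp only [Matrix.of_apply]
    have h3 : (∑ i, ∑ j, (Γ₂⁻¹ * Γ₁₂ᵀ).mulVec x i * (Γ₂⁻¹ * Γ₁₂ᵀ).mulVec x j
          * ∫ ω, w₀ ω * (v ω i * v ω j) ∂P)
        = x ⬝ᵥ (Γ₁₂ * Γ₂⁻¹ * Γ₁₂ᵀ).mulVec x := by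
      have e := dot_bilin Γ₂ ((Γ₂⁻¹ * Γ₁₂ᵀ).mulVec x) ((Γ₂⁻¹ * Γ₁₂ᵀ).mulVec x)
      rw [dot_shift (Γ₂⁻¹ * Γ₁₂ᵀ) x, Matrix.mulVec_mulVec, Matrix.mulVec_mulVec] at e
      have hmat : (Γ₂⁻¹ * Γ₁₂ᵀ)ᵀ * Γ₂ * (Γ₂⁻¹ * Γ₁₂ᵀ) = Γ₁₂ * Γ₂⁻¹ * Γ₁₂ᵀ := by
        rw [Matrix.transpose_mul, Matrix.transpose_transpose, hinvsymm,
          Matrix.mul_assoc Γ₁₂ Γ₂⁻¹ Γ₂, h₂inv', Matrix.mul_one, Matrix.mul_assoc]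
      rw [hmat] at e
      rw [← e, hΓ₂]
      simp only [Matrix.of_apply]
    rw [h1, h2, h3, Matrix.sub_mulVec, dotProduct_sub]
    ring
  -- part (a)
  have hSpsd : (Γrwd - Γ₁₂ * Γ₂⁻¹ * Γ₁₂ᵀ).PosSemidef := by
    refine .of_dotProduct_mulVec_nonneg hSherm fun x => ?_
    simp only [star_trivial]
    rw [← qform x]
    exact integral_nonneg fun ω => mul_nonneg (hw₀0 ω) (sq_nonneg _)
  -- single-coefficient sums
  have hsingle : ∀ {q : ℕ} (g : Fin q → ℝ) (i : Fin q),
      ∑ k, (Pi.single i 1 : Fin q → ℝ) k * g k = g i := by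
    intro q g i
    simp [Pi.single_apply, ite_mul]
  -- part (b)
  have hbiff : (Γrwd - Γ₁₂ * Γ₂⁻¹ * Γ₁₂ᵀ = 0 ↔
      ∃ M : Matrix (Fin p₁) (Fin p₂) ℝ,
        ∀ᵐ ω ∂(P.withDensity fun ω => ENNReal.ofReal (w₀ ω)),
          ∀ i, u ω i = M.mulVec (fun j => v ω j) i) := by
    constructor
    · intro h
      refine ⟨Γ₁₂ * Γ₂⁻¹, ?_⟩
      rw [ae_withDensity_iff hw₀.ennreal_ofReal]
      have hcj : ∀ (i : Fin p₁) (j : Fin p₂),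
          (Γ₂⁻¹ * Γ₁₂ᵀ).mulVec (Pi.single i 1) j = (Γ₁₂ * Γ₂⁻¹) i j := by
        intro i j
        have hmt : (Γ₁₂ * Γ₂⁻¹) i j = ((Γ₂⁻¹ * Γ₁₂ᵀ)ᵀ) i j := by
          rw [Matrix.transpose_mul, Matrix.transpose_transpose, hinvsymm]
        rw [hmt, Matrix.transpose_apply]
        simp [Matrix.mulVec, dotProduct, Pi.single_apply, mul_ite]
      have key : ∀ i : Fin p₁, ∀ᵐ ω ∂P, w₀ ω ≠ 0 →
          u ω i = ∑ j, (Γ₁₂ * Γ₂⁻¹) i j * v ω j := by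
        intro i
        have h0 : ∫ ω, w₀ ω * (∑ k, (Pi.single i 1 : Fin p₁ → ℝ) k * u ω k
            - ∑ j, (Γ₂⁻¹ * Γ₁₂ᵀ).mulVec (Pi.single i 1) j * v ω j) ^ 2 ∂P = 0 := by
          rw [qform (Pi.single i 1), h, Matrix.zero_mulVec, dotProduct_zero]
        have hnn : 0 ≤ᵐ[P] fun ω => w₀ ω * (∑ k, (Pi.single i 1 : Fin p₁ → ℝ) k * u ω k
            - ∑ j, (Γ₂⁻¹ * Γ₁₂ᵀ).mulVec (Pi.single i 1) j * v ω j) ^ 2 :=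
          Filter.Eventually.of_forall fun ω => mul_nonneg (hw₀0 ω) (sq_nonneg _)
        have hInt := quad_integrable w₀ (fun ω k => u ω k) (fun ω j => v ω j) Iuu Iuv Ivv
          (Pi.single i 1) ((Γ₂⁻¹ * Γ₁₂ᵀ).mulVec (Pi.single i 1))
        have hz := (integral_eq_zero_iff_of_nonneg_ae hnn hInt).mp h0
        refine hz.mono fun ω hω hw => ?_
        have hω' : w₀ ω * (∑ k, (Pi.single i 1 : Fin p₁ → ℝ) k * u ω k
            - ∑ j, (Γ₂⁻¹ * Γ₁₂ᵀ).mulVec (Pi.single i 1) j * v ω j) ^ 2 = 0 := hω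
        have hsq := (mul_eq_zero.mp hω').resolve_left hw
        have hd : ∑ k, (Pi.single i 1 : Fin p₁ → ℝ) k * u ω k
            = ∑ j, (Γ₂⁻¹ * Γ₁₂ᵀ).mulVec (Pi.single i 1) j * v ω j := by
          have := pow_eq_zero_iff (n := 2) (by norm_num) |>.mp hsq
          linarith [this]
        rw [hsingle (fun k => u ω k) i] at hd
        rw [hd]
        exact Finset.sum_congr rfl fun j _ => by rw [hcj i j]
      refine (ae_all_iff.mpr key).mono fun ω hω hne i => ?_
      have hw : w₀ ω ≠ 0 := by
        intro h0; rw [h0] at hne; simp at hne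
      rw [hω i hw]
      simp [Matrix.mulVec, dotProduct]
    · rintro ⟨M, hM⟩
      rw [ae_withDensity_iff hw₀.ennreal_ofReal] at hM
      have hM' : ∀ᵐ ω ∂P, w₀ ω ≠ 0 → ∀ i, u ω i = ∑ j, M i j * v ω j := by
        refine hM.mono fun ω hω hw i => ?_
        have hne : ENNReal.ofReal (w₀ ω) ≠ 0 := by
          have : 0 < w₀ ω := lt_of_le_of_ne (hw₀0 ω) (Ne.symm hw)
          simpa [ENNReal.ofReal_eq_zero] using this.not_ge
        rw [hω hne i]
        simp [Matrix.mulVec, dotProduct]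
      have hGrwd_eq : Γrwd = M * Γ₂ * Mᵀ := by
        rw [hΓrwd]; ext i j
        simp only [Matrix.of_apply]
        have hcong : (fun ω => w₀ ω * (u ω i * u ω j)) =ᵐ[P]
            fun ω => w₀ ω * ((∑ k, M i k * v ω k) * (∑ l, M j l * v ω l)) := by
          refine hM'.mono fun ω hω => ?_
          dsimp only
          by_cases h0 : w₀ ω = 0
          · simp [h0]
          · rw [hω h0 i, hω h0 j]
        rw [integral_congr_ae hcong,
          bilin_expand w₀ (fun ω k => v ω k) (fun ω l => v ω l) Ivv (M i) (M j)]
        simp only [Matrix.mul_apply, Matrix.transpose_apply, hΓ₂, Matrix.of_apply,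
          Finset.sum_mul]
        conv_lhs => rw [Finset.sum_comm]
        exact Finset.sum_congr rfl fun l _ => Finset.sum_congr rfl fun k _ => by ring
      have hG12_eq : Γ₁₂ = M * Γ₂ := by
        rw [hΓ₁₂]; ext i j
        simp only [Matrix.of_apply]
        have hcong : (fun ω => w₀ ω * (u ω i * v ω j)) =ᵐ[P]
            fun ω => w₀ ω * ((∑ k, M i k * v ω k) * (∑ l, (Pi.single j 1 : Fin p₂ → ℝ) l * v ω l)) := by
          refine hM'.mono fun ω hω => ?_
          dsimp only
          by_cases h0 : w₀ ω = 0
          · simp [h0]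
          · rw [hω h0 i, hsingle (fun l => v ω l) j]
        rw [integral_congr_ae hcong,
          bilin_expand w₀ (fun ω k => v ω k) (fun ω l => v ω l) Ivv (M i) (Pi.single j 1)]
        simp only [Matrix.mul_apply, hΓ₂, Matrix.of_apply]
        refine Finset.sum_congr rfl fun k _ => ?_
        simp [Pi.single_apply, mul_ite, ite_mul]
      rw [hGrwd_eq, hG12_eq, Matrix.transpose_mul, hΓ₂symm,
        Matrix.mul_assoc (M * Γ₂) Γ₂⁻¹ (Γ₂ * Mᵀ), ← Matrix.mul_assoc Γ₂⁻¹ Γ₂ Mᵀ,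
        h₂inv', Matrix.one_mul]
      exact sub_self _
  -- part (c)
  have hBPD : (Γrct + (Γrwd - Γ₁₂ * Γ₂⁻¹ * Γ₁₂ᵀ)).PosDef := hrctPD.add_posSemidef hSpsd
  have hAdet : IsUnit Γrct.det := hrctPD.det_pos.ne'.isUnit
  have hBdet : IsUnit (Γrct + (Γrwd - Γ₁₂ * Γ₂⁻¹ * Γ₁₂ᵀ)).det := hBPD.det_pos.ne'.isUnit
  have hAinv : Γrct * Γrct⁻¹ = 1 := Matrix.mul_nonsing_inv _ hAdet
  have hA'inv : Γrct⁻¹ * Γrct = 1 := Matrix.nonsing_inv_mul _ hAdet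
  have hBinv : (Γrct + (Γrwd - Γ₁₂ * Γ₂⁻¹ * Γ₁₂ᵀ))
      * (Γrct + (Γrwd - Γ₁₂ * Γ₂⁻¹ * Γ₁₂ᵀ))⁻¹ = 1 := Matrix.mul_nonsing_inv _ hBdet
  have hB'inv : (Γrct + (Γrwd - Γ₁₂ * Γ₂⁻¹ * Γ₁₂ᵀ))⁻¹
      * (Γrct + (Γrwd - Γ₁₂ * Γ₂⁻¹ * Γ₁₂ᵀ)) = 1 := Matrix.nonsing_inv_mul _ hBdet
  set S := Γrwd - Γ₁₂ * Γ₂⁻¹ * Γ₁₂ᵀ with hSdef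
  set A := Γrct with hAdef
  set Bi := (A + S)⁻¹ with hBidef
  have e1 : A⁻¹ - Bi = Bi * (S * A⁻¹) := by
    have hmul : (A + S) * (A⁻¹ - Bi) = S * A⁻¹ := by
      rw [Matrix.mul_sub, hBinv, Matrix.add_mul, hAinv]
      abel
    calc A⁻¹ - Bi = Bi * ((A + S) * (A⁻¹ - Bi)) := by
          rw [← Matrix.mul_assoc, hB'inv, Matrix.one_mul]
      _ = Bi * (S * A⁻¹) := by rw [hmul]
  have e1' : A⁻¹ - Bi = A⁻¹ * (S * Bi) := by
    have hmul : (A⁻¹ - Bi) * (A + S) = A⁻¹ * S := by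
      rw [Matrix.sub_mul, hB'inv, Matrix.mul_add, hA'inv]
      abel
    calc A⁻¹ - Bi = (A⁻¹ - Bi) * (A + S) * Bi := by
          rw [Matrix.mul_assoc, hBinv, Matrix.mul_one]
      _ = A⁻¹ * S * Bi := by rw [hmul]
      _ = A⁻¹ * (S * Bi) := by rw [Matrix.mul_assoc]
  have hdecomp : A⁻¹ = A⁻¹ * (S * Bi) + Bi := by
    rw [← e1']; abel
  have main_id : A⁻¹ - Bi = Bi * S * Bi + Bi * S * A⁻¹ * (S * Bi) := by
    calc A⁻¹ - Bi = Bi * (S * A⁻¹) := e1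
      _ = Bi * (S * (A⁻¹ * (S * Bi) + Bi)) := by rw [← hdecomp]
      _ = Bi * S * Bi + Bi * S * A⁻¹ * (S * Bi) := by
          noncomm_ring
  have hBiherm : Biᴴ = Bi := hBPD.inv.isHermitian
  have hcpsd : (A⁻¹ - Bi).PosSemidef := by
    rw [main_id]
    have T1 := hSpsd.mul_mul_conjTranspose_same Bi
    rw [hBiherm] at T1
    have T2 := (hrctPD.inv.posSemidef).mul_mul_conjTranspose_same (Bi * S)
    rw [Matrix.conjTranspose_mul, hBiherm, hSherm.eq] at T2
    exact T1.add T2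
  have hBexp : Γrct + Γrwd - Γ₁₂ * Γ₂⁻¹ * Γ₁₂ᵀ = A + S := by
    rw [hSdef, hAdef, add_sub_assoc]
  refine ⟨hSpsd, hbiff, ?_, ?_⟩
  · rw [hBexp]
    exact hcpsd
  · rw [hBexp]
    constructor
    · intro hinv
      apply hbiff.mp
      have hB := congrArg (·⁻¹) hinv
      rw [Matrix.nonsing_inv_nonsing_inv _ hBdet, Matrix.nonsing_inv_nonsing_inv _ hAdet] at hB
      exact add_eq_left.mp hB
    · intro hM
      rw [hbiff.mpr hM, add_zero]
end

section
/- (Weighted loss decomposition underlying Remark 1.) Let W be a strictly positive ℋ-measurable random variable bounded above and below by positive constants, and define the weighted conditional expectation E_W[g | 𝒢] = E[g·W | 𝒢]/E[W | 𝒢], T = E[W | 𝒢], Ā = E_W[A | 𝒢], and the overlap weight ω = Ā·(1 − Ā). Suppose Y = μ + A·τ + (1−S)·λ·(A − e) + ε, where μ, τ, λ are 𝒢-measurable, ε ∈ L²(P) with E[ε | ℋ] = 0 a.s., and all displayed products are integrable. Then for all bounded 𝒢-measurable random variables t and l: E[ W·( Y − E_W[Y | 𝒢] − (A − Ā)·t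 − (1−S)·(A − Ā)·l )² ] = E[ T·ω·( (τ − t) + (1−S)·(λ − l) )² ] + E[W·ε²]. In particular, minimizing the left-hand side over (t, l) is equivalent to minimizing the overlap-weighted squared approximation error E[T·ω·((τ − t) + (1−S)·(λ − l))²]. -/
open MeasureTheory

open Filter

section Helpers
variable {Ω : Type*}

lemma memL2_of_bound {mΩ : MeasurableSpace Ω} (P : Measure Ω) [IsFiniteMeasure P]
    {f : Ω → ℝ} (hf : AEStronglyMeasurable f P) (C : ℝ) (h : ∀ᵐ ω ∂P, |f ω| ≤ C) :
    MemLp f 2 P :=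
  (memLp_top_of_bound hf C (by simpa [Real.norm_eq_abs] using h)).mono_exponent le_top

lemma integrable_mul_L2 {mΩ : MeasurableSpace Ω} {P : Measure Ω}
    {f g : Ω → ℝ} (hf : MemLp f 2 P) (hg : MemLp g 2 P) :
    Integrable (fun ω => f ω * g ω) P :=
  memLp_one_iff_integrable.mp (hg.mul' hf
    (hpqr := ⟨by rw [inv_one, ENNReal.inv_two_add_inv_two]⟩))

lemma memL2_mul_of_top {mΩ : MeasurableSpace Ω} {P : Measure Ω}
    {b g : Ω → ℝ} (hb : MemLp b ⊤ P) (hg : MemLp g 2 P) :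
    MemLp (fun ω => b ω * g ω) 2 P :=
  hg.mul' hb

end Helpers

/-- weighted loss decomposition underlying Remark 1: the weighted
squared-error loss decomposes into the overlap-weighted squared approximation error of
`(τ, λ)` by `(t, l)` plus the irreducible term `E[W·ε²]`. -/
theorem weighted_loss_decomposition
    {Ω : Type*} {mΩ : MeasurableSpace Ω} (P : Measure Ω) [IsProbabilityMeasure P]
    {mG mH : MeasurableSpace Ω} (hGH : mG ≤ mH) (hHF : mH ≤ mΩ)
    (A S : Ω → ℝ)
    (hA : StronglyMeasurable[mH] A) (hA01 : ∀ ω, A ω = 0 ∨ A ω = 1)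
    (hS : StronglyMeasurable[mG] S) (hS01 : ∀ ω, S ω = 0 ∨ S ω = 1)
    (e : Ω → ℝ) (he : e = P[A|mG]) (he01 : ∀ᵐ ω ∂P, 0 < e ω ∧ e ω < 1)
    -- the weight W, bounded above and below by positive constants
    (W : Ω → ℝ) (hW : StronglyMeasurable[mH] W)
    (c₁ c₂ : ℝ) (hc₁ : 0 < c₁) (hWb : ∀ ω, c₁ ≤ W ω ∧ W ω ≤ c₂)
    -- structural decomposition of the outcome
    (Y μ τ lam ε : Ω → ℝ)
    (hμ : StronglyMeasurable[mG] μ) (hτ : StronglyMeasurable[mG] τ)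
    (hlam : StronglyMeasurable[mG] lam)
    (hμ2 : MemLp μ 2 P) (hτ2 : MemLp τ 2 P) (hlam2 : MemLp lam 2 P)
    (hε : MemLp ε 2 P) (hεH : P[ε|mH] =ᵐ[P] 0)
    (hY : Y = fun ω => μ ω + A ω * τ ω + (1 - S ω) * lam ω * (A ω - e ω) + ε ω)
    -- weighted conditional expectations
    (T Abar EWY : Ω → ℝ)
    (hT : T = P[W|mG])
    (hAbar : Abar = fun ω => (P[fun ω => A ω * W ω|mG]) ω / T ω)
    (hEWY : EWY = fun ω => (P[fun ω => Y ω * W ω|mG]) ω / T ω) :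
    ∀ (t l : Ω → ℝ) (Ct Cl : ℝ),
      StronglyMeasurable[mG] t → StronglyMeasurable[mG] l →
      (∀ ω, |t ω| ≤ Ct) → (∀ ω, |l ω| ≤ Cl) →
      ∫ ω, W ω * (Y ω - EWY ω - (A ω - Abar ω) * t ω
          - (1 - S ω) * (A ω - Abar ω) * l ω) ^ 2 ∂P
        = (∫ ω, T ω * (Abar ω * (1 - Abar ω)) *
              ((τ ω - t ω) + (1 - S ω) * (lam ω - l ω)) ^ 2 ∂P)
          + ∫ ω, W ω * ε ω ^ 2 ∂P := by
  intro t l Ct Cl ht hl htb hlb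
  have hGF : mG ≤ mΩ := hGH.trans hHF
  have hne : Nonempty Ω := by
    by_contra h
    rw [not_nonempty_iff] at h
    have h0 := measure_univ (μ := P)
    rw [Set.eq_empty_of_isEmpty (Set.univ : Set Ω), measure_empty] at h0
    exact zero_ne_one h0
  have hc₂ : 0 < c₂ := lt_of_lt_of_le hc₁ ((hWb (Classical.arbitrary Ω)).1.trans
    (hWb (Classical.arbitrary Ω)).2)
  -- ae-measurability of the basic data
  have hW0 : AEStronglyMeasurable[mΩ] W P := (hW.mono hHF).aestronglyMeasurable
  have hA0 : AEStronglyMeasurable[mΩ] A P := (hA.mono hHF).aestronglyMeasurable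
  have hS0 : AEStronglyMeasurable[mΩ] S P := (hS.mono hGF).aestronglyMeasurable
  have heG : StronglyMeasurable[mG] e := he ▸ stronglyMeasurable_condExp
  have he0 : AEStronglyMeasurable[mΩ] e P := (heG.mono hGF).aestronglyMeasurable
  -- pointwise bounds
  have hA_bd : ∀ ω, |A ω| ≤ 1 := fun ω => by rcases hA01 ω with h | h <;> simp [h]
  have hS_bd : ∀ ω, |1 - S ω| ≤ 1 := fun ω => by rcases hS01 ω with h | h <;> simp [h]
  have hW_bd : ∀ ω, |W ω| ≤ c₂ := fun ω =>
    abs_le.2 ⟨by linarith [(hWb ω).1], (hWb ω).2⟩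
  have he_bd : ∀ᵐ ω ∂P, |e ω| ≤ 1 := by
    filter_upwards [he01] with ω h
    rw [abs_le]; constructor <;> linarith [h.1, h.2]
  -- integrability / L² facts
  have hWint : Integrable W P :=
    (memL2_of_bound P hW0 c₂ (ae_of_all P hW_bd)).integrable one_le_two
  have hW2 : MemLp W 2 P := memL2_of_bound P hW0 c₂ (ae_of_all P hW_bd)
  have hεint : Integrable ε P := hε.integrable one_le_two
  have heint : Integrable e P := he ▸ integrable_condExp
  have hAW2 : MemLp (fun ω => A ω * W ω) 2 P :=
    memL2_of_bound P (hA0.mul hW0) c₂ (ae_of_all P fun ω => by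
      rw [abs_mul]
      calc |A ω| * |W ω| ≤ 1 * c₂ :=
        mul_le_mul (hA_bd ω) (hW_bd ω) (abs_nonneg _) zero_le_one
      _ = c₂ := one_mul c₂)
  have hAWint : Integrable (fun ω => A ω * W ω) P := hAW2.integrable one_le_two
  -- T bounds
  have hT_lb : ∀ᵐ ω ∂P, c₁ ≤ T ω := by
    have h := condExp_mono (m := mG) (μ := P) (integrable_const c₁) hWint
      (ae_of_all P fun ω => (hWb ω).1)
    rw [condExp_const hGF, ← hT] at h
    exact h
  have hT_ub : ∀ᵐ ω ∂P, T ω ≤ c₂ := by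
    have h := condExp_mono (m := mG) (μ := P) hWint (integrable_const c₂)
      (ae_of_all P fun ω => (hWb ω).2)
    rw [condExp_const hGF, ← hT] at h
    exact h
  have hTG : StronglyMeasurable[mG] T := hT ▸ stronglyMeasurable_condExp
  -- bounds for P[A*W|mG]
  have hAW_lb : ∀ᵐ ω ∂P, 0 ≤ (P[fun ω => A ω * W ω|mG]) ω := by
    have h := condExp_mono (m := mG) (μ := P) (integrable_const (0 : ℝ)) hAWint
      (ae_of_all P fun ω => by
        rcases hA01 ω with h | h <;> simp [h] <;> linarith [(hWb ω).1])
    rw [condExp_const hGF] at h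
    exact h
  have hAW_ub : ∀ᵐ ω ∂P, (P[fun ω => A ω * W ω|mG]) ω ≤ c₂ := by
    have h := condExp_mono (m := mG) (μ := P) hAWint (integrable_const c₂)
      (ae_of_all P fun ω => by
        rcases hA01 ω with h | h <;> simp [h] <;> linarith [(hWb ω).1, (hWb ω).2])
    rw [condExp_const hGF] at h
    exact h
  have hAbarG : StronglyMeasurable[mG] Abar := by
    rw [hAbar]
    exact (stronglyMeasurable_condExp.measurable.div hTG.measurable).stronglyMeasurable
  have hAbar_bd : ∀ᵐ ω ∂P, |Abar ω| ≤ c₂ / c₁ := by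
    filter_upwards [hAW_lb, hAW_ub, hT_lb] with ω h1 h2 h3
    simp only [hAbar]
    rw [abs_div]
    refine div_le_div₀ hc₂.le ?_ hc₁ ?_
    · rwa [abs_of_nonneg h1]
    · rwa [abs_of_nonneg (by linarith)]
  have hAbar0 : AEStronglyMeasurable[mΩ] Abar P := (hAbarG.mono hGF).aestronglyMeasurable
  have hAmA_bd : ∀ᵐ ω ∂P, |A ω - Abar ω| ≤ 1 + c₂ / c₁ := by
    filter_upwards [hAbar_bd] with ω h
    calc |A ω - Abar ω| ≤ |A ω| + |Abar ω| := abs_sub _ _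
      _ ≤ 1 + c₂ / c₁ := add_le_add (hA_bd ω) h
  -- the key ingredients: D, D2, K, F
  set D : Ω → ℝ := fun ω => (τ ω - t ω) + (1 - S ω) * (lam ω - l ω) with hD_def
  set D2 : Ω → ℝ := fun ω => D ω * D ω with hD2_def
  set K : Ω → ℝ := fun ω => W ω * (A ω - Abar ω) ^ 2 with hK_def
  set F : Ω → ℝ := fun ω => 2 * W ω * (A ω - Abar ω) * D ω with hF_def
  have ht2 : MemLp t 2 P :=
    memL2_of_bound P ((ht.mono hGF).aestronglyMeasurable) Ct (ae_of_all P htb)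
  have hl2 : MemLp l 2 P :=
    memL2_of_bound P ((hl.mono hGF).aestronglyMeasurable) Cl (ae_of_all P hlb)
  have hSmtop : MemLp (fun ω => 1 - S ω) ⊤ P :=
    memLp_top_of_bound ((stronglyMeasurable_const.sub hS).mono hGF).aestronglyMeasurable 1
      (ae_of_all P fun ω => by simpa [Real.norm_eq_abs] using hS_bd ω)
  have hDG : StronglyMeasurable[mG] D :=
    (hτ.sub ht).add ((stronglyMeasurable_const.sub hS).mul (hlam.sub hl))
  have hD2mem : MemLp D 2 P :=
    (hτ2.sub ht2).add (memL2_mul_of_top hSmtop (hlam2.sub hl2))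
  have hD2G : StronglyMeasurable[mG] D2 := hDG.mul hDG
  have hD2int : Integrable D2 P := integrable_mul_L2 hD2mem hD2mem
  have hKH : StronglyMeasurable[mH] K :=
    hW.mul ((hA.sub (hAbarG.mono hGH)).pow 2)
  have hK0 : AEStronglyMeasurable[mΩ] K P := (hKH.mono hHF).aestronglyMeasurable
  have hK_bd : ∀ᵐ ω ∂P, |K ω| ≤ c₂ * (1 + c₂ / c₁) ^ 2 := by
    filter_upwards [hAmA_bd] with ω h
    simp only [hK_def]
    rw [abs_mul, abs_pow]
    refine mul_le_mul (hW_bd ω) (pow_le_pow_left₀ (abs_nonneg _) h 2)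
      (by positivity) hc₂.le
  have hKint : Integrable K P := by
    refine Integrable.mono' (g := fun _ => c₂ * (1 + c₂ / c₁) ^ 2)
      (integrable_const _) hK0 ?_
    simpa [Real.norm_eq_abs] using hK_bd
  -- P[A*W|mG] = Abar * T a.e.
  have hAbarT : ∀ᵐ ω ∂P, (P[fun ω => A ω * W ω|mG]) ω = Abar ω * T ω := by
    filter_upwards [hT_lb] with ω h
    have hT0 : T ω ≠ 0 := ne_of_gt (lt_of_lt_of_le hc₁ h)
    simp only [hAbar]
    field_simp

  -- L² facts for the summands of Y·W
  have hAe2 : MemLp (fun ω => (A ω - e ω) * W ω) 2 P := by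
    refine memL2_of_bound P ((hA0.sub he0).mul hW0) (2 * c₂) ?_
    filter_upwards [he_bd] with ω h
    rw [abs_mul]
    have h1 : |A ω - e ω| ≤ 2 := by
      calc |A ω - e ω| ≤ |A ω| + |e ω| := abs_sub _ _
      _ ≤ 2 := by linarith [hA_bd ω]
    exact mul_le_mul h1 (hW_bd ω) (abs_nonneg _) (by norm_num)
  have hSlam2 : MemLp (fun ω => (1 - S ω) * lam ω) 2 P := memL2_mul_of_top hSmtop hlam2
  have int_μW : Integrable (fun ω => μ ω * W ω) P := integrable_mul_L2 hμ2 hW2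
  have int_τAW : Integrable (fun ω => τ ω * (A ω * W ω)) P := integrable_mul_L2 hτ2 hAW2
  have int_lamE : Integrable (fun ω => ((1 - S ω) * lam ω) * ((A ω - e ω) * W ω)) P :=
    integrable_mul_L2 hSlam2 hAe2
  have int_Wε : Integrable (fun ω => W ω * ε ω) P :=
    hεint.bdd_mul hW0 (ae_of_all P fun ω => by simpa [Real.norm_eq_abs] using hW_bd ω)
  have int_eW : Integrable (fun ω => e ω * W ω) P := by
    have h := heint.bdd_mul hW0 (ae_of_all P fun ω => by
      simpa [Real.norm_eq_abs] using hW_bd ω)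
    exact h.congr (ae_of_all P fun ω => mul_comm (W ω) (e ω))
  have int_AeW : Integrable (fun ω => (A ω - e ω) * W ω) P := hAe2.integrable one_le_two
  -- pull-out computations
  have pμ : P[(fun ω => μ ω * W ω)|mG] =ᵐ[P] fun ω => μ ω * T ω := by
    rw [hT]
    exact condExp_mul_of_stronglyMeasurable_left hμ int_μW hWint
  have pτ : P[(fun ω => τ ω * (A ω * W ω))|mG] =ᵐ[P]
      fun ω => τ ω * (P[fun ω => A ω * W ω|mG]) ω :=
    condExp_mul_of_stronglyMeasurable_left hτ int_τAW hAWint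
  have pAe : P[(fun ω => (A ω - e ω) * W ω)|mG] =ᵐ[P]
      fun ω => (P[fun ω => A ω * W ω|mG]) ω - e ω * T ω := by
    have e2 : (fun ω => (A ω - e ω) * W ω)
        = (fun ω => A ω * W ω) - (fun ω => e ω * W ω) := by
      funext ω; simp only [Pi.sub_apply]; ring
    rw [e2]
    have pe : P[(fun ω => e ω * W ω)|mG] =ᵐ[P] fun ω => e ω * T ω := by
      rw [hT]
      exact condExp_mul_of_stronglyMeasurable_left heG int_eW hWint
    have c0 : P[(fun ω => A ω * W ω) - (fun ω => e ω * W ω)|mG] =ᵐ[P]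
        fun ω => (P[(fun ω => A ω * W ω)|mG]) ω - (P[(fun ω => e ω * W ω)|mG]) ω :=
      condExp_sub hAWint int_eW mG
    filter_upwards [c0, pe] with ω a0 a1
    rw [a0, a1]
  have plam : P[(fun ω => ((1 - S ω) * lam ω) * ((A ω - e ω) * W ω))|mG] =ᵐ[P]
      fun ω => ((1 - S ω) * lam ω) * ((P[fun ω => A ω * W ω|mG]) ω - e ω * T ω) := by
    have h0 : P[(fun ω => ((1 - S ω) * lam ω) * ((A ω - e ω) * W ω))|mG] =ᵐ[P]
        fun ω => ((1 - S ω) * lam ω) * (P[(fun ω => (A ω - e ω) * W ω)|mG]) ω :=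
      condExp_mul_of_stronglyMeasurable_left ((stronglyMeasurable_const.sub hS).mul hlam)
        int_lamE int_AeW
    filter_upwards [h0, pAe] with ω a0 a1
    rw [a0, a1]
  have pε : P[(fun ω => W ω * ε ω)|mG] =ᵐ[P] fun _ => (0:ℝ) := by
    have s1 : P[(fun ω => W ω * ε ω)|mH] =ᵐ[P] fun _ => (0:ℝ) := by
      have h0 : P[(fun ω => W ω * ε ω)|mH] =ᵐ[P] fun ω => W ω * (P[ε|mH]) ω :=
        condExp_mul_of_stronglyMeasurable_left hW int_Wε hεint
      filter_upwards [h0, hεH] with ω a0 a1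
      rw [a0, a1]
      simp
    calc P[(fun ω => W ω * ε ω)|mG]
        =ᵐ[P] P[P[(fun ω => W ω * ε ω)|mH]|mG] := (condExp_condExp_of_le hGH hHF).symm
      _ =ᵐ[P] P[(fun _ => (0:ℝ))|mG] := condExp_congr_ae s1
      _ =ᵐ[P] fun _ => (0:ℝ) := by rw [condExp_const hGF]
  -- the conditional expectation of Y·W
  have e1 : (fun ω => Y ω * W ω)
      = (fun ω => μ ω * W ω) + ((fun ω => τ ω * (A ω * W ω))
        + ((fun ω => ((1 - S ω) * lam ω) * ((A ω - e ω) * W ω)) + (fun ω => W ω * ε ω))) := by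
    funext ω
    simp only [Pi.add_apply, hY]
    ring
  have h1 : ∀ᵐ ω ∂P, (P[fun ω => Y ω * W ω|mG]) ω
      = μ ω * T ω + τ ω * (P[fun ω => A ω * W ω|mG]) ω
        + ((1 - S ω) * lam ω) * ((P[fun ω => A ω * W ω|mG]) ω - e ω * T ω) := by
    rw [e1]
    have A1 : P[(fun ω => μ ω * W ω) + ((fun ω => τ ω * (A ω * W ω))
        + ((fun ω => ((1 - S ω) * lam ω) * ((A ω - e ω) * W ω)) + (fun ω => W ω * ε ω)))|mG]
        =ᵐ[P] fun ω => (P[(fun ω => μ ω * W ω)|mG]) ω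
          + (P[(fun ω => τ ω * (A ω * W ω))
            + ((fun ω => ((1 - S ω) * lam ω) * ((A ω - e ω) * W ω))
              + (fun ω => W ω * ε ω))|mG]) ω :=
      condExp_add int_μW (int_τAW.add (int_lamE.add int_Wε)) mG
    have A2 : P[(fun ω => τ ω * (A ω * W ω))
        + ((fun ω => ((1 - S ω) * lam ω) * ((A ω - e ω) * W ω)) + (fun ω => W ω * ε ω))|mG]
        =ᵐ[P] fun ω => (P[(fun ω => τ ω * (A ω * W ω))|mG]) ω
          + (P[(fun ω => ((1 - S ω) * lam ω) * ((A ω - e ω) * W ω))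
            + (fun ω => W ω * ε ω)|mG]) ω :=
      condExp_add int_τAW (int_lamE.add int_Wε) mG
    have A3 : P[(fun ω => ((1 - S ω) * lam ω) * ((A ω - e ω) * W ω))
        + (fun ω => W ω * ε ω)|mG]
        =ᵐ[P] fun ω => (P[(fun ω => ((1 - S ω) * lam ω) * ((A ω - e ω) * W ω))|mG]) ω
          + (P[(fun ω => W ω * ε ω)|mG]) ω :=
      condExp_add int_lamE int_Wε mG
    filter_upwards [A1, A2, A3, pμ, pτ, plam, pε] with ω a1 a2 a3 q1 q2 q3 q4
    rw [a1, a2, a3, q1, q2, q3, q4]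
    ring
  -- pointwise formula for EWY
  have hEWY_ae : ∀ᵐ ω ∂P, EWY ω
      = μ ω + τ ω * Abar ω + (1 - S ω) * lam ω * (Abar ω - e ω) := by
    filter_upwards [h1, hT_lb] with ω h hTω
    have hT0 : T ω ≠ 0 := ne_of_gt (lt_of_lt_of_le hc₁ hTω)
    simp only [hEWY, hAbar, h]
    set x := (P[fun ω => A ω * W ω|mG]) ω / T ω with hxd
    have hx : x * T ω = (P[fun ω => A ω * W ω|mG]) ω := div_mul_cancel₀ _ hT0
    rw [← hx, div_eq_iff hT0]
    ring
  -- pointwise decomposition of the loss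
  have hR : ∀ᵐ ω ∂P, W ω * (Y ω - EWY ω - (A ω - Abar ω) * t ω
      - (1 - S ω) * (A ω - Abar ω) * l ω) ^ 2
      = D2 ω * K ω + F ω * ε ω + W ω * (ε ω * ε ω) := by
    filter_upwards [hEWY_ae] with ω h
    simp only [hY, hD2_def, hD_def, hK_def, hF_def, h]
    ring
  -- integrability of the three pieces
  have hDεint : Integrable (fun ω => D ω * ε ω) P := integrable_mul_L2 hD2mem hε
  have int_I1 : Integrable (fun ω => D2 ω * K ω) P := by
    have h := hD2int.bdd_mul (f := K) hK0 (by simpa [Real.norm_eq_abs] using hK_bd)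
    exact h.congr (ae_of_all P fun ω => mul_comm (K ω) (D2 ω))
  have int_I2 : Integrable (fun ω => F ω * ε ω) P := by
    have h := hDεint.bdd_mul (f := fun ω => 2 * W ω * (A ω - Abar ω))
      ((aestronglyMeasurable_const.mul hW0).mul (hA0.sub hAbar0)) (c := 2 * c₂ * (1 + c₂ / c₁)) ?_
    · exact h.congr (ae_of_all P fun ω => by simp only [hF_def]; ring)
    · filter_upwards [hAmA_bd] with ω h
      rw [Real.norm_eq_abs, abs_mul, abs_mul, abs_two]
      have h2 : 2 * |W ω| ≤ 2 * c₂ := by linarith [hW_bd ω]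
      refine mul_le_mul h2 h (abs_nonneg _) (by linarith)
  have int_I3 : Integrable (fun ω => W ω * (ε ω * ε ω)) P :=
    (integrable_mul_L2 hε hε).bdd_mul hW0
      (ae_of_all P fun ω => by simpa [Real.norm_eq_abs] using hW_bd ω)
  have int_I12 : Integrable (fun ω => D2 ω * K ω + F ω * ε ω) P := int_I1.add int_I2
  -- split the integral
  have hsplit : ∫ ω, W ω * (Y ω - EWY ω - (A ω - Abar ω) * t ω
      - (1 - S ω) * (A ω - Abar ω) * l ω) ^ 2 ∂P
      = (∫ ω, D2 ω * K ω ∂P) + (∫ ω, F ω * ε ω ∂P) + ∫ ω, W ω * (ε ω * ε ω) ∂P := by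
    rw [integral_congr_ae (g := fun ω => D2 ω * K ω + F ω * ε ω + W ω * (ε ω * ε ω)) hR]
    rw [integral_add int_I12 int_I3, integral_add int_I1 int_I2]
  -- the cross term vanishes
  have hFε0 : ∫ ω, F ω * ε ω ∂P = 0 := by
    have hFH : StronglyMeasurable[mH] F := by
      rw [hF_def]
      exact ((stronglyMeasurable_const.mul hW).mul (hA.sub (hAbarG.mono hGH))).mul
        (hDG.mono hGH)
    have hp : P[(fun ω => F ω * ε ω)|mH] =ᵐ[P] fun _ => (0:ℝ) := by
      have h0 : P[(fun ω => F ω * ε ω)|mH] =ᵐ[P] fun ω => F ω * (P[ε|mH]) ω :=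
        condExp_mul_of_stronglyMeasurable_left hFH int_I2 hεint
      filter_upwards [h0, hεH] with ω a0 a1
      rw [a0, a1]
      simp
    calc ∫ ω, F ω * ε ω ∂P = ∫ ω, (P[(fun ω => F ω * ε ω)|mH]) ω ∂P :=
        (integral_condExp hHF).symm
      _ = ∫ ω, (0:ℝ) ∂P := integral_congr_ae hp
      _ = 0 := integral_zero _ _
  -- the conditional expectation of K
  have hKcond : ∀ᵐ ω ∂P, (P[K|mG]) ω = T ω * (Abar ω * (1 - Abar ω)) := by
    have eK : K = (fun ω => A ω * W ω) - (fun ω => (2 * Abar ω) * (A ω * W ω))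
        + fun ω => (Abar ω * Abar ω) * W ω := by
      funext ω
      simp only [Pi.add_apply, Pi.sub_apply, hK_def]
      rcases hA01 ω with h | h <;> rw [h] <;> ring
    have int_2AbarAW : Integrable (fun ω => (2 * Abar ω) * (A ω * W ω)) P := by
      refine hAWint.bdd_mul (aestronglyMeasurable_const.mul hAbar0)
        (c := 2 * (c₂ / c₁)) ?_
      filter_upwards [hAbar_bd] with ω h
      rw [Real.norm_eq_abs, abs_mul, abs_two]
      have : (0:ℝ) ≤ 2 := by norm_num
      exact mul_le_mul le_rfl h (abs_nonneg _) this
    have int_Abar2W : Integrable (fun ω => (Abar ω * Abar ω) * W ω) P := by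
      refine hWint.bdd_mul (hAbar0.mul hAbar0) (c := (c₂ / c₁) * (c₂ / c₁)) ?_
      filter_upwards [hAbar_bd] with ω h
      rw [Real.norm_eq_abs, abs_mul]
      exact mul_le_mul h h (abs_nonneg _) (by positivity)
    have c1 : P[(fun ω => A ω * W ω) - (fun ω => (2 * Abar ω) * (A ω * W ω))
        + fun ω => (Abar ω * Abar ω) * W ω|mG]
        =ᵐ[P] fun ω => (P[(fun ω => A ω * W ω) - (fun ω => (2 * Abar ω) * (A ω * W ω))|mG]) ω
          + (P[(fun ω => (Abar ω * Abar ω) * W ω)|mG]) ω :=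
      condExp_add (hAWint.sub int_2AbarAW) int_Abar2W mG
    have c2 : P[(fun ω => A ω * W ω) - (fun ω => (2 * Abar ω) * (A ω * W ω))|mG]
        =ᵐ[P] fun ω => (P[(fun ω => A ω * W ω)|mG]) ω
          - (P[(fun ω => (2 * Abar ω) * (A ω * W ω))|mG]) ω :=
      condExp_sub hAWint int_2AbarAW mG
    have c3 : P[(fun ω => (2 * Abar ω) * (A ω * W ω))|mG]
        =ᵐ[P] fun ω => (2 * Abar ω) * (P[(fun ω => A ω * W ω)|mG]) ω :=
      condExp_mul_of_stronglyMeasurable_left (stronglyMeasurable_const.mul hAbarG)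
        int_2AbarAW hAWint
    have c4 : P[(fun ω => (Abar ω * Abar ω) * W ω)|mG]
        =ᵐ[P] fun ω => (Abar ω * Abar ω) * T ω := by
      rw [hT]
      exact condExp_mul_of_stronglyMeasurable_left (hAbarG.mul hAbarG) int_Abar2W hWint
    rw [eK]
    filter_upwards [c1, c2, c3, c4, hAbarT] with ω a1 a2 a3 a4 a5
    rw [a1, a2, a3, a4, a5]
    ring
  -- the main term
  have hI1 : ∫ ω, D2 ω * K ω ∂P
      = ∫ ω, T ω * (Abar ω * (1 - Abar ω))
          * ((τ ω - t ω) + (1 - S ω) * (lam ω - l ω)) ^ 2 ∂P := by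
    have hpull : P[(fun ω => D2 ω * K ω)|mG] =ᵐ[P] fun ω => D2 ω * (P[K|mG]) ω :=
      condExp_mul_of_stronglyMeasurable_left hD2G int_I1 hKint
    calc ∫ ω, D2 ω * K ω ∂P = ∫ ω, (P[(fun ω => D2 ω * K ω)|mG]) ω ∂P :=
        (integral_condExp hGF).symm
      _ = ∫ ω, T ω * (Abar ω * (1 - Abar ω))
          * ((τ ω - t ω) + (1 - S ω) * (lam ω - l ω)) ^ 2 ∂P := by
        refine integral_congr_ae ?_
        filter_upwards [hpull, hKcond] with ω a1 a2
        rw [a1, a2]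
        simp only [hD2_def, hD_def]
        ring
  have hI3 : ∫ ω, W ω * (ε ω * ε ω) ∂P = ∫ ω, W ω * ε ω ^ 2 ∂P :=
    integral_congr_ae (ae_of_all P fun ω => by ring)
  rw [hsplit, hFε0, hI1, hI3, add_zero]
end

section
/- (One direction of Theorem S3, the influence function space.) Let c be an ℋ-measurable ℝ^p-valued random variable with E[c | 𝒢] = 0 a.s. and c·ε ∈ H. Then c·ε is orthogonal to every element of each of the five subspaces Λ⁽¹⁾, Λ̃⁽²⁾, Λ̃⁽³⁾, Λ̃⁽⁴⁾, Λ̃⁽⁵⁾; that is, E[(c·ε)ᵀ h] = 0 for every h in any of these spaces. -/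
open MeasureTheory
open scoped RealInnerProductSpace

open scoped ENNReal

section Aux

variable {Ω : Type*} {mΩ : MeasurableSpace Ω} {P : Measure Ω} [IsProbabilityMeasure P]

lemma aux_integrable_mul {f g : Ω → ℝ} (hf : MemLp f 2 P) (hg : MemLp g 2 P) :
    Integrable (fun ω => f ω * g ω) P := by
  have h := hg.smul (φ := f) hf (r := 1)
  exact memLp_one_iff_integrable.mp h

lemma aux_integrable_smul {E : Type*} [NormedAddCommGroup E] [NormedSpace ℝ E]
    {f : Ω → ℝ} {g : Ω → E} (hf : MemLp f 2 P) (hg : MemLp g 2 P) :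
    Integrable (fun ω => f ω • g ω) P := by
  have h := hg.smul (φ := f) hf (r := 1)
  exact memLp_one_iff_integrable.mp h

lemma aux_integrable_inner {E : Type*} [NormedAddCommGroup E] [InnerProductSpace ℝ E]
    {f g : Ω → E} (hf : MemLp f 2 P) (hg : MemLp g 2 P) :
    Integrable (fun ω => ⟪f ω, g ω⟫) P := by
  refine ((aux_integrable_mul hf.norm hg.norm).mono'
    (hf.aestronglyMeasurable.inner hg.aestronglyMeasurable) ?_)
  refine Filter.Eventually.of_forall fun ω => ?_
  simpa using norm_inner_le_norm (𝕜 := ℝ) (f ω) (g ω)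

lemma aux_integral_mul_condexp {m : MeasurableSpace Ω} (hm : m ≤ mΩ) {f g : Ω → ℝ}
    (hf : StronglyMeasurable[m] f) (hg : Integrable g P)
    (hfg : Integrable (fun ω => f ω * g ω) P) :
    ∫ ω, f ω * g ω ∂P = ∫ ω, f ω * (P[g|m]) ω ∂P := by
  have h1 : Integrable (f * g) P := hfg
  have h2 := condExp_mul_of_stronglyMeasurable_left (μ := P) hf h1 hg
  calc ∫ ω, f ω * g ω ∂P = ∫ ω, (P[f * g|m]) ω ∂P := (integral_condExp hm).symm
    _ = ∫ ω, f ω * (P[g|m]) ω ∂P :=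
      integral_congr_ae (h2.mono fun ω h => by simpa using h)

lemma aux_integral_mul_eq_zero {m : MeasurableSpace Ω} (hm : m ≤ mΩ) {f g : Ω → ℝ}
    (hf : StronglyMeasurable[m] f) (hg : Integrable g P) (hg0 : P[g|m] =ᵐ[P] 0)
    (hfg : Integrable (fun ω => f ω * g ω) P) : ∫ ω, f ω * g ω ∂P = 0 := by
  rw [aux_integral_mul_condexp hm hf hg hfg]
  refine integral_eq_zero_of_ae ?_
  filter_upwards [hg0] with ω h
  simp [h]

lemma aux_condexp_inner_const {m : MeasurableSpace Ω} (hm : m ≤ mΩ)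
    {E : Type*} [NormedAddCommGroup E] [InnerProductSpace ℝ E] [CompleteSpace E]
    {f : Ω → E} (hf : Integrable f P) (h0 : P[f|m] =ᵐ[P] 0) (v : E) :
    P[fun ω => ⟪v, f ω⟫|m] =ᵐ[P] 0 := by
  refine (ae_eq_condExp_of_forall_setIntegral_eq hm (hf.const_inner v)
    (fun s _ _ => integrableOn_zero) (fun s hs _ => ?_) ?_).symm
  · rw [integral_inner (hf.mono_measure Measure.restrict_le_self) v, ← setIntegral_condExp hm hf hs,
      integral_eq_zero_of_ae (ae_restrict_of_ae h0)]
    simp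
  · exact stronglyMeasurable_const.aestronglyMeasurable

end Aux

set_option maxHeartbeats 1000000 in
/-- one direction of Theorem S3: if `c` is `ℋ`-measurable with
`E[c | 𝒢] = 0` a.s. and `c·ε ∈ H`, then `c·ε` is orthogonal to every element of each of
the five subspaces `Λ⁽¹⁾, Λ̃⁽²⁾, Λ̃⁽³⁾, Λ̃⁽⁴⁾, Λ̃⁽⁵⁾`. -/
theorem influence_function_orthogonal_to_tangent_space
    {Ω : Type*} {mΩ : MeasurableSpace Ω} (P : Measure Ω) [IsProbabilityMeasure P]
    {p : ℕ} {mG mH : MeasurableSpace Ω} (hGH : mG ≤ mH) (hHF : mH ≤ mΩ)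
    (ε : Ω → ℝ) (hε : MemLp ε 2 P) (hεH : P[ε|mH] =ᵐ[P] 0)
    (c₁ c₂ : ℝ) (hc₁ : 0 < c₁)
    (hvar : ∀ᵐ ω ∂P, c₁ ≤ (P[fun ω => ε ω ^ 2|mH]) ω ∧ (P[fun ω => ε ω ^ 2|mH]) ω ≤ c₂)
    (Q : Ω → ℝ) (hQmeas : StronglyMeasurable[mG] Q) (hQ2 : MemLp Q 2 P)
    (hQ0 : ∫ ω, Q ω ∂P = 0)
    (W T : Ω → ℝ) (Tstar : ℝ) (ε₀ : Ω → ℝ)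
    (hW : W = fun ω => ((P[fun ω => ε ω ^ 2|mH]) ω)⁻¹)
    (hT : T = P[W|mG]) (hTstar : Tstar = ∫ ω, (T ω)⁻¹ ∂P)
    (hε₀ : ε₀ = fun ω => (T ω)⁻¹ * W ω * ε ω + Q ω)
    (L : Fin 5 → Set (Ω → EuclideanSpace ℝ (Fin p)))
    (hL1 : L 0 = {Γ | MemLp Γ 2 P ∧ (∫ ω, Γ ω ∂P) = 0 ∧
      P[Γ|mH] =ᵐ[P] 0 ∧ P[fun ω => ε ω • Γ ω|mH] =ᵐ[P] 0})
    (hL2 : L 1 = {g | ∃ Γs : Ω → EuclideanSpace ℝ (Fin p),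
      StronglyMeasurable[mG] Γs ∧ Integrable Γs P ∧ (∫ ω, Γs ω ∂P) = 0 ∧
      MemLp g 2 P ∧ g = fun ω => (W ω * ε ω) • Γs ω})
    (hL3 : L 2 = {g | ∃ Γs : Ω → EuclideanSpace ℝ (Fin p),
      StronglyMeasurable[mG] Γs ∧ MemLp Γs 2 P ∧ (∫ ω, Γs ω ∂P) = 0 ∧
      MemLp g 2 P ∧
      g = fun ω => Γs ω - ((Tstar * T ω)⁻¹ * (W ω * ε ω)) • (∫ ω', Q ω' • Γs ω' ∂P)})
    (hL4 : L 3 = {g | ∃ c : EuclideanSpace ℝ (Fin p), g = fun ω => ε₀ ω • c})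
    (hL5 : L 4 = {Γ | MemLp Γ 2 P ∧ (∫ ω, Γ ω ∂P) = 0 ∧
      StronglyMeasurable[mH] Γ ∧ P[Γ|mG] =ᵐ[P] 0})
    -- the candidate influence function multiplier c
    (c : Ω → EuclideanSpace ℝ (Fin p)) (hc : StronglyMeasurable[mH] c)
    (hcint : Integrable c P) (hcG : P[c|mG] =ᵐ[P] 0)
    (hcε : MemLp (fun ω => ε ω • c ω) 2 P) :
    ∀ i : Fin 5, ∀ h ∈ L i, ∫ ω, ⟪ε ω • c ω, h ω⟫ ∂P = 0 := by
  have hGF : mG ≤ mΩ := hGH.trans hHF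
  have hεInt : Integrable ε P := hε.integrable one_le_two
  have hε2Int : Integrable (fun ω => ε ω ^ 2) P := by
    simpa [pow_two] using aux_integrable_mul hε hε
  have hWH : StronglyMeasurable[mH] W := by
    rw [hW]; exact (stronglyMeasurable_condExp.measurable.inv).stronglyMeasurable
  have hWfacts : ∀ᵐ ω ∂P, 0 < W ω ∧ W ω ≤ c₁⁻¹ ∧ c₂⁻¹ ≤ W ω ∧
      W ω * (P[fun ω => ε ω ^ 2|mH]) ω = 1 := by
    filter_upwards [hvar] with ω hω
    obtain ⟨h1, h2⟩ := hω
    have hVpos : 0 < (P[fun ω => ε ω ^ 2|mH]) ω := lt_of_lt_of_le hc₁ h1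
    have hWω : W ω = ((P[fun ω => ε ω ^ 2|mH]) ω)⁻¹ := by rw [hW]
    refine ⟨by rw [hWω]; positivity, ?_, ?_, ?_⟩
    · rw [hWω]; exact inv_anti₀ hc₁ h1
    · rw [hWω]; exact inv_anti₀ hVpos h2
    · rw [hWω]; exact inv_mul_cancel₀ (ne_of_gt hVpos)
  have hc₂pos : 0 < c₂ := by
    obtain ⟨ω, h1, h2⟩ := hvar.exists
    linarith
  have hWtop : MemLp W ∞ P := by
    refine memLp_top_of_bound (hWH.mono hHF).aestronglyMeasurable c₁⁻¹ ?_
    filter_upwards [hWfacts] with ω h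
    rw [Real.norm_eq_abs, abs_of_pos h.1]
    exact h.2.1
  have hWInt : Integrable W P := hWtop.integrable le_top
  have hWε2 : MemLp (fun ω => W ω * ε ω) 2 P := hε.smul hWtop
  have hTmeasG : StronglyMeasurable[mG] T := by rw [hT]; exact stronglyMeasurable_condExp
  have hTfacts : ∀ᵐ ω ∂P, c₂⁻¹ ≤ T ω := by
    have hle : (fun _ : Ω => c₂⁻¹) ≤ᵐ[P] W := by
      filter_upwards [hWfacts] with ω h
      exact h.2.2.1
    have h1 := condExp_mono (m := mG) (μ := P) (integrable_const c₂⁻¹) hWInt hle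
    have h2 := condExp_const (μ := P) hGF c₂⁻¹
    rw [hT]
    filter_upwards [h1] with ω h
    rw [h2] at h
    exact h
  have hTinvfacts : ∀ᵐ ω ∂P, 0 ≤ (T ω)⁻¹ ∧ (T ω)⁻¹ ≤ c₂ := by
    filter_upwards [hTfacts] with ω h
    have hTpos : 0 < T ω := lt_of_lt_of_le (by positivity) h
    refine ⟨by positivity, ?_⟩
    calc (T ω)⁻¹ ≤ (c₂⁻¹)⁻¹ := inv_anti₀ (by positivity) h
      _ = c₂ := inv_inv c₂
  -- coordinates
  have hcoord : ∀ (x : EuclideanSpace ℝ (Fin p)) (i : Fin p),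
      ⟪EuclideanSpace.single i (1 : ℝ), x⟫ = x i := fun x i => by
    simp [EuclideanSpace.inner_single_left]
  have coordMeas : ∀ {m' : MeasurableSpace Ω} {f : Ω → EuclideanSpace ℝ (Fin p)},
      StronglyMeasurable[m'] f → ∀ i, StronglyMeasurable[m'] fun ω => f ω i :=
    fun {m'} {f} hf i => (EuclideanSpace.proj (𝕜 := ℝ) i).continuous.comp_stronglyMeasurable hf
  have coord2 : ∀ {f : Ω → EuclideanSpace ℝ (Fin p)}, MemLp f 2 P →
      ∀ i, MemLp (fun ω => f ω i) 2 P := fun {f} hf i => by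
    have h : MemLp (fun ω => ⟪EuclideanSpace.single i (1 : ℝ), f ω⟫) 2 P :=
      hf.const_inner (EuclideanSpace.single i (1 : ℝ))
    have heq : (fun ω => ⟪EuclideanSpace.single i (1 : ℝ), f ω⟫) = fun ω => f ω i :=
      funext fun ω => hcoord _ i
    rwa [heq] at h
  have hciMeas : ∀ i, StronglyMeasurable[mH] fun ω => c ω i := coordMeas hc
  have hciG : ∀ i, P[fun ω => c ω i|mG] =ᵐ[P] 0 := fun i => by
    have h := aux_condexp_inner_const hGF hcint hcG (EuclideanSpace.single i (1 : ℝ))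
    have heq : (fun ω => ⟪EuclideanSpace.single i (1 : ℝ), c ω⟫) = fun ω => c ω i :=
      funext fun ω => hcoord _ i
    rwa [heq] at h
  have hεci2 : ∀ i, MemLp (fun ω => ε ω * c ω i) 2 P := fun i => by
    simpa [PiLp.smul_apply, smul_eq_mul] using coord2 hcε i
  -- the ξ machinery
  have hξInt : ∀ i, Integrable (fun ω => W ω * ε ω ^ 2 * c ω i) P := fun i =>
    (aux_integrable_mul hWε2 (hεci2 i)).congr
      (Filter.Eventually.of_forall fun ω => by ring)
  have hξH : ∀ i, P[fun ω => W ω * ε ω ^ 2 * c ω i|mH] =ᵐ[P] fun ω => c ω i := fun i => by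
    have hfmeas : StronglyMeasurable[mH] fun ω => W ω * c ω i := hWH.mul (hciMeas i)
    have heq : (fun ω => W ω * ε ω ^ 2 * c ω i)
        = (fun ω => W ω * c ω i) * fun ω => ε ω ^ 2 := by
      funext ω; simp only [Pi.mul_apply]; ring
    have hint : Integrable ((fun ω => W ω * c ω i) * fun ω => ε ω ^ 2) P := by
      rw [← heq]; exact hξInt i
    have h1 := condExp_mul_of_stronglyMeasurable_left (μ := P) hfmeas hint hε2Int
    rw [heq]
    refine h1.trans ?_
    filter_upwards [hWfacts] with ω h
    simp only [Pi.mul_apply]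
    calc W ω * c ω i * (P[fun ω => ε ω ^ 2|mH]) ω
        = W ω * (P[fun ω => ε ω ^ 2|mH]) ω * c ω i := by ring
      _ = c ω i := by rw [h.2.2.2, one_mul]
  have hξG : ∀ i, P[fun ω => W ω * ε ω ^ 2 * c ω i|mG] =ᵐ[P] 0 := fun i =>
    (condExp_condExp_of_le hGH hHF).symm.trans ((condExp_congr_ae (hξH i)).trans (hciG i))
  have keyG : ∀ (i : Fin p) (a : Ω → ℝ), StronglyMeasurable[mG] a →
      Integrable (fun ω => a ω * (W ω * ε ω ^ 2 * c ω i)) P →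
      ∫ ω, a ω * (W ω * ε ω ^ 2 * c ω i) ∂P = 0 := fun i a ha hint =>
    aux_integral_mul_eq_zero hGF ha (hξInt i) (hξG i) hint
  have keyH : ∀ b : Ω → ℝ, StronglyMeasurable[mH] b →
      Integrable (fun ω => b ω * ε ω) P → ∫ ω, b ω * ε ω ∂P = 0 := fun b hb hint =>
    aux_integral_mul_eq_zero hHF hb hεInt hεH hint
  have intbd : ∀ (i : Fin p) (a : Ω → ℝ) (C : ℝ), AEStronglyMeasurable[mΩ] a P →
      (∀ᵐ ω ∂P, |a ω| ≤ C) →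
      Integrable (fun ω => a ω * (W ω * ε ω ^ 2 * c ω i)) P := fun i a C hameas hbd => by
    refine ((hξInt i).norm.const_mul C).mono' (hameas.mul (hξInt i).1) ?_
    filter_upwards [hbd] with ω h
    have heq : ‖a ω * (W ω * ε ω ^ 2 * c ω i)‖ = |a ω| * ‖W ω * ε ω ^ 2 * c ω i‖ := by
      rw [Real.norm_eq_abs, Real.norm_eq_abs, abs_mul]
    rw [heq]
    exact mul_le_mul_of_nonneg_right h (norm_nonneg _)
  -- Case 1
  have case0 : ∀ h ∈ L 0, ∫ ω, ⟪ε ω • c ω, h ω⟫ ∂P = 0 := by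
    rw [hL1]
    rintro h ⟨hΓ2, -, -, hΓε⟩
    have hi2 : ∀ i, MemLp (fun ω => h ω i) 2 P := coord2 hΓ2
    have hgint : ∀ i, Integrable (fun ω => ε ω * h ω i) P := fun i =>
      aux_integrable_mul hε (hi2 i)
    have hprod : ∀ i, Integrable (fun ω => c ω i * (ε ω * h ω i)) P := fun i =>
      (aux_integrable_mul (hεci2 i) (hi2 i)).congr
        (Filter.Eventually.of_forall fun ω => by ring)
    have hcond : ∀ i, P[fun ω => ε ω * h ω i|mH] =ᵐ[P] 0 := fun i => by
      have h1 := aux_condexp_inner_const hHF (aux_integrable_smul hε hΓ2) hΓε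
        (EuclideanSpace.single i (1 : ℝ))
      have heq : (fun ω => ⟪EuclideanSpace.single i (1 : ℝ), ε ω • h ω⟫)
          = fun ω => ε ω * h ω i := funext fun ω => by
        rw [hcoord]; simp [PiLp.smul_apply]
      rwa [heq] at h1
    have hstep : ∫ ω, ⟪ε ω • c ω, h ω⟫ ∂P = ∑ i, ∫ ω, c ω i * (ε ω * h ω i) ∂P := by
      rw [← integral_finset_sum _ fun i _ => hprod i]
      refine integral_congr_ae (Filter.Eventually.of_forall fun ω => ?_)
      simp only [PiLp.inner_apply, RCLike.inner_apply, conj_trivial, PiLp.smul_apply,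
        smul_eq_mul]
      exact Finset.sum_congr rfl fun i _ => by ring
    rw [hstep]
    exact Finset.sum_eq_zero fun i _ =>
      aux_integral_mul_eq_zero hHF (hciMeas i) (hgint i) (hcond i) (hprod i)
  -- Case 2
  have case1 : ∀ h ∈ L 1, ∫ ω, ⟪ε ω • c ω, h ω⟫ ∂P = 0 := by
    rw [hL2]
    rintro h ⟨Γs, hΓsMeas, hΓsInt, -, hg2, rfl⟩
    have hgi2 : ∀ i, MemLp (fun ω => W ω * ε ω * Γs ω i) 2 P := fun i => by
      simpa [PiLp.smul_apply, smul_eq_mul, mul_assoc] using coord2 hg2 i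
    have hprod : ∀ i, Integrable (fun ω => Γs ω i * (W ω * ε ω ^ 2 * c ω i)) P := fun i =>
      (aux_integrable_mul (hgi2 i) (hεci2 i)).congr
        (Filter.Eventually.of_forall fun ω => by ring)
    have hstep : ∫ ω, ⟪ε ω • c ω, (W ω * ε ω) • Γs ω⟫ ∂P
        = ∑ i, ∫ ω, Γs ω i * (W ω * ε ω ^ 2 * c ω i) ∂P := by
      rw [← integral_finset_sum _ fun i _ => hprod i]
      refine integral_congr_ae (Filter.Eventually.of_forall fun ω => ?_)
      simp only [PiLp.inner_apply, RCLike.inner_apply, conj_trivial, PiLp.smul_apply,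
        smul_eq_mul]
      exact Finset.sum_congr rfl fun i _ => by ring
    rw [hstep]
    exact Finset.sum_eq_zero fun i _ => keyG i _ (coordMeas hΓsMeas i) (hprod i)
  -- Case 3
  have case2 : ∀ h ∈ L 2, ∫ ω, ⟪ε ω • c ω, h ω⟫ ∂P = 0 := by
    rw [hL3]
    rintro h ⟨Γs, hΓsMeas, hΓs2, -, -, rfl⟩
    set v : EuclideanSpace ℝ (Fin p) := ∫ ω', Q ω' • Γs ω' ∂P with hv
    have haMeas : StronglyMeasurable[mG] fun ω => (Tstar * T ω)⁻¹ :=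
      ((stronglyMeasurable_const.mul hTmeasG).measurable.inv).stronglyMeasurable
    have habd : ∀ᵐ ω ∂P, |(Tstar * T ω)⁻¹| ≤ |Tstar⁻¹| * c₂ := by
      filter_upwards [hTinvfacts] with ω hTi
      rw [mul_inv, abs_mul]
      refine mul_le_mul_of_nonneg_left ?_ (abs_nonneg _)
      rw [abs_of_nonneg hTi.1]; exact hTi.2
    have hφtop : MemLp (fun ω => (Tstar * T ω)⁻¹ * W ω) ∞ P := by
      refine memLp_top_of_bound
        (((haMeas.mono hGF).mul (hWH.mono hHF)).aestronglyMeasurable)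
        (|Tstar⁻¹| * c₂ * c₁⁻¹) ?_
      filter_upwards [habd, hWfacts] with ω h1 h2
      rw [Real.norm_eq_abs, abs_mul]
      have h3 : |W ω| ≤ c₁⁻¹ := by rw [abs_of_pos h2.1]; exact h2.2.1
      exact mul_le_mul h1 h3 (abs_nonneg _) (mul_nonneg (abs_nonneg _) hc₂pos.le)
    have hs2 : MemLp (fun ω => (Tstar * T ω)⁻¹ * (W ω * ε ω)) 2 P := by
      have h1 := hε.smul hφtop (r := 2)
      exact h1.ae_eq (Filter.Eventually.of_forall fun ω => (mul_assoc _ _ _))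
    have hsv2 : MemLp (fun ω => ((Tstar * T ω)⁻¹ * (W ω * ε ω)) • v) 2 P :=
      MemLp.smul (memLp_const (p := ∞) v) hs2
    have hint1 : Integrable (fun ω => ⟪ε ω • c ω, Γs ω⟫) P := aux_integrable_inner hcε hΓs2
    have hint2 : Integrable
        (fun ω => ⟪ε ω • c ω, ((Tstar * T ω)⁻¹ * (W ω * ε ω)) • v⟫) P :=
      aux_integrable_inner hcε hsv2
    have hsplit : ∫ ω, ⟪ε ω • c ω, Γs ω - ((Tstar * T ω)⁻¹ * (W ω * ε ω)) • v⟫ ∂P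
        = ∫ ω, ⟪ε ω • c ω, Γs ω⟫ ∂P
          - ∫ ω, ⟪ε ω • c ω, ((Tstar * T ω)⁻¹ * (W ω * ε ω)) • v⟫ ∂P := by
      rw [← integral_sub hint1 hint2]
      exact integral_congr_ae (Filter.Eventually.of_forall fun ω => inner_sub_right _ _ _)
    rw [hsplit]
    have hA : ∫ ω, ⟪ε ω • c ω, Γs ω⟫ ∂P = 0 := by
      have hΓsi2 : ∀ i, MemLp (fun ω => Γs ω i) 2 P := coord2 hΓs2
      have hprod : ∀ i, Integrable (fun ω => c ω i * Γs ω i * ε ω) P := fun i =>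
        (aux_integrable_mul (hεci2 i) (hΓsi2 i)).congr
          (Filter.Eventually.of_forall fun ω => by ring)
      have hstep : ∫ ω, ⟪ε ω • c ω, Γs ω⟫ ∂P = ∑ i, ∫ ω, c ω i * Γs ω i * ε ω ∂P := by
        rw [← integral_finset_sum _ fun i _ => hprod i]
        refine integral_congr_ae (Filter.Eventually.of_forall fun ω => ?_)
        simp only [PiLp.inner_apply, RCLike.inner_apply, conj_trivial, PiLp.smul_apply,
          smul_eq_mul]
        exact Finset.sum_congr rfl fun i _ => by ring
      rw [hstep]
      exact Finset.sum_eq_zero fun i _ => keyH (fun ω => c ω i * Γs ω i)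
        ((hciMeas i).mul (coordMeas (hΓsMeas.mono hGH) i))
        ((hprod i).congr (Filter.Eventually.of_forall fun ω => by ring))
    have hB : ∫ ω, ⟪ε ω • c ω, ((Tstar * T ω)⁻¹ * (W ω * ε ω)) • v⟫ ∂P = 0 := by
      have hintA : ∀ i, Integrable
          (fun ω => (Tstar * T ω)⁻¹ * (W ω * ε ω ^ 2 * c ω i)) P := fun i =>
        intbd i _ _ ((haMeas.mono hGF).aestronglyMeasurable) habd
      have hprod : ∀ i, Integrable
          (fun ω => (Tstar * T ω)⁻¹ * (W ω * ε ω ^ 2 * c ω i) * v i) P := fun i =>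
        (hintA i).mul_const (v i)
      have hstep : ∫ ω, ⟪ε ω • c ω, ((Tstar * T ω)⁻¹ * (W ω * ε ω)) • v⟫ ∂P
          = ∑ i, ∫ ω, (Tstar * T ω)⁻¹ * (W ω * ε ω ^ 2 * c ω i) * v i ∂P := by
        rw [← integral_finset_sum _ fun i _ => hprod i]
        refine integral_congr_ae (Filter.Eventually.of_forall fun ω => ?_)
        simp only [PiLp.inner_apply, RCLike.inner_apply, conj_trivial, PiLp.smul_apply,
          smul_eq_mul]
        exact Finset.sum_congr rfl fun i _ => by ring
      rw [hstep]
      refine Finset.sum_eq_zero fun i _ => ?_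
      rw [integral_mul_const, keyG i _ haMeas (hintA i), zero_mul]
    rw [hA, hB, sub_zero]
  -- Case 4
  have case3 : ∀ h ∈ L 3, ∫ ω, ⟪ε ω • c ω, h ω⟫ ∂P = 0 := by
    rw [hL4]
    rintro h ⟨k, rfl⟩
    have hTiMeas : StronglyMeasurable[mG] fun ω => (T ω)⁻¹ := (hTmeasG.measurable.inv).stronglyMeasurable
    have hTibd : ∀ᵐ ω ∂P, |(T ω)⁻¹| ≤ c₂ := by
      filter_upwards [hTinvfacts] with ω h1
      rw [abs_of_nonneg h1.1]; exact h1.2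
    have hintA : ∀ i, Integrable (fun ω => (T ω)⁻¹ * (W ω * ε ω ^ 2 * c ω i)) P := fun i =>
      intbd i _ c₂ ((hTiMeas.mono hGF).aestronglyMeasurable) hTibd
    have hintB : ∀ i, Integrable (fun ω => Q ω * c ω i * ε ω) P := fun i =>
      (aux_integrable_mul hQ2 (hεci2 i)).congr (Filter.Eventually.of_forall fun ω => by ring)
    have hprod : ∀ i, Integrable (fun ω =>
        ((T ω)⁻¹ * (W ω * ε ω ^ 2 * c ω i) + Q ω * c ω i * ε ω) * k i) P := fun i =>
      ((hintA i).add (hintB i)).mul_const _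
    have hstep : ∫ ω, ⟪ε ω • c ω, ε₀ ω • k⟫ ∂P = ∑ i, ∫ ω,
        ((T ω)⁻¹ * (W ω * ε ω ^ 2 * c ω i) + Q ω * c ω i * ε ω) * k i ∂P := by
      rw [← integral_finset_sum _ fun i _ => hprod i]
      refine integral_congr_ae (Filter.Eventually.of_forall fun ω => ?_)
      rw [hε₀]
      simp only [PiLp.inner_apply, RCLike.inner_apply, conj_trivial, PiLp.smul_apply,
        smul_eq_mul]
      exact Finset.sum_congr rfl fun i _ => by ring
    rw [hstep]
    refine Finset.sum_eq_zero fun i _ => ?_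
    rw [integral_mul_const, integral_add (hintA i) (hintB i),
      keyG i _ hTiMeas (hintA i),
      keyH (fun ω => Q ω * c ω i) ((hQmeas.mono hGH).mul (hciMeas i)) (hintB i), add_zero, zero_mul]
  -- Case 5
  have case4 : ∀ h ∈ L 4, ∫ ω, ⟪ε ω • c ω, h ω⟫ ∂P = 0 := by
    rw [hL5]
    rintro h ⟨hΓ2, -, hΓmeas, -⟩
    have hbMeas : StronglyMeasurable[mH] fun ω => ⟪c ω, h ω⟫ :=
      Continuous.comp_stronglyMeasurable
        (g := fun q : EuclideanSpace ℝ (Fin p) × EuclideanSpace ℝ (Fin p) => ⟪q.1, q.2⟫)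
        (f := fun ω => (c ω, h ω)) continuous_inner (hc.prodMk hΓmeas)
    have hint : Integrable (fun ω => ⟪c ω, h ω⟫ * ε ω) P :=
      (aux_integrable_inner hcε hΓ2).congr (Filter.Eventually.of_forall fun ω => by
        simp only [real_inner_smul_left]; ring)
    have hstep : ∫ ω, ⟪ε ω • c ω, h ω⟫ ∂P = ∫ ω, ⟪c ω, h ω⟫ * ε ω ∂P :=
      integral_congr_ae (Filter.Eventually.of_forall fun ω => by
        simp only [real_inner_smul_left]; ring)
    rw [hstep]
    exact keyH _ hbMeas hint
  intro i
  fin_cases i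
  · exact case0
  · exact case1
  · exact case2
  · exact case3
  · exact case4
end

section
/- (Projection onto the influence-function space; key computation for Theorem 1 and Theorem S3.) Let M = {c·ε : c is ℋ-measurable ℝ^p-valued, E[c | 𝒢] = 0 a.s., c·ε ∈ H}. For B ∈ H, set R = E[B·ε | ℋ] and P_B = (R − T⁻¹·E[R·W | 𝒢])·W·ε, assuming R·W·ε ∈ H. Then: (i) the multiplier (R − T⁻¹·E[R·W | 𝒢])·W has 𝒢-conditional mean zero, so P_B ∈ M; (ii) B − P_B is orthogonal to every element of M, i.e., E[(B − P_B)ᵀ (c·ε)] = 0 for all admissible c. Hence P_B is the orthogonal projection of B onto (the closure of) M. -/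
open MeasureTheory
open scoped RealInnerProductSpace

section Aux

variable {Ω : Type*} {m mΩ : MeasurableSpace Ω} {μ : Measure Ω} {p : ℕ}

theorem my_condexp_clm {E F : Type*} [NormedAddCommGroup E] [NormedSpace ℝ E] [CompleteSpace E]
    [NormedAddCommGroup F] [NormedSpace ℝ F] [CompleteSpace F]
    (hm : m ≤ mΩ) [IsFiniteMeasure μ] (L : E →L[ℝ] F) {f : Ω → E} (hf : Integrable f μ) :
    μ[fun ω => L (f ω)|m] =ᵐ[μ] fun ω => L ((μ[f|m]) ω) := by
  haveI : SigmaFinite (μ.trim hm) := by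
    have : IsFiniteMeasure (μ.trim hm) := isFiniteMeasure_trim hm
    infer_instance
  refine (ae_eq_condExp_of_forall_setIntegral_eq hm (L.integrable_comp hf)
    (fun s _ _ => (L.integrable_comp integrable_condExp).integrableOn)
    (fun s hs hμs => ?_)
    ((L.continuous.comp_stronglyMeasurable stronglyMeasurable_condExp).aestronglyMeasurable)).symm
  rw [L.integral_comp_comm integrable_condExp.integrableOn,
    setIntegral_condExp hm hf hs, ← L.integral_comp_comm hf.integrableOn]

theorem my_coord_ae {g₁ g₂ : Ω → EuclideanSpace ℝ (Fin p)}
    (h : ∀ i, (fun ω => g₁ ω i) =ᵐ[μ] fun ω => g₂ ω i) : g₁ =ᵐ[μ] g₂ := by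
  filter_upwards [ae_all_iff.2 h] with ω hω
  exact PiLp.ext hω

theorem my_coord_sm {v : Ω → EuclideanSpace ℝ (Fin p)} (hv : StronglyMeasurable[m] v) (i : Fin p) :
    StronglyMeasurable[m] fun ω => v ω i :=
  (EuclideanSpace.proj (𝕜 := ℝ) i).continuous.comp_stronglyMeasurable hv

/-- pull-out: for `v` an `m`-measurable vector and `f` a scalar, `μ[f • v|m] = μ[f|m] • v`. -/
theorem my_pullout (hm : m ≤ mΩ) [IsFiniteMeasure μ] {f : Ω → ℝ}
    {v : Ω → EuclideanSpace ℝ (Fin p)} (hv : StronglyMeasurable[m] v)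
    (hf : Integrable f μ) (hfv : Integrable (fun ω => f ω • v ω) μ) :
    μ[fun ω => f ω • v ω|m] =ᵐ[μ] fun ω => (μ[f|m]) ω • v ω := by
  refine my_coord_ae fun i => ?_
  have h1 : (fun ω => (EuclideanSpace.proj (𝕜 := ℝ) i) ((fun ω => f ω • v ω) ω))
      = (fun ω => v ω i) * f := by
    funext ω; simp [mul_comm]
  have h2 : Integrable ((fun ω => v ω i) * f) μ := by
    rw [← h1]; exact (EuclideanSpace.proj (𝕜 := ℝ) i).integrable_comp hfv
  have h3 := my_condexp_clm hm (EuclideanSpace.proj (𝕜 := ℝ) i) hfv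
  rw [h1] at h3
  have h4 := condExp_mul_of_stronglyMeasurable_left (μ := μ) (my_coord_sm hv i) h2 hf
  filter_upwards [h3.symm.trans h4] with ω hω
  simpa [mul_comm] using hω

/-- adjoint-type identity: `∫ g f = ∫ g E[f|m]` for `g` `m`-measurable. -/
theorem my_swap (hm : m ≤ mΩ) [IsFiniteMeasure μ] {f g : Ω → ℝ}
    (hg : StronglyMeasurable[m] g) (hf : Integrable f μ)
    (hfg : Integrable (g * f) μ) :
    ∫ ω, g ω * f ω ∂μ = ∫ ω, g ω * (μ[f|m]) ω ∂μ := by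
  haveI : SigmaFinite (μ.trim hm) := by
    have : IsFiniteMeasure (μ.trim hm) := isFiniteMeasure_trim hm
    infer_instance
  have h1 : ∫ ω, (g * f) ω ∂μ = ∫ ω, (μ[g * f|m]) ω ∂μ :=
    (integral_condExp hm (f := g * f)).symm
  have h2 := condExp_mul_of_stronglyMeasurable_left (μ := μ) hg hfg hf
  calc ∫ ω, g ω * f ω ∂μ = ∫ ω, (μ[g * f|m]) ω ∂μ := h1
    _ = ∫ ω, g ω * (μ[f|m]) ω ∂μ := integral_congr_ae h2

/-- monotone-convergence based integrability from truncated bounds -/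
theorem my_trunc_integrable (hm : m ≤ mΩ) [IsFiniteMeasure μ] {ψ φ : Ω → ℝ}
    (hψ : Integrable ψ μ) (hψ0 : 0 ≤ᵐ[μ] ψ)
    (hφm : StronglyMeasurable[m] φ) (hφ0 : ∀ ω, 0 ≤ φ ω) (K : ℝ)
    (hK : ∀ n : ℕ, ∫ ω, ψ ω * min (φ ω) n ∂μ ≤ K) :
    Integrable (fun ω => ψ ω * φ ω) μ := by
  have hφsm : AEStronglyMeasurable φ μ := (hφm.mono hm).aestronglyMeasurable
  have hfn : ∀ n : ℕ, Integrable (fun ω => ψ ω * min (φ ω) n) μ := by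
    intro n
    have : Integrable ((fun ω => min (φ ω) n) * ψ) μ := by
      refine hψ.bdd_mul
        (((hφm.mono hm).measurable.min measurable_const).stronglyMeasurable).aestronglyMeasurable
        (c := n) (Filter.Eventually.of_forall fun ω => ?_)
      rw [Real.norm_eq_abs, abs_of_nonneg (le_min (hφ0 ω) (Nat.cast_nonneg n))]
      exact min_le_right _ _
    exact this.congr (Filter.Eventually.of_forall fun ω => mul_comm _ _)
  have hmono : ∀ᵐ ω ∂μ, Monotone fun n : ℕ =>
      ENNReal.ofReal (ψ ω * min (φ ω) n) := by
    filter_upwards [hψ0] with ω hω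
    intro a b hab
    exact ENNReal.ofReal_le_ofReal (mul_le_mul_of_nonneg_left
      (min_le_min le_rfl (Nat.cast_le.2 hab)) hω)
  have hsup : ∀ᵐ ω ∂μ, (⨆ n : ℕ, ENNReal.ofReal (ψ ω * min (φ ω) n))
      = ENNReal.ofReal (ψ ω * φ ω) := by
    filter_upwards [hψ0] with ω hω
    refine le_antisymm (iSup_le fun n => ENNReal.ofReal_le_ofReal
      (mul_le_mul_of_nonneg_left (min_le_left _ _) hω)) ?_
    refine le_iSup_of_le ⌈φ ω⌉₊ ?_
    rw [min_eq_left (Nat.le_ceil _)]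
  have hlin : ∫⁻ ω, ENNReal.ofReal (ψ ω * φ ω) ∂μ ≤ ENNReal.ofReal K := by
    calc ∫⁻ ω, ENNReal.ofReal (ψ ω * φ ω) ∂μ
        = ∫⁻ ω, ⨆ n : ℕ, ENNReal.ofReal (ψ ω * min (φ ω) n) ∂μ :=
          (lintegral_congr_ae hsup).symm
      _ = ⨆ n : ℕ, ∫⁻ ω, ENNReal.ofReal (ψ ω * min (φ ω) n) ∂μ :=
          lintegral_iSup' (fun n => ((hfn n).aestronglyMeasurable.aemeasurable).ennreal_ofReal)
            hmono
      _ ≤ ENNReal.ofReal K := by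
          refine iSup_le fun n => ?_
          have hnn : 0 ≤ᵐ[μ] fun ω => ψ ω * min (φ ω) n := by
            filter_upwards [hψ0] with ω hω
            exact mul_nonneg hω (le_min (hφ0 ω) (Nat.cast_nonneg n))
          rw [← ofReal_integral_eq_lintegral_ofReal (hfn n) hnn]
          exact ENNReal.ofReal_le_ofReal (hK n)
  have hnn : 0 ≤ᵐ[μ] fun ω => ψ ω * φ ω := by
    filter_upwards [hψ0] with ω hω
    exact mul_nonneg hω (hφ0 ω)
  refine ⟨hψ.aestronglyMeasurable.mul hφsm, ?_⟩
  rw [hasFiniteIntegral_iff_ofReal hnn]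
  exact lt_of_le_of_lt hlin ENNReal.ofReal_lt_top

theorem my_memℒp_condexp_two (hm : m ≤ mΩ) [IsFiniteMeasure μ]
    {f : Ω → EuclideanSpace ℝ (Fin p)} (hf : MemLp f 2 μ) :
    MemLp (μ[f|m]) 2 μ := by
  haveI : SigmaFinite (μ.trim hm) := by
    have : IsFiniteMeasure (μ.trim hm) := isFiniteMeasure_trim hm
    infer_instance
  set g := (condExpL2 (EuclideanSpace ℝ (Fin p)) ℝ hm (hf.toLp f) :
    Lp (EuclideanSpace ℝ (Fin p)) 2 μ) with hg
  have hgmem : MemLp (g : Ω → EuclideanSpace ℝ (Fin p)) 2 μ := Lp.memLp _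
  have hfi : Integrable f μ := hf.integrable one_le_two
  have heq : (g : Ω → EuclideanSpace ℝ (Fin p)) =ᵐ[μ] μ[f|m] := by
    refine ae_eq_condExp_of_forall_setIntegral_eq hm hfi
      (fun s _ _ => (hgmem.integrable one_le_two).integrableOn)
      (fun s hs hμs => ?_) ?_
    · rw [integral_condExpL2_eq hm (hf.toLp f) hs hμs.ne]
      exact setIntegral_congr_ae (hm s hs) ((hf.coeFn_toLp).mono fun ω h _ => h)
    · exact lpMeas.aestronglyMeasurable _
  exact hgmem.ae_eq heq

theorem my_mul_int {f g : Ω → ℝ} (hf : MemLp f 2 μ) (hg : MemLp g 2 μ) :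
    Integrable (fun ω => f ω * g ω) μ := by
  have h : MemLp (f • g) 1 μ := by
    exact MemLp.smul (φ := f) hg hf
  exact memLp_one_iff_integrable.1 h

theorem my_inner_int {u v : Ω → EuclideanSpace ℝ (Fin p)}
    (hu : MemLp u 2 μ) (hv : MemLp v 2 μ) :
    Integrable (fun ω => ⟪u ω, v ω⟫) μ := by
  refine Integrable.mono' (my_mul_int hu.norm hv.norm) (hu.1.inner hv.1) ?_
  exact Filter.Eventually.of_forall fun ω =>
    (norm_inner_le_norm (𝕜 := ℝ) (u ω) (v ω))

theorem my_coord_memℒp {f : Ω → EuclideanSpace ℝ (Fin p)} (hf : MemLp f 2 μ) (i : Fin p) :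
    MemLp (fun ω => f ω i) 2 μ :=
  (EuclideanSpace.proj (𝕜 := ℝ) i).comp_memLp' hf

end Aux

set_option maxHeartbeats 2000000 in
/-- projection onto the influence-function space `M = Λ^⊥`: for
`B ∈ H`, with `R = E[B·ε | ℋ]` and `P_B = (R − T⁻¹·E[R·W | 𝒢])·W·ε`, the multiplier of
`P_B` has `𝒢`-conditional mean zero (so `P_B ∈ M`), and `B − P_B` is orthogonal to every
element of `M`; hence `P_B` is the orthogonal projection of `B` onto (the closure of) `M`. -/
theorem projection_onto_influence_function_space
    {Ω : Type*} {mΩ : MeasurableSpace Ω} (P : Measure Ω) [IsProbabilityMeasure P]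
    {p : ℕ} {mG mH : MeasurableSpace Ω} (hGH : mG ≤ mH) (hHF : mH ≤ mΩ)
    (ε : Ω → ℝ) (hε : MemLp ε 2 P) (hεH : P[ε|mH] =ᵐ[P] 0)
    (c₁ c₂ : ℝ) (hc₁ : 0 < c₁)
    (hvar : ∀ᵐ ω ∂P, c₁ ≤ (P[fun ω => ε ω ^ 2|mH]) ω ∧ (P[fun ω => ε ω ^ 2|mH]) ω ≤ c₂)
    (W T : Ω → ℝ)
    (hW : W = fun ω => ((P[fun ω => ε ω ^ 2|mH]) ω)⁻¹)
    (hT : T = P[W|mG])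
    -- the influence-function space M
    (M : Set (Ω → EuclideanSpace ℝ (Fin p)))
    (hM : M = {g | ∃ c : Ω → EuclideanSpace ℝ (Fin p),
      StronglyMeasurable[mH] c ∧ Integrable c P ∧ P[c|mG] =ᵐ[P] 0 ∧
      MemLp g 2 P ∧ g = fun ω => ε ω • c ω})
    -- B ∈ H and the projection candidate
    (B : Ω → EuclideanSpace ℝ (Fin p)) (hB : MemLp B 2 P) (hB0 : (∫ ω, B ω ∂P) = 0)
    (R : Ω → EuclideanSpace ℝ (Fin p)) (hR : R = P[fun ω => ε ω • B ω|mH])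
    (hRWε : MemLp (fun ω => (W ω * ε ω) • R ω) 2 P)
    (PB : Ω → EuclideanSpace ℝ (Fin p))
    (hPB : PB = fun ω =>
      (W ω * ε ω) • (R ω - (T ω)⁻¹ • (P[fun ω => W ω • R ω|mG]) ω)) :
    -- (i) the multiplier has 𝒢-conditional mean zero, and P_B ∈ M
    (P[fun ω => W ω • (R ω - (T ω)⁻¹ • (P[fun ω => W ω • R ω|mG]) ω)|mG] =ᵐ[P] 0) ∧
    PB ∈ M ∧
    -- (ii) B − P_B is orthogonal to every element of M
    (∀ g ∈ M, ∫ ω, ⟪B ω - PB ω, g ω⟫ ∂P = 0) := by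
  have hGF : mG ≤ mΩ := hGH.trans hHF
  haveI hsfH : SigmaFinite (P.trim hHF) := by
    have : IsFiniteMeasure (P.trim hHF) := isFiniteMeasure_trim hHF
    infer_instance
  haveI hsfG : SigmaFinite (P.trim hGF) := by
    have : IsFiniteMeasure (P.trim hGF) := isFiniteMeasure_trim hGF
    infer_instance
  set κ : Ω → ℝ := P[fun ω => ε ω ^ 2|mH] with hκdef
  have hε2int : Integrable (fun ω => ε ω ^ 2) P := hε.integrable_sq
  have hκint : Integrable κ P := integrable_condExp
  have hκsm : StronglyMeasurable[mH] κ := stronglyMeasurable_condExp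
  have hc₂ : 0 < c₂ := by
    obtain ⟨ω, h1, h2⟩ := hvar.exists
    linarith
  -- bounds on W
  have hWb : ∀ᵐ ω ∂P, c₂⁻¹ ≤ W ω ∧ W ω ≤ c₁⁻¹ := by
    filter_upwards [hvar] with ω hω
    rw [hW]
    have hκpos : 0 < κ ω := lt_of_lt_of_le hc₁ hω.1
    exact ⟨inv_anti₀ hκpos hω.2, inv_anti₀ hc₁ hω.1⟩
  have hWκ : ∀ᵐ ω ∂P, W ω * κ ω = 1 := by
    filter_upwards [hvar] with ω hω
    rw [hW]
    exact inv_mul_cancel₀ (ne_of_gt (lt_of_lt_of_le hc₁ hω.1))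
  have hWsm : StronglyMeasurable[mH] W := by
    rw [hW]; exact (hκsm.measurable.inv).stronglyMeasurable
  have hWint : Integrable W P := by
    refine Integrable.mono' (integrable_const c₁⁻¹)
      ((hWsm.mono hHF).aestronglyMeasurable) ?_
    filter_upwards [hWb] with ω hω
    rw [Real.norm_eq_abs, abs_of_nonneg (le_trans (inv_nonneg.2 hc₂.le) hω.1)]
    exact hω.2
  -- bounds on T
  have hTsm : StronglyMeasurable[mG] T := by rw [hT]; exact stronglyMeasurable_condExp
  have hTb : ∀ᵐ ω ∂P, c₂⁻¹ ≤ T ω ∧ T ω ≤ c₁⁻¹ := by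
    have h1 : (fun _ : Ω => c₂⁻¹) ≤ᵐ[P] W := by
      filter_upwards [hWb] with ω hω; exact hω.1
    have h2 : W ≤ᵐ[P] (fun _ : Ω => c₁⁻¹) := by
      filter_upwards [hWb] with ω hω; exact hω.2
    have hl := condExp_mono (m := mG) (integrable_const c₂⁻¹) hWint h1
    have hr := condExp_mono (m := mG) hWint (integrable_const c₁⁻¹) h2
    rw [condExp_const hGF] at hl hr
    filter_upwards [hl, hr] with ω h1ω h2ω
    rw [hT]
    exact ⟨h1ω, h2ω⟩
  have hRsm : StronglyMeasurable[mH] R := by rw [hR]; exact stronglyMeasurable_condExp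
  have hRint : Integrable R P := by rw [hR]; exact integrable_condExp
  -- key: if `ε • v ∈ L²` with `v` `ℋ`-measurable, then `v ∈ L²`
  have key : ∀ v : Ω → EuclideanSpace ℝ (Fin p), StronglyMeasurable[mH] v →
      MemLp (fun ω => ε ω • v ω) 2 P → MemLp v 2 P := by
    intro v hvsm hεv
    have hεv2 : Integrable (fun ω => ε ω ^ 2 * ‖v ω‖ ^ 2) P := by
      refine (hεv.norm.integrable_sq).congr ?_
      filter_upwards with ω
      rw [norm_smul, Real.norm_eq_abs, mul_pow, sq_abs]
    have hφsm : StronglyMeasurable[mH] fun ω => ‖v ω‖ ^ 2 :=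
      ((hvsm.measurable.norm).pow_const 2).stronglyMeasurable
    have hκ0 : 0 ≤ᵐ[P] κ := by
      filter_upwards [hvar] with ω hω
      simp only [Pi.zero_apply]
      linarith [hω.1]
    have hκφ : Integrable (fun ω => κ ω * ‖v ω‖ ^ 2) P := by
      refine my_trunc_integrable hHF hκint hκ0 hφsm (fun ω => by positivity)
        (∫ ω, ε ω ^ 2 * ‖v ω‖ ^ 2 ∂P) (fun n => ?_)
      have hminsm : StronglyMeasurable[mH] fun ω => min (‖v ω‖ ^ 2) (n : ℝ) :=
        (hφsm.measurable.min measurable_const).stronglyMeasurable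
      have hmin_int : Integrable ((fun ω => min (‖v ω‖ ^ 2) (n : ℝ)) * fun ω => ε ω ^ 2) P := by
        refine hε2int.bdd_mul (c := n) ((hminsm.mono hHF).aestronglyMeasurable) (Filter.Eventually.of_forall fun ω => ?_)
        rw [Real.norm_eq_abs, abs_of_nonneg (le_min (by positivity) (Nat.cast_nonneg n))]
        exact min_le_right _ _
      have hswap := my_swap hHF hminsm hε2int hmin_int
      calc ∫ ω, κ ω * min (‖v ω‖ ^ 2) (n : ℝ) ∂P
          = ∫ ω, min (‖v ω‖ ^ 2) (n : ℝ) * κ ω ∂P := by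
            refine integral_congr_ae ?_
            filter_upwards with ω using mul_comm _ _
        _ = ∫ ω, min (‖v ω‖ ^ 2) (n : ℝ) * ε ω ^ 2 ∂P := hswap.symm
        _ ≤ ∫ ω, ε ω ^ 2 * ‖v ω‖ ^ 2 ∂P := by
            refine integral_mono (hmin_int.congr ?_) hεv2 ?_
            · filter_upwards with ω using rfl
            · intro ω
              dsimp only
              have := min_le_left (‖v ω‖ ^ 2) (n : ℝ)
              have h0 : (0:ℝ) ≤ ε ω ^ 2 := sq_nonneg _
              nlinarith
    have hφint : Integrable (fun ω => ‖v ω‖ ^ 2) P := by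
      refine Integrable.mono' (hκφ.const_mul c₁⁻¹)
        ((hφsm.mono hHF).aestronglyMeasurable) ?_
      filter_upwards [hvar] with ω hω
      rw [Real.norm_eq_abs, abs_of_nonneg (by positivity : (0:ℝ) ≤ ‖v ω‖ ^ 2)]
      rw [← mul_assoc]
      have h1 : 1 ≤ c₁⁻¹ * κ ω := by
        rw [← inv_mul_cancel₀ (ne_of_gt hc₁)]
        exact mul_le_mul_of_nonneg_left hω.1 (inv_nonneg.2 hc₁.le)
      nlinarith [sq_nonneg (‖v ω‖)]
    exact (memLp_two_iff_integrable_sq_norm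
      ((hvsm.mono hHF).aestronglyMeasurable)).2 hφint
  -- W • R ∈ L² and R ∈ L²
  have hWR2 : MemLp (fun ω => W ω • R ω) 2 P := by
    refine key _ (hWsm.smul hRsm) (hRWε.ae_eq ?_)
    filter_upwards with ω
    rw [smul_smul, mul_comm]
  have hWRint : Integrable (fun ω => W ω • R ω) P := hWR2.integrable one_le_two
  have hR2 : MemLp R 2 P := by
    have h1 : MemLp (fun ω => (W ω)⁻¹ • (W ω • R ω)) 2 P := by
      refine MemLp.of_le (hWR2.const_smul c₂) ?_ ?_
      · exact ((((hWsm.measurable.inv).stronglyMeasurable).smul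
          (hWsm.smul hRsm)).mono hHF).aestronglyMeasurable
      · filter_upwards [hWb] with ω hω
        have hWpos : 0 < W ω := lt_of_lt_of_le (inv_pos.2 hc₂) hω.1
        have hinv : (W ω)⁻¹ ≤ c₂ := by
          rw [← inv_inv c₂]
          exact inv_anti₀ (inv_pos.2 hc₂) hω.1
        have h1 : ‖(W ω)⁻¹ • (W ω • R ω)‖ = (W ω)⁻¹ * ‖W ω • R ω‖ := by
          rw [norm_smul, Real.norm_eq_abs, abs_of_nonneg (inv_nonneg.2 hWpos.le)]
        have h2 : ‖(c₂ • fun ω => W ω • R ω) ω‖ = c₂ * ‖W ω • R ω‖ := by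
          simp [norm_smul, abs_of_nonneg hc₂.le]
        calc ‖(fun ω => (W ω)⁻¹ • (W ω • R ω)) ω‖ = (W ω)⁻¹ * ‖W ω • R ω‖ := h1
          _ ≤ c₂ * ‖W ω • R ω‖ := mul_le_mul_of_nonneg_right hinv (norm_nonneg _)
          _ = ‖(c₂ • fun ω => W ω • R ω) ω‖ := h2.symm
    refine h1.ae_eq ?_
    filter_upwards [hWb] with ω hω
    have hWpos : 0 < W ω := lt_of_lt_of_le (inv_pos.2 hc₂) hω.1
    rw [smul_smul, inv_mul_cancel₀ (ne_of_gt hWpos), one_smul]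
  -- Q and Y
  set Q : Ω → EuclideanSpace ℝ (Fin p) := P[fun ω => W ω • R ω|mG] with hQdef
  have hQsm : StronglyMeasurable[mG] Q := stronglyMeasurable_condExp
  have hQ2 : MemLp Q 2 P := my_memℒp_condexp_two hGF hWR2
  set Yf : Ω → EuclideanSpace ℝ (Fin p) := fun ω => (T ω)⁻¹ • Q ω with hYdef
  have hYsm : StronglyMeasurable[mG] Yf :=
    ((hTsm.measurable.inv).stronglyMeasurable).smul hQsm
  have hY2 : MemLp Yf 2 P := by
    refine MemLp.of_le (hQ2.const_smul c₂) ((hYsm.mono hGF).aestronglyMeasurable) ?_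
    filter_upwards [hTb] with ω hω
    have hTpos : 0 < T ω := lt_of_lt_of_le (inv_pos.2 hc₂) hω.1
    have hinv : (T ω)⁻¹ ≤ c₂ := by
      rw [← inv_inv c₂]
      exact inv_anti₀ (inv_pos.2 hc₂) hω.1
    have h1 : ‖(T ω)⁻¹ • Q ω‖ = (T ω)⁻¹ * ‖Q ω‖ := by
      rw [norm_smul, Real.norm_eq_abs, abs_of_nonneg (inv_nonneg.2 hTpos.le)]
    have h2 : ‖(c₂ • Q) ω‖ = c₂ * ‖Q ω‖ := by
      simp [norm_smul, abs_of_nonneg hc₂.le]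
    calc ‖Yf ω‖ = (T ω)⁻¹ * ‖Q ω‖ := h1
      _ ≤ c₂ * ‖Q ω‖ := mul_le_mul_of_nonneg_right hinv (norm_nonneg _)
      _ = ‖(c₂ • Q) ω‖ := h2.symm
  have hYint : Integrable Yf P := hY2.integrable one_le_two
  have hWYint : Integrable (fun ω => W ω • Yf ω) P := by
    refine Integrable.mono' (hYint.norm.const_mul c₁⁻¹)
      (((hWsm.smul (hYsm.mono hGH)).mono hHF).aestronglyMeasurable) ?_
    filter_upwards [hWb] with ω hω
    have hW0 : 0 ≤ W ω := le_trans (inv_nonneg.2 hc₂.le) hω.1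
    calc ‖W ω • Yf ω‖ = W ω * ‖Yf ω‖ := by
          rw [norm_smul, Real.norm_eq_abs, abs_of_nonneg hW0]
      _ ≤ c₁⁻¹ * ‖Yf ω‖ := mul_le_mul_of_nonneg_right hω.2 (norm_nonneg _)
  -- part (i)
  have hsplit : (fun ω => W ω • (R ω - Yf ω))
      = (fun ω => W ω • R ω) - fun ω => W ω • Yf ω := by
    funext ω
    simp [smul_sub]
  have part1 : P[fun ω => W ω • (R ω - (T ω)⁻¹ • Q ω)|mG] =ᵐ[P] 0 := by
    have h1 := condExp_sub (μ := P) (m := mG) hWRint hWYint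
    have h2 := my_pullout hGF hYsm hWint hWYint
    have h3 : P[fun ω => W ω • (R ω - (T ω)⁻¹ • Q ω)|mG]
        = P[(fun ω => W ω • R ω) - fun ω => W ω • Yf ω|mG] := by rw [← hsplit]
    rw [h3]
    refine h1.trans ?_
    filter_upwards [h2, hTb] with ω h2ω hTω
    have hTpos : 0 < T ω := lt_of_lt_of_le (inv_pos.2 hc₂) hTω.1
    have : (P[fun ω => W ω • Yf ω|mG]) ω = T ω • Yf ω := by rw [h2ω, hT]
    simp only [Pi.sub_apply, Pi.zero_apply, this]
    rw [hYdef]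
    simp only []
    rw [smul_smul, mul_inv_cancel₀ (ne_of_gt hTpos), one_smul, sub_self]
  -- ε²‖Q‖² is integrable (tower bound)
  have hQn2int : Integrable (fun ω => ‖Q ω‖ ^ 2) P := hQ2.norm.integrable_sq
  have hφQsm : StronglyMeasurable[mH] fun ω => ‖Q ω‖ ^ 2 :=
    ((((hQsm.mono hGH)).measurable.norm).pow_const 2).stronglyMeasurable
  have hεQ2 : Integrable (fun ω => ε ω ^ 2 * ‖Q ω‖ ^ 2) P := by
    refine my_trunc_integrable hHF hε2int
      (Filter.Eventually.of_forall fun ω => sq_nonneg _) hφQsm (fun ω => by positivity)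
      (c₂ * ∫ ω, ‖Q ω‖ ^ 2 ∂P) (fun n => ?_)
    have hminsm : StronglyMeasurable[mH] fun ω => min (‖Q ω‖ ^ 2) (n : ℝ) :=
      (hφQsm.measurable.min measurable_const).stronglyMeasurable
    have hmin_int : Integrable ((fun ω => min (‖Q ω‖ ^ 2) (n : ℝ)) * fun ω => ε ω ^ 2) P := by
      refine hε2int.bdd_mul (c := n) ((hminsm.mono hHF).aestronglyMeasurable) (Filter.Eventually.of_forall fun ω => ?_)
      rw [Real.norm_eq_abs, abs_of_nonneg (le_min (by positivity) (Nat.cast_nonneg n))]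
      exact min_le_right _ _
    have hmin_int' : Integrable ((fun ω => min (‖Q ω‖ ^ 2) (n : ℝ)) * κ) P := by
      refine hκint.bdd_mul (c := n) ((hminsm.mono hHF).aestronglyMeasurable) (Filter.Eventually.of_forall fun ω => ?_)
      rw [Real.norm_eq_abs, abs_of_nonneg (le_min (by positivity) (Nat.cast_nonneg n))]
      exact min_le_right _ _
    have hswap := my_swap hHF hminsm hε2int hmin_int
    calc ∫ ω, ε ω ^ 2 * min (‖Q ω‖ ^ 2) (n : ℝ) ∂P
        = ∫ ω, min (‖Q ω‖ ^ 2) (n : ℝ) * ε ω ^ 2 ∂P := by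
          refine integral_congr_ae ?_
          filter_upwards with ω using mul_comm _ _
      _ = ∫ ω, min (‖Q ω‖ ^ 2) (n : ℝ) * κ ω ∂P := hswap
      _ ≤ ∫ ω, c₂ * ‖Q ω‖ ^ 2 ∂P := by
          refine integral_mono_ae (hmin_int'.congr ?_) (hQn2int.const_mul c₂) ?_
          · filter_upwards with ω using rfl
          · filter_upwards [hvar] with ω hω
            have h1 : min (‖Q ω‖ ^ 2) (n : ℝ) ≤ ‖Q ω‖ ^ 2 := min_le_left _ _
            have h2 : 0 ≤ min (‖Q ω‖ ^ 2) (n : ℝ) := le_min (by positivity) (Nat.cast_nonneg n)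
            nlinarith [hω.1, hω.2]
      _ = c₂ * ∫ ω, ‖Q ω‖ ^ 2 ∂P := integral_const_mul _ _
  -- (W ε) • Yf ∈ L²
  have hWεY2 : MemLp (fun ω => (W ω * ε ω) • Yf ω) 2 P := by
    have haesm : AEStronglyMeasurable[mΩ] (fun ω => (W ω * ε ω) • Yf ω) P :=
      ((((hWsm.mono hHF)).aestronglyMeasurable.mul hε.1)).smul
        ((hYsm.mono hGF).aestronglyMeasurable)
    refine (memLp_two_iff_integrable_sq_norm haesm).2 ?_
    refine Integrable.mono' (hεQ2.const_mul ((c₁⁻¹ * c₂) ^ 2))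
      ((haesm.norm.aemeasurable.pow_const 2).aestronglyMeasurable) ?_
    filter_upwards [hWb, hTb] with ω hWω hTω
    have hW0 : 0 ≤ W ω := le_trans (inv_nonneg.2 hc₂.le) hWω.1
    have hTpos : 0 < T ω := lt_of_lt_of_le (inv_pos.2 hc₂) hTω.1
    have hinv : (T ω)⁻¹ ≤ c₂ := by
      rw [← inv_inv c₂]
      exact inv_anti₀ (inv_pos.2 hc₂) hTω.1
    have h1 : ‖(W ω * ε ω) • Yf ω‖ = W ω * |ε ω| * ((T ω)⁻¹ * ‖Q ω‖) := by
      rw [hYdef]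
      simp only []
      rw [norm_smul, norm_smul, Real.norm_eq_abs, Real.norm_eq_abs, abs_mul,
        abs_of_nonneg hW0, abs_of_nonneg (inv_nonneg.2 hTpos.le)]
      all_goals ring
    rw [Real.norm_eq_abs, abs_of_nonneg (by positivity : (0:ℝ) ≤ ‖(W ω * ε ω) • Yf ω‖ ^ 2), h1]
    have h2 : W ω * |ε ω| * ((T ω)⁻¹ * ‖Q ω‖) ≤ (c₁⁻¹ * c₂) * (|ε ω| * ‖Q ω‖) := by
      have : W ω * |ε ω| ≤ c₁⁻¹ * |ε ω| :=
        mul_le_mul_of_nonneg_right hWω.2 (abs_nonneg _)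
      have h3 : (T ω)⁻¹ * ‖Q ω‖ ≤ c₂ * ‖Q ω‖ :=
        mul_le_mul_of_nonneg_right hinv (norm_nonneg _)
      calc W ω * |ε ω| * ((T ω)⁻¹ * ‖Q ω‖) ≤ c₁⁻¹ * |ε ω| * (c₂ * ‖Q ω‖) :=
            mul_le_mul this h3 (mul_nonneg (inv_nonneg.2 hTpos.le) (norm_nonneg _))
              (mul_nonneg (inv_nonneg.2 hc₁.le) (abs_nonneg _))
        _ = (c₁⁻¹ * c₂) * (|ε ω| * ‖Q ω‖) := by ring
    calc (W ω * |ε ω| * ((T ω)⁻¹ * ‖Q ω‖)) ^ 2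
        ≤ ((c₁⁻¹ * c₂) * (|ε ω| * ‖Q ω‖)) ^ 2 := by
          refine pow_le_pow_left₀ (by positivity) h2 2
      _ = (c₁⁻¹ * c₂) ^ 2 * (ε ω ^ 2 * ‖Q ω‖ ^ 2) := by
          rw [show (c₁⁻¹ * c₂ * (|ε ω| * ‖Q ω‖)) ^ 2
              = (c₁⁻¹ * c₂) ^ 2 * (|ε ω| ^ 2 * ‖Q ω‖ ^ 2) from by ring, sq_abs]
  have hPB2 : MemLp PB 2 P := by
    have hPBeq : PB = fun ω => (W ω * ε ω) • R ω - (W ω * ε ω) • Yf ω := by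
      rw [hPB]
      funext ω
      rw [smul_sub]
    rw [hPBeq]
    exact (hRWε.sub hWεY2).ae_eq (Filter.Eventually.of_forall fun ω => by simp [Pi.sub_apply])
  have part2 : PB ∈ M := by
    rw [hM]
    refine ⟨fun ω => W ω • (R ω - (T ω)⁻¹ • Q ω), hWsm.smul ((hRsm.sub
      ((((hTsm.measurable.inv).stronglyMeasurable).smul hQsm).mono hGH))), ?_, part1, hPB2, ?_⟩
    · have : (fun ω => W ω • (R ω - (T ω)⁻¹ • Q ω))
          = (fun ω => W ω • R ω) - fun ω => W ω • Yf ω := hsplit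
      rw [this]
      exact hWRint.sub hWYint
    · rw [hPB]
      funext ω
      rw [smul_smul, mul_comm]
  refine ⟨part1, part2, ?_⟩
  intro g hg
  rw [hM] at hg
  obtain ⟨c, hcsm, hcint, hcG, hg2, rfl⟩ := hg
  have hc2 : MemLp c 2 P := key c hcsm hg2
  -- split the integral
  have hA : ∫ ω, ⟪B ω - PB ω, ε ω • c ω⟫ ∂P
      = (∫ ω, ⟪B ω, ε ω • c ω⟫ ∂P) - ∫ ω, ⟪PB ω, ε ω • c ω⟫ ∂P := by
    rw [← integral_sub (my_inner_int hB hg2) (my_inner_int hPB2 hg2)]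
    refine integral_congr_ae ?_
    filter_upwards with ω
    rw [inner_sub_left]
  -- the B-term
  have hεB1 : MemLp (ε • B) 1 P := MemLp.smul hB hε
  have hεBint : Integrable (fun ω => ε ω • B ω) P := memLp_one_iff_integrable.1 hεB1
  have hεc2 : ∀ i : Fin p, MemLp (fun ω => ε ω * c ω i) 2 P := fun i =>
    my_coord_memℒp hg2 i
  have hcoordint : ∀ i : Fin p, Integrable (fun ω => c ω i * (ε ω * B ω i)) P := by
    intro i
    refine (my_mul_int (hεc2 i) (my_coord_memℒp hB i)).congr ?_
    filter_upwards with ω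
    ring
  have hBstep : ∫ ω, ⟪B ω, ε ω • c ω⟫ ∂P = ∫ ω, ⟪R ω, c ω⟫ ∂P := by
    have hcoord_eq : ∀ i : Fin p, ∫ ω, c ω i * (ε ω * B ω i) ∂P
        = ∫ ω, c ω i * R ω i ∂P := by
      intro i
      have hf : Integrable (fun ω => ε ω * B ω i) P :=
        (EuclideanSpace.proj (𝕜 := ℝ) i).integrable_comp hεBint
      have hfg : Integrable ((fun ω => c ω i) * fun ω => ε ω * B ω i) P :=
        (hcoordint i).congr (Filter.Eventually.of_forall fun ω => rfl)
      have hswap := my_swap hHF (my_coord_sm hcsm i) hf hfg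
      have hproj' : P[fun ω => ε ω * B ω i|mH] =ᵐ[P] fun ω => R ω i := by
        rw [hR]
        exact my_condexp_clm hHF (EuclideanSpace.proj (𝕜 := ℝ) i) hεBint
      calc ∫ ω, c ω i * (ε ω * B ω i) ∂P
          = ∫ ω, c ω i * (P[fun ω => ε ω * B ω i|mH]) ω ∂P := hswap
        _ = ∫ ω, c ω i * R ω i ∂P := by
            refine integral_congr_ae ?_
            filter_upwards [hproj'] with ω hω
            rw [hω]
    calc ∫ ω, ⟪B ω, ε ω • c ω⟫ ∂P
        = ∫ ω, ∑ i, c ω i * (ε ω * B ω i) ∂P := by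
          refine integral_congr_ae (Filter.Eventually.of_forall fun ω => ?_)
          simp only [PiLp.inner_apply, RCLike.inner_apply, conj_trivial,
            PiLp.smul_apply, smul_eq_mul]
          exact Finset.sum_congr rfl fun i _ => by ring
      _ = ∑ i, ∫ ω, c ω i * (ε ω * B ω i) ∂P :=
          integral_finset_sum _ fun i _ => hcoordint i
      _ = ∑ i, ∫ ω, c ω i * R ω i ∂P := Finset.sum_congr rfl fun i _ => hcoord_eq i
      _ = ∫ ω, ∑ i, c ω i * R ω i ∂P :=
          (integral_finset_sum _ fun i _ => (my_mul_int (my_coord_memℒp hc2 i)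
            (my_coord_memℒp hR2 i))).symm
      _ = ∫ ω, ⟪R ω, c ω⟫ ∂P := by
          refine integral_congr_ae (Filter.Eventually.of_forall fun ω => ?_)
          simp only [PiLp.inner_apply, RCLike.inner_apply, conj_trivial]
  -- the PB-term
  have hCstep : ∫ ω, ⟪PB ω, ε ω • c ω⟫ ∂P = ∫ ω, ⟪R ω - Yf ω, c ω⟫ ∂P := by
    have hSsm : StronglyMeasurable[mH] fun ω => W ω * ⟪R ω - Yf ω, c ω⟫ :=
      hWsm.mul ((hRsm.sub (hYsm.mono hGH)).inner hcsm)
    have hpt : ∀ ω, ((fun ω => W ω * ⟪R ω - Yf ω, c ω⟫) * fun ω => ε ω ^ 2) ω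
        = ⟪PB ω, ε ω • c ω⟫ := by
      intro ω
      rw [hPB]
      simp only [Pi.mul_apply]
      rw [real_inner_smul_left, real_inner_smul_right]
      ring
    have hSε2int : Integrable ((fun ω => W ω * ⟪R ω - Yf ω, c ω⟫) * fun ω => ε ω ^ 2) P :=
      (my_inner_int hPB2 hg2).congr
        (Filter.Eventually.of_forall fun ω => (hpt ω).symm)
    have hswap := my_swap hHF hSsm hε2int hSε2int
    calc ∫ ω, ⟪PB ω, ε ω • c ω⟫ ∂P
        = ∫ ω, W ω * ⟪R ω - Yf ω, c ω⟫ * ε ω ^ 2 ∂P :=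
          integral_congr_ae (Filter.Eventually.of_forall fun ω => (hpt ω).symm)
      _ = ∫ ω, W ω * ⟪R ω - Yf ω, c ω⟫ * κ ω ∂P := hswap
      _ = ∫ ω, ⟪R ω - Yf ω, c ω⟫ ∂P := by
          refine integral_congr_ae ?_
          filter_upwards [hWκ] with ω hω
          calc W ω * ⟪R ω - Yf ω, c ω⟫ * κ ω
              = W ω * κ ω * ⟪R ω - Yf ω, c ω⟫ := by ring
            _ = ⟪R ω - Yf ω, c ω⟫ := by rw [hω, one_mul]
  -- combine
  have hD : (∫ ω, ⟪R ω, c ω⟫ ∂P) - ∫ ω, ⟪R ω - Yf ω, c ω⟫ ∂P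
      = ∫ ω, ⟪Yf ω, c ω⟫ ∂P := by
    have h1 : Integrable (fun ω => ⟪R ω, c ω⟫) P := my_inner_int hR2 hc2
    have h2 : Integrable (fun ω => ⟪R ω - Yf ω, c ω⟫) P := my_inner_int (hR2.sub hY2) hc2
    rw [← integral_sub h1 h2]
    refine integral_congr_ae (Filter.Eventually.of_forall fun ω => ?_)
    show ⟪R ω, c ω⟫ - ⟪R ω - Yf ω, c ω⟫ = ⟪Yf ω, c ω⟫
    rw [inner_sub_left]
    ring
  -- the Y-term vanishes
  have hE : ∫ ω, ⟪Yf ω, c ω⟫ ∂P = 0 := by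
    have hci : ∀ i : Fin p, Integrable ((fun ω => Yf ω i) * fun ω => c ω i) P := fun i =>
      (my_mul_int (my_coord_memℒp hY2 i) (my_coord_memℒp hc2 i)).congr
        (Filter.Eventually.of_forall fun ω => rfl)
    have hzero : ∀ i : Fin p, ∫ ω, Yf ω i * c ω i ∂P = 0 := by
      intro i
      have hfint : Integrable (fun ω => c ω i) P :=
        (my_coord_memℒp hc2 i).integrable one_le_two
      have hswap := my_swap hGF (my_coord_sm hYsm i) hfint (hci i)
      have hczero : P[fun ω => c ω i|mG] =ᵐ[P] (0 : Ω → ℝ) := by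
        refine (my_condexp_clm hGF (EuclideanSpace.proj (𝕜 := ℝ) i) hcint).trans ?_
        filter_upwards [hcG] with ω hω
        rw [Pi.zero_apply] at hω ⊢
        rw [hω]
        simp
      calc ∫ ω, Yf ω i * c ω i ∂P
          = ∫ ω, Yf ω i * (P[fun ω => c ω i|mG]) ω ∂P := hswap
        _ = ∫ ω, (0:ℝ) ∂P := by
            refine integral_congr_ae ?_
            filter_upwards [hczero] with ω hω
            simp only [Pi.zero_apply] at hω
            show Yf ω i * (P[fun ω => c ω i|mG]) ω = 0
            rw [hω, mul_zero]
        _ = 0 := integral_zero _ _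
    calc ∫ ω, ⟪Yf ω, c ω⟫ ∂P
        = ∫ ω, ∑ i, Yf ω i * c ω i ∂P := by
          refine integral_congr_ae (Filter.Eventually.of_forall fun ω => ?_)
          simp [PiLp.inner_apply, RCLike.inner_apply, conj_trivial]
          exact Finset.sum_congr rfl fun i _ => by ring
      _ = ∑ i, ∫ ω, Yf ω i * c ω i ∂P := integral_finset_sum _ fun i _ => hci i
      _ = 0 := Finset.sum_eq_zero fun i _ => hzero i
  calc ∫ ω, ⟪B ω - PB ω, ε ω • c ω⟫ ∂P
      = (∫ ω, ⟪B ω, ε ω • c ω⟫ ∂P) - ∫ ω, ⟪PB ω, ε ω • c ω⟫ ∂P := hA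
    _ = (∫ ω, ⟪R ω, c ω⟫ ∂P) - ∫ ω, ⟪R ω - Yf ω, c ω⟫ ∂P := by rw [hBstep, hCstep]
    _ = ∫ ω, ⟪Yf ω, c ω⟫ ∂P := hD
    _ = 0 := hE
end

section
/- (Lemma S-Lambda2-bot-4.) Let Γ* be a 𝒢-measurable ℝ^p-valued random variable with Γ*·S_ε ∈ H and Γ*·W·ε ∈ H. Then: (i) Γ*·W·ε is orthogonal to every element of Λ⁽¹⁾; (ii) Γ*·S_ε + Γ*·W·ε ∈ Λ⁽¹⁾, i.e., E[Γ*·(S_ε + W·ε) | ℋ] = 0 and E[Γ*·(S_ε + W·ε)·ε | ℋ] = 0 a.s. Consequently, the orthogonal projection of Γ*·S_ε onto the orthogonal complement of Λ⁽¹⁾ equals −Γ*·W·ε. (Taking Γ* a constant vector c gives part (b): the projection of c·S_ε onto Λ⁽¹⁾^⊥ is −c·W·ε.) -/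
open scoped ENNReal


open MeasureTheory
open scoped RealInnerProductSpace

section helpers
private lemma mulInt {Ω : Type*} {mΩ : MeasurableSpace Ω} {P : Measure Ω}
    {f g : Ω → ℝ} (hf : MemLp f 2 P) (hg : MemLp g 2 P) :
    Integrable (fun ω => f ω * g ω) P := by
  have h := hg.smul (φ := f) (r := 1) hf
  rw [memLp_one_iff_integrable] at h
  exact h.congr (by filter_upwards with ω; simp [Pi.smul_apply', smul_eq_mul])

private lemma smulInt {Ω : Type*} {mΩ : MeasurableSpace Ω} {P : Measure Ω}
    {p : ℕ} {f : Ω → ℝ} {g : Ω → EuclideanSpace ℝ (Fin p)}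
    (hf : MemLp f 2 P) (hg : MemLp g 2 P) :
    Integrable (fun ω => f ω • g ω) P := by
  have h := hg.smul (φ := f) (r := 1) hf
  rw [memLp_one_iff_integrable] at h
  exact h.congr (by filter_upwards with ω; simp [Pi.smul_apply'])

private lemma coordMem {Ω : Type*} {mΩ : MeasurableSpace Ω} {P : Measure Ω}
    {p : ℕ} {F : Ω → EuclideanSpace ℝ (Fin p)} (hF : MemLp F 2 P) (i : Fin p) :
    MemLp (fun ω => F ω i) 2 P :=
  MemLp.ae_eq (by filter_upwards with ω; simp) ((EuclideanSpace.proj (𝕜 := ℝ) i).comp_memLp' hF)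

private lemma coordInt {Ω : Type*} {mΩ : MeasurableSpace Ω} {P : Measure Ω}
    {p : ℕ} {F : Ω → EuclideanSpace ℝ (Fin p)} (hF : Integrable F P) (i : Fin p) :
    Integrable (fun ω => F ω i) P :=
  ((EuclideanSpace.proj (𝕜 := ℝ) i).integrable_comp hF).congr
    (by filter_upwards with ω; simp)

private lemma coordSetInt {Ω : Type*} {mΩ : MeasurableSpace Ω} {P : Measure Ω}
    {p : ℕ} {F : Ω → EuclideanSpace ℝ (Fin p)} (hF : Integrable F P) (i : Fin p) (s : Set Ω) :
    ∫ ω in s, F ω i ∂P = (∫ ω in s, F ω ∂P) i := by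
  calc ∫ ω in s, F ω i ∂P
      = ∫ ω in s, (EuclideanSpace.proj (𝕜 := ℝ) i) (F ω) ∂P := by
        exact integral_congr_ae (by filter_upwards with ω; simp)
    _ = (EuclideanSpace.proj (𝕜 := ℝ) i) (∫ ω in s, F ω ∂P) :=
        ContinuousLinearMap.integral_comp_comm _ hF.integrableOn
    _ = (∫ ω in s, F ω ∂P) i := by simp

private lemma coordCond {Ω : Type*} {mH : MeasurableSpace Ω} {mΩ : MeasurableSpace Ω}
    (hHF : mH ≤ mΩ) (P : Measure Ω) [IsProbabilityMeasure P]
    {p : ℕ} {F : Ω → EuclideanSpace ℝ (Fin p)} (hF : Integrable F P) (h0 : P[F|mH] =ᵐ[P] 0)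
    (i : Fin p) : P[fun ω => F ω i|mH] =ᵐ[P] (0 : Ω → ℝ) := by
  refine (ae_eq_condExp_of_forall_setIntegral_eq hHF (coordInt hF i)
    (fun s _ _ => (integrable_zero _ _ P).integrableOn) (fun s hs hμs => ?_)
    (by exact stronglyMeasurable_zero.aestronglyMeasurable)).symm
  have h1 : ∫ ω in s, F ω ∂P = 0 := by
    rw [← setIntegral_condExp hHF hF hs]
    calc ∫ ω in s, (P[F|mH]) ω ∂P = ∫ ω in s, (0 : EuclideanSpace ℝ (Fin p)) ∂P :=
          integral_congr_ae (ae_restrict_of_ae h0)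
      _ = 0 := integral_zero _ _
  simp [coordSetInt hF i s, h1]

private lemma vecCond {Ω : Type*} {mH : MeasurableSpace Ω} {mΩ : MeasurableSpace Ω}
    (hHF : mH ≤ mΩ) (P : Measure Ω) [IsProbabilityMeasure P]
    {p : ℕ} {F : Ω → EuclideanSpace ℝ (Fin p)} (hF : Integrable F P)
    (h0 : ∀ i, P[fun ω => F ω i|mH] =ᵐ[P] (0 : Ω → ℝ)) :
    P[F|mH] =ᵐ[P] 0 := by
  refine (ae_eq_condExp_of_forall_setIntegral_eq hHF hF
    (fun s _ _ => (integrable_zero _ _ P).integrableOn) (fun s hs hμs => ?_)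
    (by exact stronglyMeasurable_zero.aestronglyMeasurable)).symm
  simp only [Pi.zero_apply, integral_zero]
  symm; ext i
  rw [← coordSetInt hF i s, ← setIntegral_condExp hHF (coordInt hF i) hs]
  calc ∫ ω in s, (P[fun ω => F ω i|mH]) ω ∂P = ∫ ω in s, (0:ℝ) ∂P :=
        integral_congr_ae (ae_restrict_of_ae (h0 i))
    _ = 0 := integral_zero _ _

private lemma pullOut {Ω : Type*} {mH : MeasurableSpace Ω} {mΩ : MeasurableSpace Ω}
    (P : Measure Ω) [IsFiniteMeasure P] {f g : Ω → ℝ}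
    (hf : StronglyMeasurable[mH] f) (hfg : Integrable (fun ω => f ω * g ω) P)
    (hg : Integrable g P) :
    P[fun ω => f ω * g ω|mH] =ᵐ[P] fun ω => f ω * (P[g|mH]) ω :=
  condExp_mul_of_stronglyMeasurable_left hf hfg hg
end helpers

/-- Lemma S-Lambda2-bot-4: for `𝒢`-measurable `Γ*`,
(i) `Γ*·W·ε` is orthogonal to every element of `Λ⁽¹⁾`, and (ii) `Γ*·(S_ε + W·ε) ∈ Λ⁽¹⁾`;
consequently the projection of `Γ*·S_ε` onto `Λ⁽¹⁾^⊥` is `−Γ*·W·ε`. -/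
theorem projection_of_score_onto_Lambda1_perp
    {Ω : Type*} {mΩ : MeasurableSpace Ω} (P : Measure Ω) [IsProbabilityMeasure P]
    {p : ℕ} {mG mH : MeasurableSpace Ω} (hGH : mG ≤ mH) (hHF : mH ≤ mΩ)
    (ε : Ω → ℝ) (hε : MemLp ε 2 P) (hεH : P[ε|mH] =ᵐ[P] 0)
    (c₁ c₂ : ℝ) (hc₁ : 0 < c₁)
    (hvar : ∀ᵐ ω ∂P, c₁ ≤ (P[fun ω => ε ω ^ 2|mH]) ω ∧ (P[fun ω => ε ω ^ 2|mH]) ω ≤ c₂)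
    (W : Ω → ℝ) (hW : W = fun ω => ((P[fun ω => ε ω ^ 2|mH]) ω)⁻¹)
    -- the conditional score of the error density
    (Sε : Ω → ℝ) (hSε2 : MemLp Sε 2 P) (hSεH : P[Sε|mH] =ᵐ[P] 0)
    (hSεε : P[fun ω => Sε ω * ε ω|mH] =ᵐ[P] fun _ => (-1 : ℝ))
    -- the subspace Λ⁽¹⁾
    (Λ1 : Set (Ω → EuclideanSpace ℝ (Fin p)))
    (hΛ1 : Λ1 = {Γ | MemLp Γ 2 P ∧ (∫ ω, Γ ω ∂P) = 0 ∧
      P[Γ|mH] =ᵐ[P] 0 ∧ P[fun ω => ε ω • Γ ω|mH] =ᵐ[P] 0})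
    (Γs : Ω → EuclideanSpace ℝ (Fin p)) (hΓs : StronglyMeasurable[mG] Γs)
    (hΓsSε : MemLp (fun ω => Sε ω • Γs ω) 2 P)
    (hΓsWε : MemLp (fun ω => (W ω * ε ω) • Γs ω) 2 P) :
    -- (i) Γ*·W·ε ⟂ Λ⁽¹⁾
    (∀ h ∈ Λ1, ∫ ω, ⟪(W ω * ε ω) • Γs ω, h ω⟫ ∂P = 0) ∧
    -- (ii) Γ*·(S_ε + W·ε) ∈ Λ⁽¹⁾
    (fun ω => (Sε ω + W ω * ε ω) • Γs ω) ∈ Λ1 := by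
  have hεint : Integrable ε P := hε.integrable one_le_two
  have hSεint : Integrable Sε P := hSε2.integrable one_le_two
  have hWsm : StronglyMeasurable[mH] W := by
    rw [hW]; exact (stronglyMeasurable_condExp.measurable.inv).stronglyMeasurable
  have hgSM : ∀ i, StronglyMeasurable[mH] (fun ω => Γs ω i) := fun i => by
    simpa using
      ((EuclideanSpace.proj (𝕜 := ℝ) i).continuous.comp_stronglyMeasurable (hΓs.mono hGH))
  -- coordinates of the two memLp assumptions
  have hSg : ∀ i, MemLp (fun ω => Sε ω * Γs ω i) 2 P := fun i =>
    MemLp.ae_eq (by filter_upwards with ω; simp) (coordMem hΓsSε i)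
  have hWg : ∀ i, MemLp (fun ω => W ω * ε ω * Γs ω i) 2 P := fun i =>
    MemLp.ae_eq (by filter_upwards with ω; simp) (coordMem hΓsWε i)
  -- integrability facts
  have hSεεInt : Integrable (fun ω => Sε ω * ε ω) P := mulInt hSε2 hε
  have hε2Int : Integrable (fun ω => ε ω ^ 2) P :=
    (mulInt hε hε).congr (by filter_upwards with ω; ring)
  have hAint : ∀ i, Integrable (fun ω => Γs ω i * Sε ω) P := fun i =>
    ((hSg i).integrable one_le_two).congr (by filter_upwards with ω; ring)
  have hBint : ∀ i, Integrable (fun ω => (W ω * Γs ω i) * ε ω) P := fun i =>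
    ((hWg i).integrable one_le_two).congr (by filter_upwards with ω; ring)
  have hC1int : ∀ i, Integrable (fun ω => Γs ω i * (Sε ω * ε ω)) P := fun i =>
    (mulInt (hSg i) hε).congr (by filter_upwards with ω; ring)
  have hC2int : ∀ i, Integrable (fun ω => (W ω * Γs ω i) * ε ω ^ 2) P := fun i =>
    (mulInt (hWg i) hε).congr (by filter_upwards with ω; ring)
  -- the four scalar conditional-expectation computations
  have hA : ∀ i, P[fun ω => Γs ω i * Sε ω|mH] =ᵐ[P] (0 : Ω → ℝ) := fun i => by
    refine (pullOut P (hgSM i) (hAint i) hSεint).trans ?_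
    filter_upwards [hSεH] with ω hω; simp [hω]
  have hB : ∀ i, P[fun ω => (W ω * Γs ω i) * ε ω|mH] =ᵐ[P] (0 : Ω → ℝ) := fun i => by
    refine (pullOut P (hWsm.mul (hgSM i)) (hBint i) hεint).trans ?_
    filter_upwards [hεH] with ω hω; simp [hω]
  have hC1 : ∀ i, P[fun ω => Γs ω i * (Sε ω * ε ω)|mH] =ᵐ[P] fun ω => -Γs ω i := fun i => by
    refine (pullOut P (hgSM i) (hC1int i) hSεεInt).trans ?_
    filter_upwards [hSεε] with ω hω; rw [hω]; ring
  have hC2 : ∀ i, P[fun ω => (W ω * Γs ω i) * ε ω ^ 2|mH] =ᵐ[P] fun ω => Γs ω i := fun i => by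
    refine (pullOut P (hWsm.mul (hgSM i)) (hC2int i) hε2Int).trans ?_
    filter_upwards [hvar] with ω hω
    have hne : (P[fun ω => ε ω ^ 2|mH]) ω ≠ 0 := by linarith [hω.1]
    rw [hW]; simp only [Pi.mul_apply]; field_simp
  -- the function Γ* (Sε + W ε)
  set F : Ω → EuclideanSpace ℝ (Fin p) := fun ω => (Sε ω + W ω * ε ω) • Γs ω with hF
  have hFmem : MemLp F 2 P :=
    MemLp.ae_eq (by filter_upwards with ω; rw [hF]; simp [add_smul]) (hΓsSε.add hΓsWε)
  have hFint : Integrable F P := hFmem.integrable one_le_two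
  have hFcond : P[F|mH] =ᵐ[P] 0 := by
    refine vecCond hHF P hFint (fun i => ?_)
    have heq : P[fun ω => F ω i|mH]
        =ᵐ[P] P[(fun ω => Γs ω i * Sε ω) + fun ω => (W ω * Γs ω i) * ε ω|mH] :=
      condExp_congr_ae (Filter.Eventually.of_forall fun ω => by
        show F ω i = Γs ω i * Sε ω + (W ω * Γs ω i) * ε ω
        rw [hF]; simp; ring)
    refine heq.trans ((condExp_add (hAint i) (hBint i) mH).trans ?_)
    filter_upwards [hA i, hB i] with ω h1 h2
    simp only [Pi.add_apply, Pi.zero_apply, h1, h2]; simp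
  have hεFint : Integrable (fun ω => ε ω • F ω) P := smulInt hε hFmem
  have hεFcond : P[fun ω => ε ω • F ω|mH] =ᵐ[P] 0 := by
    refine vecCond hHF P hεFint (fun i => ?_)
    have heq : P[fun ω => (ε ω • F ω) i|mH]
        =ᵐ[P] P[(fun ω => Γs ω i * (Sε ω * ε ω)) + fun ω => (W ω * Γs ω i) * ε ω ^ 2|mH] :=
      condExp_congr_ae (Filter.Eventually.of_forall fun ω => by
        show (ε ω • F ω) i = Γs ω i * (Sε ω * ε ω) + (W ω * Γs ω i) * ε ω ^ 2
        rw [hF]; simp; ring)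
    refine heq.trans ((condExp_add (hC1int i) (hC2int i) mH).trans ?_)
    filter_upwards [hC1 i, hC2 i] with ω h1 h2
    simp only [Pi.add_apply, Pi.zero_apply, h1, h2]; ring
  have hFint0 : ∫ ω, F ω ∂P = 0 := by
    rw [← integral_condExp hHF]
    exact (integral_congr_ae hFcond).trans (integral_zero _ _)
  constructor
  · -- part (i)
    intro h hmem
    rw [hΛ1, Set.mem_setOf_eq] at hmem
    obtain ⟨hh2, -, -, hhε⟩ := hmem
    have hεhInt : Integrable (fun ω => ε ω • h ω) P := smulInt hε hh2
    have hεhi : ∀ i, P[fun ω => ε ω * h ω i|mH] =ᵐ[P] (0 : Ω → ℝ) := fun i => by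
      refine Filter.EventuallyEq.trans ?_ (coordCond hHF P hεhInt hhε i)
      exact condExp_congr_ae (Filter.Eventually.of_forall fun ω => by simp)
    have hDint : ∀ i, Integrable (fun ω => (W ω * Γs ω i) * (ε ω * h ω i)) P := fun i =>
      (mulInt (hWg i) (coordMem hh2 i)).congr (by filter_upwards with ω; ring)
    have hD : ∀ i, P[fun ω => (W ω * Γs ω i) * (ε ω * h ω i)|mH] =ᵐ[P] (0 : Ω → ℝ) := fun i => by
      refine (pullOut P (hWsm.mul (hgSM i)) (hDint i) (mulInt hε (coordMem hh2 i))).trans ?_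
      filter_upwards [hεhi i] with ω hω; simp [hω]
    have hIi : ∀ i, ∫ ω, (W ω * Γs ω i) * (ε ω * h ω i) ∂P = 0 := fun i => by
      rw [← integral_condExp hHF]
      exact (integral_congr_ae (hD i)).trans (integral_zero _ _)
    calc ∫ ω, ⟪(W ω * ε ω) • Γs ω, h ω⟫ ∂P
        = ∫ ω, ∑ i, (W ω * Γs ω i) * (ε ω * h ω i) ∂P := by
          refine integral_congr_ae (Filter.Eventually.of_forall fun ω => ?_)
          show ⟪(W ω * ε ω) • Γs ω, h ω⟫ = _
          rw [real_inner_smul_left, PiLp.inner_apply]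
          simp only [RCLike.inner_apply, conj_trivial]
          rw [Finset.mul_sum]
          exact Finset.sum_congr rfl fun i _ => by ring
      _ = ∑ i, ∫ ω, (W ω * Γs ω i) * (ε ω * h ω i) ∂P :=
          integral_finset_sum _ (fun i _ => hDint i)
      _ = 0 := by simp [hIi]
  · -- part (ii)
    rw [hΛ1, Set.mem_setOf_eq]
    exact ⟨hFmem, hFint0, hFcond, hεFcond⟩
end

section
/- (Lemma S-Lambda2-bot-5.) Let Q ∈ L²(P) be scalar, 𝒢-measurable with E[Q] = 0, and let Γ* be a 𝒢-measurable ℝ^p-valued random variable with E[Γ*] = 0 such that Γ*, Q·Γ*, Γ*·S_ε and W·ε have the required integrability. Then: (i) Γ* − E[Q·Γ*]·W·ε is orthogonal to every element of Λ⁽¹⁾; (ii) E[Q·Γ*]·(S_ε + W·ε) ∈ Λ⁽¹⁾. Consequently, the orthogonal projection of Γ⁽³⁾ := Γ* + E[Q·Γ*]·S_ε onto the orthogonal complement of Λ⁽¹⁾ equals Γ* − E[Q·Γ*]·W·ε. -/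
open MeasureTheory
open scoped RealInnerProductSpace

lemma condexp_clm' {α E F : Type*} [NormedAddCommGroup E] [NormedSpace ℝ E] [CompleteSpace E]
    [NormedAddCommGroup F] [NormedSpace ℝ F] [CompleteSpace F]
    {m m0 : MeasurableSpace α} {μ : Measure α} (hm : m ≤ m0) [SigmaFinite (μ.trim hm)]
    (L : E →L[ℝ] F) {f : α → E} (hf : Integrable f μ) :
    μ[fun ω => L (f ω)|m] =ᵐ[μ] fun ω => L ((μ[f|m]) ω) := by
  refine (ae_eq_condExp_of_forall_setIntegral_eq hm (L.integrable_comp hf) ?_ ?_ ?_).symm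
  · exact fun s _ _ => (L.integrable_comp integrable_condExp).integrableOn
  · intro s hs hμs
    rw [L.integral_comp_comm integrable_condExp.integrableOn,
      L.integral_comp_comm hf.integrableOn, setIntegral_condExp hm hf hs]
  · exact ⟨fun ω => L ((μ[f|m]) ω),
      L.continuous.comp_stronglyMeasurable stronglyMeasurable_condExp, Filter.EventuallyEq.rfl⟩

lemma mul_int' {α : Type*} {m0 : MeasurableSpace α} {μ : Measure α} {f g : α → ℝ}
    (hf : MemLp f 2 μ) (hg : MemLp g 2 μ) : Integrable (fun ω => f ω * g ω) μ := by
  have h := hg.smul hf (p := 2) (q := 2) (r := 1)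
  exact memLp_one_iff_integrable.mp h

lemma smul_int' {α E : Type*} [NormedAddCommGroup E] {m0 : MeasurableSpace α} {μ : Measure α}
    {f : α → ℝ} {g : α → E} [NormedSpace ℝ E]
    (hf : MemLp f 2 μ) (hg : MemLp g 2 μ) : Integrable (fun ω => f ω • g ω) μ := by
  have h := hg.smul hf (p := 2) (q := 2) (r := 1)
  exact memLp_one_iff_integrable.mp h


/-- Lemma S-Lambda2-bot-5: for `𝒢`-measurable `Γ*` with `E[Γ*] = 0`
and `Q` scalar `𝒢`-measurable with `E[Q] = 0`, (i) `Γ* − E[Q·Γ*]·W·ε` is orthogonal to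
every element of `Λ⁽¹⁾`, and (ii) `E[Q·Γ*]·(S_ε + W·ε) ∈ Λ⁽¹⁾`; consequently the
projection of `Γ⁽³⁾ = Γ* + E[Q·Γ*]·S_ε` onto `Λ⁽¹⁾^⊥` is `Γ* − E[Q·Γ*]·W·ε`. -/
theorem projection_of_Gamma3_onto_Lambda1_perp
    {Ω : Type*} {mΩ : MeasurableSpace Ω} (P : Measure Ω) [IsProbabilityMeasure P]
    {p : ℕ} {mG mH : MeasurableSpace Ω} (hGH : mG ≤ mH) (hHF : mH ≤ mΩ)
    (ε : Ω → ℝ) (hε : MemLp ε 2 P) (hεH : P[ε|mH] =ᵐ[P] 0)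
    (c₁ c₂ : ℝ) (hc₁ : 0 < c₁)
    (hvar : ∀ᵐ ω ∂P, c₁ ≤ (P[fun ω => ε ω ^ 2|mH]) ω ∧ (P[fun ω => ε ω ^ 2|mH]) ω ≤ c₂)
    (W : Ω → ℝ) (hW : W = fun ω => ((P[fun ω => ε ω ^ 2|mH]) ω)⁻¹)
    (Sε : Ω → ℝ) (hSε2 : MemLp Sε 2 P) (hSεH : P[Sε|mH] =ᵐ[P] 0)
    (hSεε : P[fun ω => Sε ω * ε ω|mH] =ᵐ[P] fun _ => (-1 : ℝ))
    (Λ1 : Set (Ω → EuclideanSpace ℝ (Fin p)))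
    (hΛ1 : Λ1 = {Γ | MemLp Γ 2 P ∧ (∫ ω, Γ ω ∂P) = 0 ∧
      P[Γ|mH] =ᵐ[P] 0 ∧ P[fun ω => ε ω • Γ ω|mH] =ᵐ[P] 0})
    (Q : Ω → ℝ) (hQmeas : StronglyMeasurable[mG] Q) (hQ2 : MemLp Q 2 P)
    (hQ0 : ∫ ω, Q ω ∂P = 0)
    (Γs : Ω → EuclideanSpace ℝ (Fin p)) (hΓs : StronglyMeasurable[mG] Γs)
    (hΓs2 : MemLp Γs 2 P) (hΓs0 : (∫ ω, Γs ω ∂P) = 0)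
    (hΓsSε : MemLp (fun ω => Sε ω • Γs ω) 2 P) :
    -- (i) Γ* − E[Q·Γ*]·W·ε ⟂ Λ⁽¹⁾
    (∀ h ∈ Λ1,
      ∫ ω, ⟪Γs ω - (W ω * ε ω) • (∫ ω', Q ω' • Γs ω' ∂P), h ω⟫ ∂P = 0) ∧
    -- (ii) E[Q·Γ*]·(S_ε + W·ε) ∈ Λ⁽¹⁾
    (fun ω => (Sε ω + W ω * ε ω) • (∫ ω', Q ω' • Γs ω' ∂P)) ∈ Λ1 := by
  letI : MeasurableSpace Ω := mΩ
  set c : EuclideanSpace ℝ (Fin p) := ∫ ω', Q ω' • Γs ω' ∂P with hc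
  have hWsm : StronglyMeasurable[mH] W := by
    rw [hW]
    exact (stronglyMeasurable_condExp.measurable.inv).stronglyMeasurable
  have hWbound : ∀ᵐ ω ∂P, ‖W ω‖ ≤ c₁⁻¹ := by
    filter_upwards [hvar] with ω hω
    have h0 : (0:ℝ) < (P[fun ω => ε ω ^ 2|mH]) ω := lt_of_lt_of_le hc₁ hω.1
    rw [hW, Real.norm_eq_abs, abs_of_nonneg (by positivity)]
    exact inv_anti₀ hc₁ hω.1
  have hWasm : AEStronglyMeasurable W P := (hWsm.mono hHF).aestronglyMeasurable
  have hWinf : MemLp W ⊤ P := memLp_top_of_bound hWasm _ hWbound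
  have hWε2 : MemLp (fun ω => W ω * ε ω) 2 P := hε.smul (r := 2) hWinf
  have hε_int : Integrable ε P := hε.integrable one_le_two
  have hSε_int : Integrable Sε P := hSε2.integrable one_le_two
  have hWε_int : Integrable (fun ω => W ω * ε ω) P := hWε2.integrable one_le_two
  have hWεH : P[fun ω => W ω * ε ω|mH] =ᵐ[P] 0 := by
    refine (condExp_mul_of_stronglyMeasurable_left hWsm hWε_int hε_int).trans ?_
    filter_upwards [hεH] with ω hω
    simp only [Pi.mul_apply, Pi.zero_apply] at hω ⊢
    rw [hω, mul_zero]
  have hεSq_int : Integrable (fun ω => ε ω ^ 2) P := by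
    have := mul_int' hε hε
    simpa [sq] using this
  have hWεSq_int : Integrable (fun ω => W ω * ε ω ^ 2) P := hεSq_int.bdd_mul hWasm hWbound
  have hWεSqH : P[fun ω => W ω * ε ω ^ 2|mH] =ᵐ[P] fun _ => (1:ℝ) := by
    refine (condExp_mul_of_stronglyMeasurable_left hWsm hWεSq_int hεSq_int).trans ?_
    filter_upwards [hvar] with ω hω
    have h0 : (P[fun ω => ε ω ^ 2|mH]) ω ≠ 0 := ne_of_gt (lt_of_lt_of_le hc₁ hω.1)
    simp only [Pi.mul_apply, hW, inv_mul_cancel₀ h0]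
  constructor
  · rintro h hmem
    rw [hΛ1] at hmem
    obtain ⟨hh2, -, hhH, hhε⟩ := hmem
    have hh_int : Integrable h P := hh2.integrable one_le_two
    have hεh_int : Integrable (fun ω => ε ω • h ω) P := smul_int' hε hh2
    have hgi : ∀ i : Fin p, P[fun ω => h ω i|mH] =ᵐ[P] 0 := by
      intro i
      refine (condexp_clm' hHF (EuclideanSpace.proj i) hh_int).trans ?_
      filter_upwards [hhH] with ω hω
      simp only [Pi.zero_apply] at hω ⊢
      simp [hω]
    have hΓsiH : ∀ i : Fin p, StronglyMeasurable[mH] (fun ω => Γs ω i) := fun i =>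
      (EuclideanSpace.proj (𝕜 := ℝ) i).continuous.comp_stronglyMeasurable (hΓs.mono hGH)
    have hΓsi2 : ∀ i : Fin p, MemLp (fun ω => Γs ω i) 2 P := fun i =>
      (EuclideanSpace.proj (𝕜 := ℝ) i).comp_memLp' hΓs2
    have hhi2 : ∀ i : Fin p, MemLp (fun ω => h ω i) 2 P := fun i =>
      (EuclideanSpace.proj (𝕜 := ℝ) i).comp_memLp' hh2
    have hterm : ∀ i : Fin p, ∫ ω, Γs ω i * h ω i ∂P = 0 := by
      intro i
      have hint : Integrable (fun ω => Γs ω i * h ω i) P := mul_int' (hΓsi2 i) (hhi2 i)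
      have hzero : P[fun ω => Γs ω i * h ω i|mH] =ᵐ[P] 0 := by
        refine (condExp_mul_of_stronglyMeasurable_left (hΓsiH i) hint
          ((hhi2 i).integrable one_le_two)).trans ?_
        filter_upwards [hgi i] with ω hω
        simp only [Pi.mul_apply, Pi.zero_apply] at hω ⊢
        rw [hω, mul_zero]
      calc ∫ ω, Γs ω i * h ω i ∂P
          = ∫ ω, (P[fun ω => Γs ω i * h ω i|mH]) ω ∂P := (integral_condExp hHF).symm
        _ = 0 := by rw [integral_congr_ae hzero]; simp
    have heqA : (fun ω => (⟪Γs ω, h ω⟫:ℝ)) = fun ω => ∑ i, Γs ω i * h ω i := by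
      funext ω
      simp [PiLp.inner_apply, RCLike.inner_apply, conj_trivial, mul_comm]
    have hA_int : Integrable (fun ω => (⟪Γs ω, h ω⟫:ℝ)) P := by
      rw [heqA]
      exact integrable_finset_sum _ fun i _ => mul_int' (hΓsi2 i) (hhi2 i)
    have hA : ∫ ω, (⟪Γs ω, h ω⟫:ℝ) ∂P = 0 := by
      rw [heqA, integral_finset_sum _ fun i _ => mul_int' (hΓsi2 i) (hhi2 i)]
      simp [hterm]
    have hg_int : Integrable (fun ω => (⟪c, ε ω • h ω⟫:ℝ)) P := hεh_int.const_inner c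
    have hB_int : Integrable (fun ω => W ω * ⟪c, ε ω • h ω⟫) P :=
      hg_int.bdd_mul hWasm hWbound
    have hgH : P[fun ω => (⟪c, ε ω • h ω⟫:ℝ)|mH] =ᵐ[P] 0 := by
      refine (condexp_clm' hHF (innerSL ℝ c) hεh_int).trans ?_
      filter_upwards [hhε] with ω hω
      simp only [Pi.zero_apply] at hω ⊢
      simp [hω]
    have hB : ∫ ω, W ω * ⟪c, ε ω • h ω⟫ ∂P = 0 := by
      have hzero : P[fun ω => W ω * ⟪c, ε ω • h ω⟫|mH] =ᵐ[P] 0 := by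
        refine (condExp_mul_of_stronglyMeasurable_left hWsm hB_int hg_int).trans ?_
        filter_upwards [hgH] with ω hω
        simp only [Pi.mul_apply, Pi.zero_apply] at hω ⊢
        rw [hω, mul_zero]
      calc ∫ ω, W ω * ⟪c, ε ω • h ω⟫ ∂P
          = ∫ ω, (P[fun ω => W ω * ⟪c, ε ω • h ω⟫|mH]) ω ∂P := (integral_condExp hHF).symm
        _ = 0 := by rw [integral_congr_ae hzero]; simp
    have hintegrand : ∀ ω, (⟪Γs ω - (W ω * ε ω) • c, h ω⟫:ℝ)
        = ⟪Γs ω, h ω⟫ - W ω * ⟪c, ε ω • h ω⟫ := by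
      intro ω
      rw [inner_sub_left, real_inner_smul_left, real_inner_smul_right]
      ring
    calc ∫ ω, (⟪Γs ω - (W ω * ε ω) • c, h ω⟫:ℝ) ∂P
        = ∫ ω, (⟪Γs ω, h ω⟫ - W ω * ⟪c, ε ω • h ω⟫) ∂P := by simp_rw [hintegrand]
      _ = (∫ ω, (⟪Γs ω, h ω⟫:ℝ) ∂P) - ∫ ω, W ω * ⟪c, ε ω • h ω⟫ ∂P :=
          integral_sub hA_int hB_int
      _ = 0 := by rw [hA, hB, sub_zero]
  · rw [hΛ1]
    have hf2 : MemLp (fun ω => Sε ω + W ω * ε ω) 2 P := hSε2.add hWε2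
    have hf_int : Integrable (fun ω => Sε ω + W ω * ε ω) P := hSε_int.add hWε_int
    have hfH : P[fun ω => Sε ω + W ω * ε ω|mH] =ᵐ[P] 0 := by
      refine (condExp_add hSε_int hWε_int mH).trans ?_
      filter_upwards [hSεH, hWεH] with ω h1 h2
      simp only [Pi.add_apply, Pi.zero_apply] at h1 h2 ⊢
      rw [h1, h2, add_zero]
    refine ⟨?_, ?_, ?_, ?_⟩
    · have hm := (ContinuousLinearMap.toSpanSingleton ℝ c).comp_memLp' hf2
      refine hm.ae_eq (Filter.Eventually.of_forall fun ω => ?_)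
      simp [Function.comp, ContinuousLinearMap.toSpanSingleton_apply]
    · have hSε0 : ∫ ω, Sε ω ∂P = 0 := by
        rw [← integral_condExp hHF (f := Sε), integral_congr_ae hSεH]; simp
      have hWε0 : ∫ ω, W ω * ε ω ∂P = 0 := by
        rw [← integral_condExp hHF, integral_congr_ae hWεH]; simp
      calc ∫ ω, (Sε ω + W ω * ε ω) • c ∂P
          = ∫ ω, (ContinuousLinearMap.toSpanSingleton ℝ c) (Sε ω + W ω * ε ω) ∂P := by
            simp [ContinuousLinearMap.toSpanSingleton_apply]
        _ = (ContinuousLinearMap.toSpanSingleton ℝ c) (∫ ω, (Sε ω + W ω * ε ω) ∂P) :=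
            (ContinuousLinearMap.toSpanSingleton ℝ c).integral_comp_comm hf_int
        _ = 0 := by rw [integral_add hSε_int hWε_int, hSε0, hWε0, add_zero]; simp
    · have heq : (fun ω => (Sε ω + W ω * ε ω) • c)
          = fun ω => (ContinuousLinearMap.toSpanSingleton ℝ c) (Sε ω + W ω * ε ω) := by
        funext ω; simp [ContinuousLinearMap.toSpanSingleton_apply]
      rw [heq]
      refine (condexp_clm' hHF _ hf_int).trans ?_
      filter_upwards [hfH] with ω hω
      simp only [Pi.zero_apply] at hω ⊢
      simp [hω]
    · have hu_int1 : Integrable (fun ω => ε ω * Sε ω) P := mul_int' hε hSε2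
      have huH : P[fun ω => ε ω * Sε ω + W ω * ε ω ^ 2|mH] =ᵐ[P] 0 := by
        refine (condExp_add hu_int1 hWεSq_int mH).trans ?_
        have h1 : P[fun ω => ε ω * Sε ω|mH] =ᵐ[P] fun _ => (-1:ℝ) :=
          (condExp_congr_ae (Filter.Eventually.of_forall fun ω =>
            mul_comm (ε ω) (Sε ω))).trans hSεε
        filter_upwards [h1, hWεSqH] with ω h1' h2'
        simp only [Pi.add_apply, Pi.zero_apply] at h1' h2' ⊢
        rw [h1', h2']; ring
      have heq : (fun ω => ε ω • ((Sε ω + W ω * ε ω) • c))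
          = fun ω => (ContinuousLinearMap.toSpanSingleton ℝ c) (ε ω * Sε ω + W ω * ε ω ^ 2) := by
        funext ω
        simp only [ContinuousLinearMap.toSpanSingleton_apply, smul_smul]
        congr 1; ring
      have hu_int : Integrable (fun ω => ε ω * Sε ω + W ω * ε ω ^ 2) P :=
        hu_int1.add hWεSq_int
      rw [heq]
      refine (condexp_clm' hHF _ hu_int).trans ?_
      filter_upwards [huH] with ω hω
      simp only [Pi.zero_apply] at hω ⊢
      rw [hω]; simp
end
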